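/- arXiv:2110.00231 — 5 statements merged into one kernel-verified Lean document; each statement's English description precedes it below -/
import Mathlib

section
/- For any positive integers p and q, the product ζ(p+1)·ζ(q+1) equals the sum over all pairs of positive integers (α₁, α₂) with α₁+α₂ = p+q+1 of (C(α₂,p) + C(α₂,q))·ζ(α₁, α₂+1), where C denotes the binomial coefficient. -/
open Filter

/-- Limit of partial sums (handles conditionally convergent series). -/
noncomputable def plim (f : ℕ → ℝ) : ℝ := limUnder atTop f

/-- Riemann zeta value `ζ(s) = ∑_{k ≥ 1} 1/k^s`. -/
noncomputable def zetaV (s : ℕ) : ℝ :=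
  plim fun N => ∑ k ∈ Finset.Ico 1 (N + 1), 1 / (k : ℝ) ^ s

/-- Alternating zeta value `ζ̄(s) = ∑_{k ≥ 1} (-1)^k/k^s`. -/
noncomputable def zetaBar (s : ℕ) : ℝ :=
  plim fun N => ∑ k ∈ Finset.Ico 1 (N + 1), (-1 : ℝ) ^ k / (k : ℝ) ^ s

/-- Double zeta value `ζ(a,b) = ∑_{1 ≤ k₁ < k₂} 1/(k₁^a k₂^b)`. -/
noncomputable def zeta2 (a b : ℕ) : ℝ :=
  plim fun N => ∑ k₂ ∈ Finset.Ico 1 (N + 1), ∑ k₁ ∈ Finset.Ico 1 k₂,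
    1 / ((k₁ : ℝ) ^ a * (k₂ : ℝ) ^ b)

/-- `ζ(a, b̄) = ∑_{1 ≤ k₁ < k₂} (-1)^{k₂}/(k₁^a k₂^b)` (sign on the outer index). -/
noncomputable def zeta2barO (a b : ℕ) : ℝ :=
  plim fun N => ∑ k₂ ∈ Finset.Ico 1 (N + 1), ∑ k₁ ∈ Finset.Ico 1 k₂,
    (-1 : ℝ) ^ k₂ / ((k₁ : ℝ) ^ a * (k₂ : ℝ) ^ b)

/-- `ζ(ā, b) = ∑_{1 ≤ k₁ < k₂} (-1)^{k₁}/(k₁^a k₂^b)` (sign on the inner index). -/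
noncomputable def zeta2barI (a b : ℕ) : ℝ :=
  plim fun N => ∑ k₂ ∈ Finset.Ico 1 (N + 1), ∑ k₁ ∈ Finset.Ico 1 k₂,
    (-1 : ℝ) ^ k₁ / ((k₁ : ℝ) ^ a * (k₂ : ℝ) ^ b)

/-- `ζ(ā, b̄) = ∑_{1 ≤ k₁ < k₂} (-1)^{k₁+k₂}/(k₁^a k₂^b)`. -/
noncomputable def zeta2barB (a b : ℕ) : ℝ :=
  plim fun N => ∑ k₂ ∈ Finset.Ico 1 (N + 1), ∑ k₁ ∈ Finset.Ico 1 k₂,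
    (-1 : ℝ) ^ (k₁ + k₂) / ((k₁ : ℝ) ^ a * (k₂ : ℝ) ^ b)

/-- Multiple zeta value `ζ(α₁,…,α_r)`. -/
noncomputable def mzv {r : ℕ} (α : Fin r → ℕ) : ℝ :=
  ∑' k : {f : Fin r → ℕ // StrictMono f ∧ ∀ i, 1 ≤ f i},
    ∏ i, 1 / ((k.1 i : ℝ) ^ α i)

/-- Multiple zeta-star value `ζ⋆(α₁,…,α_r)`. -/
noncomputable def mzvStar {r : ℕ} (α : Fin r → ℕ) : ℝ :=
  ∑' k : {f : Fin r → ℕ // Monotone f ∧ ∀ i, 1 ≤ f i},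
    ∏ i, 1 / ((k.1 i : ℝ) ^ α i)

/-- Height-one MZV `ζ({1}^a, b+2)`. -/
noncomputable def heightOne (a b : ℕ) : ℝ :=
  mzv (Fin.snoc (fun _ : Fin a => 1) (b + 2))

/-- Height-one zeta-star value `ζ⋆({1}^a, b+2)`. -/
noncomputable def heightOneStar (a b : ℕ) : ℝ :=
  mzvStar (Fin.snoc (fun _ : Fin a => 1) (b + 2))

open Finset Topology

lemma pf (x y : ℝ) (hx : 0 < x) (hy : 0 < y) : ∀ q p : ℕ,
    1/(x^(p+1) * y^(q+1)) =
      (∑ s ∈ range (p+1), (Nat.choose (q+s) s : ℝ) / (x^(p+1-s) * (x+y)^(q+1+s))) +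
      (∑ s ∈ range (q+1), (Nat.choose (p+s) s : ℝ) / (y^(q+1-s) * (x+y)^(p+1+s))) := by
  have hx0 : x ≠ 0 := hx.ne'
  have hy0 : y ≠ 0 := hy.ne'
  have hxy : x + y ≠ 0 := by positivity
  have hrec : ∀ a b : ℕ, 1/(x^(a+1) * y^(b+1)) = (1/(x^a * y^(b+1)) + 1/(x^(a+1)*y^b)) / (x+y) := by
    intro a b
    rw [div_add_div _ _ (by positivity) (by positivity), div_div]
    rw [div_eq_div_iff (by positivity) (by positivity)]
    ring
  have key : ∀ (z : ℝ) (a b : ℕ) (c : ℕ → ℕ),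
      (∑ s ∈ range (a+1), (c s : ℝ)/(z^(a+1-s)*(x+y)^(b+1+s)))/(x+y)
      = ∑ s ∈ range (a+1), (c s : ℝ)/(z^(a+1-s)*(x+y)^(b+2+s)) := by
    intro z a b c
    rw [sum_div]
    refine sum_congr rfl fun s hs => ?_
    rw [div_div, mul_assoc, ← pow_succ, show b+1+s+1 = b+2+s from by omega]
  intro q
  induction q with
  | zero =>
    intro p
    induction p with
    | zero =>
      simp only [zero_add, range_one, sum_singleton, Nat.choose_self, Nat.cast_one, pow_one,
        Nat.choose_zero_right, Nat.sub_self, pow_zero, one_mul, Nat.zero_sub]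
      rw [div_add_div _ _ (by positivity) (by positivity), div_eq_div_iff (by positivity) (by positivity)]
      ring
    | succ p ih =>
      rw [hrec, ih, add_div, add_div, key x p 0, key y 0 p]
      rw [Finset.sum_range_succ' (fun s => ((Nat.choose (0+s) s : ℕ) : ℝ)/(x^(p+1+1-s)*(x+y)^(0+1+s))) (p+1)]
      rw [Finset.sum_congr rfl (fun s (hs : s ∈ range (p+1)) =>
        show ((Nat.choose (0+(s+1)) (s+1) : ℕ) : ℝ)/(x^(p+1+1-(s+1))*(x+y)^(0+1+(s+1)))
            = ((Nat.choose (0+s) s : ℕ) : ℝ)/(x^(p+1-s)*(x+y)^(0+2+s)) from by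
          rw [show (0+(s+1)).choose (s+1) = (0+s).choose s from by simp,
            show p+1+1-(s+1) = p+1-s from by omega, show 0+1+(s+1) = 0+2+s from by omega])]
      rw [Finset.sum_congr rfl (fun s (hs : s ∈ range (0+1)) =>
        show ((Nat.choose (p+1+s) s : ℕ) : ℝ)/(y^(0+1-s)*(x+y)^(p+1+1+s))
            = ((Nat.choose (p+s) s : ℕ) : ℝ)/(y^(0+1-s)*(x+y)^(p+2+s)) from by
          simp only [mem_range, Nat.lt_one_iff] at hs
          have : s = 0 := by omega
          subst this
          norm_num)]
      have hsc : 1/(x^(p+1+1)*y^0)/(x+y)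
          = ((Nat.choose (0+0) 0 : ℕ) : ℝ)/(x^(p+1+1-0)*(x+y)^(0+1+0)) := by
        norm_num [div_div]
        ring
      rw [hsc]
      ring
  | succ q ihq =>
    intro p
    induction p with
    | zero =>
      rw [hrec, ihq 0, add_div, add_div, key x 0 q, key y q 0]
      rw [Finset.sum_range_succ' (fun s => ((Nat.choose (0+s) s : ℕ) : ℝ)/(y^(q+1+1-s)*(x+y)^(0+1+s))) (q+1)]
      rw [Finset.sum_congr rfl (fun s (hs : s ∈ range (q+1)) =>
        show ((Nat.choose (0+(s+1)) (s+1) : ℕ) : ℝ)/(y^(q+1+1-(s+1))*(x+y)^(0+1+(s+1)))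
            = ((Nat.choose (0+s) s : ℕ) : ℝ)/(y^(q+1-s)*(x+y)^(0+2+s)) from by
          rw [show (0+(s+1)).choose (s+1) = (0+s).choose s from by simp,
            show q+1+1-(s+1) = q+1-s from by omega, show 0+1+(s+1) = 0+2+s from by omega])]
      rw [Finset.sum_congr rfl (fun s (hs : s ∈ range (0+1)) =>
        show ((Nat.choose (q+1+s) s : ℕ) : ℝ)/(x^(0+1-s)*(x+y)^(q+1+1+s))
            = ((Nat.choose (q+s) s : ℕ) : ℝ)/(x^(0+1-s)*(x+y)^(q+2+s)) from by
          simp only [mem_range, Nat.lt_one_iff] at hs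
          have : s = 0 := by omega
          subst this
          norm_num)]
      have hsc : 1/(x^0*y^(q+1+1))/(x+y)
          = ((Nat.choose (0+0) 0 : ℕ) : ℝ)/(y^(q+1+1-0)*(x+y)^(0+1+0)) := by
        norm_num [div_div]
        ring
      rw [hsc]
      ring
    | succ p ihp =>
      rw [hrec, ihp, ihq (p+1), add_div, add_div, add_div,
        key x p (q+1), key y (q+1) p, key x (p+1) q, key y q (p+1)]
      -- peel the B1 sum (from ihq side): range (p+2)
      rw [Finset.sum_range_succ' (fun s => ((Nat.choose (q+s) s : ℕ) : ℝ)/(x^(p+1+1-s)*(x+y)^(q+2+s))) (p+1)]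
      rw [Finset.sum_congr rfl (fun s (hs : s ∈ range (p+1)) =>
        show ((Nat.choose (q+(s+1)) (s+1) : ℕ) : ℝ)/(x^(p+1+1-(s+1))*(x+y)^(q+2+(s+1)))
            = ((Nat.choose (q+1+s) (s+1) : ℕ) : ℝ)/(x^(p+1-s)*(x+y)^(q+3+s)) from by
          rw [show q+(s+1) = q+1+s from by omega,
            show p+1+1-(s+1) = p+1-s from by omega, show q+2+(s+1) = q+3+s from by omega])]
      -- peel the A2 sum (from ihp side): range (q+2)
      rw [Finset.sum_range_succ' (fun s => ((Nat.choose (p+s) s : ℕ) : ℝ)/(y^(q+1+1-s)*(x+y)^(p+2+s))) (q+1)]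
      rw [Finset.sum_congr rfl (fun s (hs : s ∈ range (q+1)) =>
        show ((Nat.choose (p+(s+1)) (s+1) : ℕ) : ℝ)/(y^(q+1+1-(s+1))*(x+y)^(p+2+(s+1)))
            = ((Nat.choose (p+1+s) (s+1) : ℕ) : ℝ)/(y^(q+1-s)*(x+y)^(p+3+s)) from by
          rw [show p+(s+1) = p+1+s from by omega,
            show q+1+1-(s+1) = q+1-s from by omega, show p+2+(s+1) = p+3+s from by omega])]
      -- canonicalize E1
      rw [Finset.sum_congr rfl (fun s (hs : s ∈ range (p+1)) =>
        show ((Nat.choose (q+1+s) s : ℕ) : ℝ)/(x^(p+1-s)*(x+y)^(q+1+2+s))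
            = ((Nat.choose (q+1+s) s : ℕ) : ℝ)/(x^(p+1-s)*(x+y)^(q+3+s)) from by
          rw [show q+1+2+s = q+3+s from by omega])]
      -- canonicalize F1
      rw [Finset.sum_congr rfl (fun s (hs : s ∈ range (q+1)) =>
        show ((Nat.choose (p+1+s) s : ℕ) : ℝ)/(y^(q+1-s)*(x+y)^(p+1+2+s))
            = ((Nat.choose (p+1+s) s : ℕ) : ℝ)/(y^(q+1-s)*(x+y)^(p+3+s)) from by
          rw [show p+1+2+s = p+3+s from by omega])]
      -- RHS first sum: peel and Pascal
      rw [Finset.sum_range_succ' (fun s => ((Nat.choose (q+1+s) s : ℕ) : ℝ)/(x^(p+1+1-s)*(x+y)^(q+1+1+s))) (p+1)]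
      rw [Finset.sum_congr rfl (fun s (hs : s ∈ range (p+1)) =>
        show ((Nat.choose (q+1+(s+1)) (s+1) : ℕ) : ℝ)/(x^(p+1+1-(s+1))*(x+y)^(q+1+1+(s+1)))
            = ((Nat.choose (q+1+s) s : ℕ) : ℝ)/(x^(p+1-s)*(x+y)^(q+3+s))
              + ((Nat.choose (q+1+s) (s+1) : ℕ) : ℝ)/(x^(p+1-s)*(x+y)^(q+3+s)) from by
          rw [show p+1+1-(s+1) = p+1-s from by omega, show q+1+1+(s+1) = q+3+s from by omega,
            show q+1+(s+1) = (q+1+s)+1 from by omega, Nat.choose_succ_succ (q+1+s) s]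
          push_cast
          rw [add_div]), Finset.sum_add_distrib]
      -- RHS second sum: peel and Pascal
      rw [Finset.sum_range_succ' (fun s => ((Nat.choose (p+1+s) s : ℕ) : ℝ)/(y^(q+1+1-s)*(x+y)^(p+1+1+s))) (q+1)]
      rw [Finset.sum_congr rfl (fun s (hs : s ∈ range (q+1)) =>
        show ((Nat.choose (p+1+(s+1)) (s+1) : ℕ) : ℝ)/(y^(q+1+1-(s+1))*(x+y)^(p+1+1+(s+1)))
            = ((Nat.choose (p+1+s) s : ℕ) : ℝ)/(y^(q+1-s)*(x+y)^(p+3+s))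
              + ((Nat.choose (p+1+s) (s+1) : ℕ) : ℝ)/(y^(q+1-s)*(x+y)^(p+3+s)) from by
          rw [show q+1+1-(s+1) = q+1-s from by omega, show p+1+1+(s+1) = p+3+s from by omega,
            show p+1+(s+1) = (p+1+s)+1 from by omega, Nat.choose_succ_succ (p+1+s) s]
          push_cast
          rw [add_div]), Finset.sum_add_distrib]
      have hsc1 : ((Nat.choose (q+0) 0 : ℕ) : ℝ)/(x^(p+1+1-0)*(x+y)^(q+2+0))
          = ((Nat.choose (q+1+0) 0 : ℕ) : ℝ)/(x^(p+1+1-0)*(x+y)^(q+1+1+0)) := by norm_num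
      have hsc2 : ((Nat.choose (p+0) 0 : ℕ) : ℝ)/(y^(q+1+1-0)*(x+y)^(p+2+0))
          = ((Nat.choose (p+1+0) 0 : ℕ) : ℝ)/(y^(q+1+1-0)*(x+y)^(p+1+1+0)) := by norm_num
      rw [hsc1, hsc2]
      ring

/-- z.1 is the outer index k₂, z.2 the inner k₁ -/
noncomputable def EDG (a b : ℕ) : ℕ × ℕ → ℝ := fun z =>
  if z.2 < z.1 then 1 / ((z.2 : ℝ) ^ a * (z.1 : ℝ) ^ b) else 0

noncomputable def EDF (P Q : ℕ) : ℕ × ℕ → ℝ := fun z =>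
  (1 / (z.1 : ℝ) ^ P) * (1 / (z.2 : ℝ) ^ Q)

lemma summable_zeta_nat {s : ℕ} (hs : 2 ≤ s) : Summable (fun k : ℕ => 1 / (k : ℝ) ^ s) :=
  Real.summable_one_div_nat_pow.2 hs

lemma Ico_sum_eq_range_sum {s : ℕ} (hs : 1 ≤ s) (N : ℕ) :
    ∑ k ∈ Finset.Ico 1 (N + 1), 1 / (k : ℝ) ^ s = ∑ k ∈ Finset.range (N + 1), 1 / (k : ℝ) ^ s := by
  rw [Finset.range_eq_Ico, Finset.sum_eq_sum_Ico_succ_bot (a := 0) (b := N+1) (by omega)]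
  simp [zero_pow (by omega : s ≠ 0)]

lemma tendsto_zetaV_partial {s : ℕ} (hs : 2 ≤ s) :
    Tendsto (fun N : ℕ => ∑ k ∈ Finset.Ico 1 (N + 1), 1 / (k : ℝ) ^ s) atTop
      (𝓝 (∑' k : ℕ, 1 / (k : ℝ) ^ s)) := by
  have h := (summable_zeta_nat hs).hasSum.tendsto_sum_nat.comp (tendsto_add_atTop_nat 1)
  refine h.congr fun N => ?_
  simp only [Function.comp]
  exact (Ico_sum_eq_range_sum (by omega : 1 ≤ s) N).symm

lemma zetaV_eq_tsum {s : ℕ} (hs : 2 ≤ s) : zetaV s = ∑' k : ℕ, 1 / (k : ℝ) ^ s :=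
  (tendsto_zetaV_partial hs).limUnder_eq

lemma summable_sq : Summable (fun k : ℕ => 1 / (k : ℝ) ^ ((3 : ℝ) / 2)) :=
  Real.summable_one_div_nat_rpow.2 (by norm_num)

lemma EDG_nonneg (a b : ℕ) (z : ℕ × ℕ) : 0 ≤ EDG a b z := by
  unfold EDG; split <;> positivity

set_option maxHeartbeats 1000000 in
lemma summable_EDG {a b : ℕ} (ha : 1 ≤ a) (hb : 2 ≤ b) : Summable (EDG a b) := by
  have hnn : ∀ k : ℕ, 0 ≤ 1 / (k:ℝ) ^ ((3:ℝ)/2) := fun k => by positivity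
  have hH : Summable (fun z : ℕ × ℕ => (1 / (z.1 : ℝ) ^ ((3:ℝ)/2)) * (1 / (z.2 : ℝ) ^ ((3:ℝ)/2))) :=
    Summable.mul_of_nonneg summable_sq summable_sq (Pi.le_def.mpr hnn) (Pi.le_def.mpr hnn)
  refine Summable.of_nonneg_of_le (EDG_nonneg a b) ?_ hH
  rintro ⟨k, m⟩
  unfold EDG
  dsimp only
  split
  · rename_i hmk
    rcases Nat.eq_zero_or_pos m with hm | hm
    · subst hm
      rw [Nat.cast_zero, zero_pow (by omega : a ≠ 0), zero_mul, div_zero]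
      positivity
    · have hm1 : (1:ℝ) ≤ (m:ℝ) := by exact_mod_cast hm
      have hk1 : (1:ℝ) ≤ (k:ℝ) := by
        have : 1 ≤ k := by omega
        exact_mod_cast this
      have hmpos : (0:ℝ) < m := by linarith
      have hkpos : (0:ℝ) < k := by linarith
      have hmk' : (m:ℝ) ≤ (k:ℝ) := by exact_mod_cast hmk.le
      rw [div_mul_div_comm, one_mul]
      apply one_div_le_one_div_of_le (by positivity)
      calc (k:ℝ) ^ ((3:ℝ)/2) * (m:ℝ) ^ ((3:ℝ)/2)
          = (k:ℝ) ^ ((3:ℝ)/2) * ((m:ℝ) ^ ((1:ℝ)/2) * (m:ℝ)) := by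
            rw [show ((3:ℝ)/2) = (1:ℝ)/2 + 1 by norm_num, Real.rpow_add hmpos, Real.rpow_one]
        _ ≤ (k:ℝ) ^ ((3:ℝ)/2) * ((k:ℝ) ^ ((1:ℝ)/2) * (m:ℝ)) := by
            have h12 := Real.rpow_le_rpow hmpos.le hmk' (by norm_num : (0:ℝ) ≤ 1/2)
            have h32 : (0:ℝ) ≤ (k:ℝ) ^ ((3:ℝ)/2) := Real.rpow_nonneg hkpos.le _
            nlinarith [mul_nonneg (mul_nonneg h32 (sub_nonneg.2 h12)) hmpos.le]
        _ = (k:ℝ) ^ (2:ℕ) * (m:ℝ) := by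
            rw [← mul_assoc, ← Real.rpow_add hkpos, ← Real.rpow_natCast (k:ℝ) 2]
            norm_num
        _ ≤ (m:ℝ) ^ a * (k:ℝ) ^ b := by
            have h1 : (k:ℝ) ^ (2:ℕ) ≤ (k:ℝ) ^ b := pow_le_pow_right₀ hk1 hb
            have h2' : (m:ℝ) ≤ (m:ℝ) ^ a := by
              simpa using pow_le_pow_right₀ hm1 ha
            nlinarith [pow_nonneg hkpos.le b, pow_nonneg hmpos.le a, pow_pos hkpos 2]
  · positivity

lemma tendsto_sum_sq (f : ℕ × ℕ → ℝ) (hf : Summable f) :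
    Tendsto (fun N : ℕ => ∑ z ∈ Finset.range (N+1) ×ˢ Finset.range (N+1), f z) atTop
      (𝓝 (∑' z, f z)) := by
  refine hf.hasSum.comp (tendsto_atTop_finset_of_monotone ?_ ?_)
  · intro N M hNM
    exact Finset.product_subset_product (Finset.range_subset_range.2 (by omega))
      (Finset.range_subset_range.2 (by omega))
  · intro z
    exact ⟨max z.1 z.2, Finset.mem_product.2 ⟨Finset.mem_range.2 (by omega),
      Finset.mem_range.2 (by omega)⟩⟩

lemma partial_zeta2_eq {a b : ℕ} (ha : 1 ≤ a) (N : ℕ) :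
    (∑ k₂ ∈ Finset.Ico 1 (N + 1), ∑ k₁ ∈ Finset.Ico 1 k₂, 1 / ((k₁ : ℝ) ^ a * (k₂ : ℝ) ^ b))
      = ∑ z ∈ Finset.range (N+1) ×ˢ Finset.range (N+1), EDG a b z := by
  rw [Finset.sum_product]
  have inner : ∀ k₂ ∈ Finset.range (N+1),
      (∑ k₁ ∈ Finset.range (N+1), EDG a b (k₂, k₁))
        = ∑ k₁ ∈ Finset.Ico 1 k₂, 1 / ((k₁ : ℝ) ^ a * (k₂ : ℝ) ^ b) := by
    intro k₂ hk₂
    rw [Finset.mem_range] at hk₂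
    unfold EDG
    dsimp only
    rw [← Finset.sum_filter]
    have hfil : Finset.filter (fun k₁ => k₁ < k₂) (Finset.range (N+1)) = Finset.range k₂ := by
      ext m
      simp only [Finset.mem_filter, Finset.mem_range]
      omega
    rw [hfil]
    rcases Nat.eq_zero_or_pos k₂ with h | h
    · subst h; simp
    · rw [Finset.range_eq_Ico, Finset.sum_eq_sum_Ico_succ_bot (a := 0) (b := k₂) (by omega)]
      simp [zero_pow (by omega : a ≠ 0)]
  rw [Finset.sum_congr rfl inner]
  rw [Finset.range_eq_Ico, Finset.sum_eq_sum_Ico_succ_bot (a := 0) (b := N+1) (by omega)]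
  simp

lemma tendsto_zeta2_partial {a b : ℕ} (ha : 1 ≤ a) (hb : 2 ≤ b) :
    Tendsto (fun N : ℕ => ∑ k₂ ∈ Finset.Ico 1 (N + 1), ∑ k₁ ∈ Finset.Ico 1 k₂,
        1 / ((k₁ : ℝ) ^ a * (k₂ : ℝ) ^ b)) atTop (𝓝 (∑' z, EDG a b z)) := by
  have h := tendsto_sum_sq (EDG a b) (summable_EDG ha hb)
  exact h.congr fun N => (partial_zeta2_eq ha N).symm

lemma zeta2_eq_tsum {a b : ℕ} (ha : 1 ≤ a) (hb : 2 ≤ b) :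
    zeta2 a b = ∑' z, EDG a b z :=
  (tendsto_zeta2_partial ha hb).limUnder_eq

set_option maxHeartbeats 1000000 in
lemma summable_EDF {P Q : ℕ} (hP : 2 ≤ P) (hQ : 2 ≤ Q) : Summable (EDF P Q) := by
  have h1 := summable_zeta_nat hP
  have h2 := summable_zeta_nat hQ
  have h1' : Summable (fun k : ℕ => ‖1 / (k : ℝ) ^ P‖) := by
    refine h1.abs.congr fun k => ?_
    rw [Real.norm_eq_abs]
  have h2' : Summable (fun k : ℕ => ‖1 / (k : ℝ) ^ Q‖) := by
    refine h2.abs.congr fun k => ?_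
    rw [Real.norm_eq_abs]
  exact summable_mul_of_summable_norm h1' h2'

lemma tsum_EDF {P Q : ℕ} (hP : 2 ≤ P) (hQ : 2 ≤ Q) :
    (∑' z, EDF P Q z) = zetaV P * zetaV Q := by
  have h1' : Summable (fun k : ℕ => ‖1 / (k : ℝ) ^ P‖) := by
    refine (summable_zeta_nat hP).abs.congr fun k => ?_
    rw [Real.norm_eq_abs]
  have h2' : Summable (fun k : ℕ => ‖1 / (k : ℝ) ^ Q‖) := by
    refine (summable_zeta_nat hQ).abs.congr fun k => ?_
    rw [Real.norm_eq_abs]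
  rw [zetaV_eq_tsum hP, zetaV_eq_tsum hQ]
  exact (tsum_mul_tsum_of_summable_norm h1' h2').symm

/-- triangle finsets -/
def tri (N : ℕ) : Finset (ℕ × ℕ) :=
  (Finset.range (N+1) ×ˢ Finset.range (N+1)).filter (fun z => z.1 + z.2 ≤ N)

lemma tendsto_sum_tri (f : ℕ × ℕ → ℝ) (hf : Summable f) :
    Tendsto (fun N : ℕ => ∑ z ∈ tri N, f z) atTop (𝓝 (∑' z, f z)) := by
  refine hf.hasSum.comp (tendsto_atTop_finset_of_monotone ?_ ?_)
  · intro N M hNM z hz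
    simp only [tri, Finset.mem_filter, Finset.mem_product, Finset.mem_range] at hz ⊢
    omega
  · intro z
    refine ⟨z.1 + z.2, ?_⟩
    simp only [tri, Finset.mem_filter, Finset.mem_product, Finset.mem_range]
    omega

/-- the triangular partial sum equals a double sum -/
lemma tri_sum_eq {P Q : ℕ} (hP : 1 ≤ P) (hQ : 1 ≤ Q) (N : ℕ) :
    (∑ n ∈ Finset.Ico 1 (N+1), ∑ m ∈ Finset.Ico 1 n,
      1 / ((m : ℝ) ^ P * ((n - m : ℕ) : ℝ) ^ Q)) = ∑ z ∈ tri N, EDF P Q z := by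
  -- restrict to positive coordinates
  have hzero : ∀ z ∈ tri N, z ∉ (tri N).filter (fun z => 1 ≤ z.1 ∧ 1 ≤ z.2) →
      EDF P Q z = 0 := by
    intro z hz hz'
    simp only [Finset.mem_filter, hz, true_and, not_and] at hz'
    unfold EDF
    rcases Nat.eq_zero_or_pos z.1 with h1 | h1
    · rw [h1, Nat.cast_zero, zero_pow (by omega : P ≠ 0), div_zero, zero_mul]
    · have h2 : z.2 = 0 := by
        have := hz' h1
        omega
      rw [h2, Nat.cast_zero, zero_pow (by omega : Q ≠ 0), div_zero, mul_zero]
  rw [← Finset.sum_subset (Finset.filter_subset _ _) hzero]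
  rw [Finset.sum_sigma' (Finset.Ico 1 (N+1)) (fun n => Finset.Ico 1 n)]
  refine Finset.sum_nbij' (i := fun x => (x.2, x.1 - x.2)) (j := fun z => ⟨z.1 + z.2, z.1⟩)
    ?_ ?_ ?_ ?_ ?_
  · rintro ⟨n, m⟩ hx
    simp only [Finset.mem_sigma, Finset.mem_Ico] at hx
    simp only [tri, Finset.mem_filter, Finset.mem_product, Finset.mem_range]
    omega
  · rintro ⟨a, b⟩ hz
    simp only [tri, Finset.mem_filter, Finset.mem_product, Finset.mem_range] at hz
    simp only [Finset.mem_sigma, Finset.mem_Ico]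
    omega
  · rintro ⟨n, m⟩ hx
    simp only [Finset.mem_sigma, Finset.mem_Ico] at hx
    dsimp only
    rw [Nat.add_sub_cancel' (by omega : m ≤ n)]
  · rintro ⟨a, b⟩ hz
    simp only [tri, Finset.mem_filter, Finset.mem_product, Finset.mem_range] at hz
    dsimp only
    simp only [Prod.mk.injEq]
    exact ⟨trivial, by omega⟩
  · rintro ⟨n, m⟩ hx
    simp only [Finset.mem_sigma, Finset.mem_Ico] at hx
    unfold EDF
    dsimp only
    rw [div_mul_div_comm, one_mul]

lemma tendsto_tri_partial {P Q : ℕ} (hP : 2 ≤ P) (hQ : 2 ≤ Q) :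
    Tendsto (fun N : ℕ => ∑ n ∈ Finset.Ico 1 (N+1), ∑ m ∈ Finset.Ico 1 n,
      1 / ((m : ℝ) ^ P * ((n - m : ℕ) : ℝ) ^ Q)) atTop (𝓝 (zetaV P * zetaV Q)) := by
  have h := tendsto_sum_tri (EDF P Q) (summable_EDF hP hQ)
  rw [tsum_EDF hP hQ] at h
  exact h.congr fun N => (tri_sum_eq (by omega) (by omega) N).symm

lemma swap_pull (N r : ℕ) (c E F : ℕ → ℕ) :
    (∑ n ∈ Finset.Ico 1 (N+1), ∑ m ∈ Finset.Ico 1 n, ∑ s ∈ Finset.range r,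
        (c s : ℝ)/((m:ℝ)^(E s) * (n:ℝ)^(F s)))
      = ∑ s ∈ Finset.range r, (c s : ℝ) *
          (∑ k₂ ∈ Finset.Ico 1 (N+1), ∑ k₁ ∈ Finset.Ico 1 k₂,
            1/((k₁:ℝ)^(E s) * (k₂:ℝ)^(F s))) := by
  rw [Finset.sum_congr rfl (fun n _ => Finset.sum_comm)]
  rw [Finset.sum_comm]
  refine Finset.sum_congr rfl fun s _ => ?_
  rw [Finset.mul_sum]
  refine Finset.sum_congr rfl fun n _ => ?_
  rw [Finset.mul_sum]
  refine Finset.sum_congr rfl fun m _ => ?_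
  rw [mul_one_div]

lemma finite_identity (p q : ℕ) (hp : 0 < p) (hq : 0 < q) (N : ℕ) :
    (∑ n ∈ Finset.Ico 1 (N+1), ∑ m ∈ Finset.Ico 1 n,
        1/((m:ℝ)^(p+1) * ((n-m : ℕ):ℝ)^(q+1)))
      = ∑ α₁ ∈ Finset.Ico 1 (p+q+1),
          ((Nat.choose (p+q+1-α₁) p : ℝ) + (Nat.choose (p+q+1-α₁) q : ℝ)) *
            (∑ k₂ ∈ Finset.Ico 1 (N+1), ∑ k₁ ∈ Finset.Ico 1 k₂,
              1/((k₁:ℝ)^α₁ * (k₂:ℝ)^(p+q+1-α₁+1))) := by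
  have step1 : ∀ n ∈ Finset.Ico 1 (N+1), ∀ m ∈ Finset.Ico 1 n,
      1/((m:ℝ)^(p+1) * ((n-m : ℕ):ℝ)^(q+1)) =
        (∑ s ∈ Finset.range (p+1), (Nat.choose (q+s) s : ℝ)/((m:ℝ)^(p+1-s) * (n:ℝ)^(q+1+s))) +
        (∑ s ∈ Finset.range (q+1), (Nat.choose (p+s) s : ℝ)/(((n-m : ℕ):ℝ)^(q+1-s) * (n:ℝ)^(p+1+s))) := by
    intro n hn m hm
    simp only [Finset.mem_Ico] at hn hm
    have hm0 : (0:ℝ) < (m:ℝ) := by exact_mod_cast hm.1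
    have hnm0 : (0:ℝ) < ((n-m : ℕ):ℝ) := by
      have : 0 < n - m := by omega
      exact_mod_cast this
    have h := pf (m:ℝ) ((n-m : ℕ):ℝ) hm0 hnm0 q p
    have hxy : (m:ℝ) + ((n-m : ℕ):ℝ) = (n:ℝ) := by
      rw [Nat.cast_sub (by omega : m ≤ n)]
      ring
    rw [hxy] at h
    exact h
  rw [Finset.sum_congr rfl (fun n hn => Finset.sum_congr rfl (step1 n hn))]
  rw [Finset.sum_congr rfl (fun n hn => Finset.sum_add_distrib), Finset.sum_add_distrib]
  have refl2 : ∀ n ∈ Finset.Ico 1 (N+1),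
      (∑ m ∈ Finset.Ico 1 n, ∑ s ∈ Finset.range (q+1),
          (Nat.choose (p+s) s : ℝ)/(((n-m : ℕ):ℝ)^(q+1-s) * (n:ℝ)^(p+1+s)))
        = ∑ m ∈ Finset.Ico 1 n, ∑ s ∈ Finset.range (q+1),
            (Nat.choose (p+s) s : ℝ)/((m:ℝ)^(q+1-s) * (n:ℝ)^(p+1+s)) := by
    intro n hn
    simp only [Finset.mem_Ico] at hn
    refine Finset.sum_nbij' (i := fun m => n - m) (j := fun m => n - m) ?_ ?_ ?_ ?_ ?_
    · intro m hm; simp only [Finset.mem_Ico] at hm ⊢; omega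
    · intro m hm; simp only [Finset.mem_Ico] at hm ⊢; omega
    · intro m hm; simp only [Finset.mem_Ico] at hm; omega
    · intro m hm; simp only [Finset.mem_Ico] at hm; omega
    · intro m hm; rfl
  rw [Finset.sum_congr rfl refl2]
  rw [swap_pull N (p+1) (fun s => Nat.choose (q+s) s) (fun s => p+1-s) (fun s => q+1+s)]
  rw [swap_pull N (q+1) (fun s => Nat.choose (p+s) s) (fun s => q+1-s) (fun s => p+1+s)]
  have reidx1 : (∑ s ∈ Finset.range (p+1), (Nat.choose (q+s) s : ℝ) *
        (∑ k₂ ∈ Finset.Ico 1 (N+1), ∑ k₁ ∈ Finset.Ico 1 k₂,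
          1/((k₁:ℝ)^(p+1-s) * (k₂:ℝ)^(q+1+s))))
      = ∑ α₁ ∈ Finset.Ico 1 (p+2), (Nat.choose (p+q+1-α₁) q : ℝ) *
          (∑ k₂ ∈ Finset.Ico 1 (N+1), ∑ k₁ ∈ Finset.Ico 1 k₂,
            1/((k₁:ℝ)^α₁ * (k₂:ℝ)^(p+q+1-α₁+1))) := by
    refine Finset.sum_nbij' (i := fun s => p+1-s) (j := fun α => p+1-α) ?_ ?_ ?_ ?_ ?_
    · intro s hs; simp only [Finset.mem_range] at hs; simp only [Finset.mem_Ico]; omega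
    · intro α hα; simp only [Finset.mem_Ico] at hα; simp only [Finset.mem_range]; omega
    · intro s hs; simp only [Finset.mem_range] at hs; omega
    · intro α hα; simp only [Finset.mem_Ico] at hα; omega
    · intro s hs
      simp only [Finset.mem_range] at hs
      have e3 : (q+s).choose q = (q+s).choose s := by
        have h := Nat.choose_symm (show s ≤ q+s by omega)
        rwa [show q+s-s = q from by omega] at h
      rw [show p+q+1-(p+1-s) = q+s from by omega, show q+s+1 = q+1+s from by omega, e3]
  have reidx2 : (∑ s ∈ Finset.range (q+1), (Nat.choose (p+s) s : ℝ) *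
        (∑ k₂ ∈ Finset.Ico 1 (N+1), ∑ k₁ ∈ Finset.Ico 1 k₂,
          1/((k₁:ℝ)^(q+1-s) * (k₂:ℝ)^(p+1+s))))
      = ∑ α₁ ∈ Finset.Ico 1 (q+2), (Nat.choose (p+q+1-α₁) p : ℝ) *
          (∑ k₂ ∈ Finset.Ico 1 (N+1), ∑ k₁ ∈ Finset.Ico 1 k₂,
            1/((k₁:ℝ)^α₁ * (k₂:ℝ)^(p+q+1-α₁+1))) := by
    refine Finset.sum_nbij' (i := fun s => q+1-s) (j := fun α => q+1-α) ?_ ?_ ?_ ?_ ?_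
    · intro s hs; simp only [Finset.mem_range] at hs; simp only [Finset.mem_Ico]; omega
    · intro α hα; simp only [Finset.mem_Ico] at hα; simp only [Finset.mem_range]; omega
    · intro s hs; simp only [Finset.mem_range] at hs; omega
    · intro α hα; simp only [Finset.mem_Ico] at hα; omega
    · intro s hs
      simp only [Finset.mem_range] at hs
      have e3 : (p+s).choose p = (p+s).choose s := by
        have h := Nat.choose_symm (show s ≤ p+s by omega)
        rwa [show p+s-s = p from by omega] at h
      rw [show p+q+1-(q+1-s) = p+s from by omega, show p+s+1 = p+1+s from by omega, e3]
  rw [reidx1, reidx2]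
  have ext1 : (∑ α₁ ∈ Finset.Ico 1 (p+2), (Nat.choose (p+q+1-α₁) q : ℝ) *
        (∑ k₂ ∈ Finset.Ico 1 (N+1), ∑ k₁ ∈ Finset.Ico 1 k₂,
          1/((k₁:ℝ)^α₁ * (k₂:ℝ)^(p+q+1-α₁+1))))
      = ∑ α₁ ∈ Finset.Ico 1 (p+q+1), (Nat.choose (p+q+1-α₁) q : ℝ) *
          (∑ k₂ ∈ Finset.Ico 1 (N+1), ∑ k₁ ∈ Finset.Ico 1 k₂,
            1/((k₁:ℝ)^α₁ * (k₂:ℝ)^(p+q+1-α₁+1))) := by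
    refine Finset.sum_subset (Finset.Ico_subset_Ico (le_refl 1) (by omega)) ?_
    intro α hα hα'
    simp only [Finset.mem_Ico] at hα hα'
    rw [Nat.choose_eq_zero_of_lt (by omega), Nat.cast_zero, zero_mul]
  have ext2 : (∑ α₁ ∈ Finset.Ico 1 (q+2), (Nat.choose (p+q+1-α₁) p : ℝ) *
        (∑ k₂ ∈ Finset.Ico 1 (N+1), ∑ k₁ ∈ Finset.Ico 1 k₂,
          1/((k₁:ℝ)^α₁ * (k₂:ℝ)^(p+q+1-α₁+1))))
      = ∑ α₁ ∈ Finset.Ico 1 (p+q+1), (Nat.choose (p+q+1-α₁) p : ℝ) *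
          (∑ k₂ ∈ Finset.Ico 1 (N+1), ∑ k₁ ∈ Finset.Ico 1 k₂,
            1/((k₁:ℝ)^α₁ * (k₂:ℝ)^(p+q+1-α₁+1))) := by
    refine Finset.sum_subset (Finset.Ico_subset_Ico (le_refl 1) (by omega)) ?_
    intro α hα hα'
    simp only [Finset.mem_Ico] at hα hα'
    rw [Nat.choose_eq_zero_of_lt (by omega), Nat.cast_zero, zero_mul]
  rw [ext1, ext2, ← Finset.sum_add_distrib]
  refine Finset.sum_congr rfl fun α hα => ?_
  rw [← add_mul, add_comm]


theorem euler_decomposition (p q : ℕ) (hp : 0 < p) (hq : 0 < q) :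
    zetaV (p + 1) * zetaV (q + 1) =
      ∑ α₁ ∈ Finset.Ico 1 (p + q + 1),
        ((Nat.choose (p + q + 1 - α₁) p : ℝ) + (Nat.choose (p + q + 1 - α₁) q : ℝ)) *
          zeta2 α₁ (p + q + 1 - α₁ + 1) := by
  have hL := tendsto_tri_partial (P := p+1) (Q := q+1) (by omega) (by omega)
  have hR : Tendsto (fun N : ℕ => ∑ α₁ ∈ Finset.Ico 1 (p+q+1),
      ((Nat.choose (p+q+1-α₁) p : ℝ) + (Nat.choose (p+q+1-α₁) q : ℝ)) *
        (∑ k₂ ∈ Finset.Ico 1 (N+1), ∑ k₁ ∈ Finset.Ico 1 k₂,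
          1/((k₁:ℝ)^α₁ * (k₂:ℝ)^(p+q+1-α₁+1))))
      atTop (𝓝 (∑ α₁ ∈ Finset.Ico 1 (p + q + 1),
        ((Nat.choose (p + q + 1 - α₁) p : ℝ) + (Nat.choose (p + q + 1 - α₁) q : ℝ)) *
          zeta2 α₁ (p + q + 1 - α₁ + 1))) := by
    refine tendsto_finset_sum _ fun α hα => ?_
    simp only [Finset.mem_Ico] at hα
    have h1 : 1 ≤ α := hα.1
    have h2 : 2 ≤ p+q+1-α+1 := by omega
    rw [zeta2_eq_tsum h1 h2]
    exact (tendsto_zeta2_partial h1 h2).const_mul _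
  exact tendsto_nhds_unique (hL.congr (finite_identity p q hp hq)) hR
end

section
/- For any nonnegative integer r, ∑_{α₁+α₂=r+3} 2^{α₂} · ζ(α₁, α₂+1) = ((r+5)/2) · ζ(r+4), where the sum is over pairs of positive integers (α₁, α₂) with α₁+α₂ = r+3. -/
open Filter

namespace OZ
open Finset Function


noncomputable def hh (m : ℕ) : ℝ := ∑ t ∈ Finset.range m, 1 / (t + 1 : ℝ)

noncomputable def zz (s : ℕ) : ℝ := ∑' i : ℕ, 1 / ((i : ℝ) + 1) ^ s

noncomputable def E (a b : ℕ) (p : ℕ × ℕ) : ℝ :=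
  1 / (((p.1 : ℝ) + 1) ^ a * ((p.1 : ℝ) + p.2 + 2) ^ b)

noncomputable def Z (a b : ℕ) : ℝ := ∑' p : ℕ × ℕ, E a b p

lemma hh_nonneg (m : ℕ) : 0 ≤ hh m := by
  apply Finset.sum_nonneg; intro t _; positivity

lemma hasSum_tele (g : ℕ → ℝ) (hmono : ∀ n, g (n + 1) ≤ g n) (hnn : ∀ n, 0 ≤ g n)
    (h0 : Tendsto g atTop (nhds 0)) : HasSum (fun n => g n - g (n + 1)) (g 0) := by
  have hps : ∀ n, ∑ i ∈ Finset.range n, (g i - g (i + 1)) = g 0 - g n := by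
    intro n; exact Finset.sum_range_sub' g n
  have hsum : Summable (fun n => g n - g (n + 1)) := by
    apply summable_of_sum_range_le (c := g 0)
    · intro n; linarith [hmono n]
    · intro n; rw [hps]; linarith [hnn n]
  rw [hsum.hasSum_iff_tendsto_nat]
  simp only [hps]
  simpa using tendsto_const_nhds.sub h0

lemma tendsto_one_div_add (x : ℝ) : Tendsto (fun j : ℕ => 1 / (x + j)) atTop (nhds 0) := by
  simp only [one_div]
  apply Tendsto.comp tendsto_inv_atTop_zero
  exact tendsto_atTop_add_const_left atTop x tendsto_natCast_atTop_atTop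

lemma hasSum_one_div_mul (x : ℝ) (hx : 0 < x) :
    HasSum (fun j : ℕ => 1 / ((x + j) * (x + j + 1))) (1 / x) := by
  have key := hasSum_tele (fun j : ℕ => 1 / (x + j)) ?_ ?_ ?_
  · have he : (fun n : ℕ => 1 / (x + n) - 1 / (x + ((n : ℕ) + 1 : ℕ))) =
        fun j : ℕ => 1 / ((x + j) * (x + j + 1)) := by
      funext j
      have h1 : (0:ℝ) < x + j := by positivity
      have h2 : (0:ℝ) < x + j + 1 := by linarith
      push_cast
      rw [show x + ((j:ℝ) + 1) = x + (j:ℝ) + 1 by ring,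
        div_sub_div _ _ (ne_of_gt h1) (ne_of_gt h2),
        div_eq_div_iff (by positivity) (by positivity)]
      ring
    rw [he] at key
    simpa using key
  · intro n
    have h1 : (0:ℝ) < x + n := by positivity
    apply one_div_le_one_div_of_le h1
    push_cast; linarith
  · intro n; positivity
  · exact tendsto_one_div_add x

lemma hasSum_harm (m : ℕ) :
    HasSum (fun j : ℕ => 1 / ((j : ℝ) + 1) - 1 / ((m : ℝ) + j + 1)) (hh m) := by
  have hps : ∀ K, ∑ j ∈ Finset.range K, (1 / ((j : ℝ) + 1) - 1 / ((m : ℝ) + j + 1)) =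
      hh m - (hh (m + K) - hh K) := by
    intro K
    rw [Finset.sum_sub_distrib]
    have h1 : ∑ j ∈ Finset.range K, (1 : ℝ) / ((j : ℝ) + 1) = hh K := by
      unfold hh; apply Finset.sum_congr rfl; intro t _; push_cast; ring
    have h2 : ∑ j ∈ Finset.range K, (1 : ℝ) / ((m : ℝ) + j + 1) = hh (m + K) - hh m := by
      unfold hh
      rw [Finset.sum_range_add (fun t => 1 / ((t : ℝ) + 1)) m K]
      push_cast
      ring
    rw [h1, h2]; ring
  have hterm : ∀ j : ℕ, (0:ℝ) ≤ 1 / ((j : ℝ) + 1) - 1 / ((m : ℝ) + j + 1) := by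
    intro j
    have h1 : (0:ℝ) < (j : ℝ) + 1 := by positivity
    have : (1:ℝ) / ((m : ℝ) + j + 1) ≤ 1 / ((j : ℝ) + 1) := by
      apply one_div_le_one_div_of_le h1
      have : (0:ℝ) ≤ (m:ℝ) := Nat.cast_nonneg m
      linarith
    linarith
  have htail : Tendsto (fun K => hh (m + K) - hh K) atTop (nhds 0) := by
    apply squeeze_zero
    · intro K
      have : hh (m + K) - hh K = ∑ j ∈ Finset.range m, 1 / ((K : ℝ) + j + 1) := by
        unfold hh
        rw [show m + K = K + m by ring, Finset.sum_range_add (fun t => 1 / ((t : ℝ) + 1)) K m]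
        push_cast; ring
      rw [this]
      apply Finset.sum_nonneg; intro t _; positivity
    · intro K
      show hh (m + K) - hh K ≤ (m : ℝ) * (1 / ((K:ℝ) + 1))
      have : hh (m + K) - hh K = ∑ j ∈ Finset.range m, 1 / ((K : ℝ) + j + 1) := by
        unfold hh
        rw [show m + K = K + m by ring, Finset.sum_range_add (fun t => 1 / ((t : ℝ) + 1)) K m]
        push_cast; ring
      rw [this]
      calc ∑ j ∈ Finset.range m, 1 / ((K : ℝ) + j + 1)
          ≤ ∑ _j ∈ Finset.range m, 1 / ((K:ℝ) + 1) := by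
            apply Finset.sum_le_sum; intro j _
            apply one_div_le_one_div_of_le (by positivity)
            have : (0:ℝ) ≤ (j:ℝ) := Nat.cast_nonneg j
            linarith
        _ = (m : ℝ) * (1 / ((K:ℝ) + 1)) := by
            rw [Finset.sum_const, Finset.card_range]; ring
    · have : Tendsto (fun K : ℕ => 1 / ((K:ℝ) + 1)) atTop (nhds 0) := by
        have := tendsto_one_div_add (1 : ℝ)
        simp only [one_div] at this ⊢
        convert this using 2 with K
        ring
      simpa using (tendsto_const_nhds (x := (m:ℝ))).mul this
  have hsum : Summable (fun j : ℕ => 1 / ((j : ℝ) + 1) - 1 / ((m : ℝ) + j + 1)) := by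
    apply summable_of_sum_range_le (c := hh m) hterm
    intro n; rw [hps]
    have : 0 ≤ hh (m + n) - hh n := by
      have : hh (m + n) - hh n = ∑ j ∈ Finset.range m, 1 / ((n : ℝ) + j + 1) := by
        unfold hh
        rw [show m + n = n + m by ring, Finset.sum_range_add (fun t => 1 / ((t : ℝ) + 1)) n m]
        push_cast; ring
      rw [this]; apply Finset.sum_nonneg; intro t _; positivity
    linarith
  rw [hsum.hasSum_iff_tendsto_nat]
  simp only [hps]
  simpa using tendsto_const_nhds.sub htail



lemma E_nonneg (a b : ℕ) (p : ℕ × ℕ) : 0 ≤ E a b p := by unfold E; positivity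

lemma tail_le (b : ℕ) (hb : 2 ≤ b) (i j : ℕ) :
    1 / ((i:ℝ) + j + 2) ^ b ≤ 1 / ((((i:ℝ) + 1) + j) * (((i:ℝ) + 1) + j + 1)) := by
  have h1 : (0:ℝ) < ((i:ℝ) + 1) + j := by positivity
  apply one_div_le_one_div_of_le (by positivity)
  calc (((i:ℝ) + 1) + j) * (((i:ℝ) + 1) + j + 1) ≤ ((i:ℝ) + j + 2) ^ 2 := by nlinarith
    _ ≤ ((i:ℝ) + j + 2) ^ b := by
        apply pow_le_pow_right₀ (by linarith [Nat.cast_nonneg (α := ℝ) i, Nat.cast_nonneg (α := ℝ) j]) hb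

lemma summable_tail (b : ℕ) (hb : 2 ≤ b) (i : ℕ) :
    Summable (fun j : ℕ => 1 / ((i:ℝ) + j + 2) ^ b) := by
  apply Summable.of_nonneg_of_le (fun j => by positivity) (tail_le b hb i)
  exact (hasSum_one_div_mul ((i:ℝ) + 1) (by positivity)).summable

lemma tsum_tail_le (b : ℕ) (hb : 2 ≤ b) (i : ℕ) :
    ∑' j : ℕ, 1 / ((i:ℝ) + j + 2) ^ b ≤ 1 / ((i:ℝ) + 1) := by
  have h := hasSum_one_div_mul ((i:ℝ) + 1) (by positivity)
  rw [← h.tsum_eq]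
  exact Summable.tsum_le_tsum (tail_le b hb i) (summable_tail b hb i) h.summable

lemma summable_zpow (s : ℕ) (hs : 2 ≤ s) : Summable (fun i : ℕ => 1 / ((i:ℝ) + 1) ^ s) := by
  have h : Summable (fun n : ℕ => 1 / (n:ℝ) ^ s) := Real.summable_one_div_nat_pow.mpr hs
  have := (summable_nat_add_iff 1).mpr h
  apply this.congr
  intro n; push_cast; ring_nf

lemma summable_E {a b : ℕ} (ha : 1 ≤ a) (hb : 2 ≤ b) : Summable (E a b) := by
  rw [summable_prod_of_nonneg (fun p => E_nonneg a b p)]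
  constructor
  · intro i
    have : Summable (fun j : ℕ => (1 / ((i:ℝ) + 1) ^ a) * (1 / ((i:ℝ) + j + 2) ^ b)) :=
      (summable_tail b hb i).mul_left _
    apply this.congr
    intro j; unfold E; simp [div_mul_div_comm, mul_comm]
  · apply Summable.of_nonneg_of_le (fun i => tsum_nonneg (fun j => E_nonneg a b (i, j)))
      (g := fun i : ℕ => ∑' j : ℕ, E a b (i, j)) (f := fun i : ℕ => 1 / ((i:ℝ) + 1) ^ 2) ?_
      (summable_zpow 2 le_rfl)
    intro i
    have h1 : ∑' j : ℕ, E a b (i, j) ≤ ∑' j : ℕ, (1 / ((i:ℝ)+1)) * (1 / ((i:ℝ) + j + 2) ^ b) := by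
      apply Summable.tsum_le_tsum _ ?_ ((summable_tail b hb i).mul_left _)
      · intro j
        show E a b (i, j) ≤ 1 / ((i:ℝ)+1) * (1 / ((i:ℝ) + (j:ℝ) + 2) ^ b)
        unfold E
        simp only
        rw [div_mul_div_comm, one_mul]
        apply one_div_le_one_div_of_le (by positivity)
        apply mul_le_mul_of_nonneg_right ?h1 ?h2
        case h2 => positivity
        case h1 =>
          calc (i:ℝ) + 1 = ((i:ℝ) + 1) ^ 1 := (pow_one _).symm
            _ ≤ ((i:ℝ) + 1) ^ a := pow_le_pow_right₀ (by norm_num) ha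
      · have : Summable (fun j : ℕ => (1 / ((i:ℝ) + 1) ^ a) * (1 / ((i:ℝ) + j + 2) ^ b)) :=
          (summable_tail b hb i).mul_left _
        apply this.congr
        intro j; unfold E; simp [div_mul_div_comm, mul_comm]
    have h2 : ∑' j : ℕ, (1 / ((i:ℝ)+1)) * (1 / ((i:ℝ) + j + 2) ^ b) ≤ 1/((i:ℝ)+1) * (1/((i:ℝ)+1)) := by
      rw [tsum_mul_left]
      apply mul_le_mul_of_nonneg_left (tsum_tail_le b hb i) (by positivity)
    calc ∑' j : ℕ, E a b (i, j) ≤ 1/((i:ℝ)+1) * (1/((i:ℝ)+1)) := le_trans h1 h2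
      _ = 1 / ((i:ℝ)+1)^2 := by rw [pow_two]; field_simp
  
lemma zetaV_eq (s : ℕ) (hs : 2 ≤ s) : zetaV s = zz s := by
  unfold zetaV plim
  apply Filter.Tendsto.limUnder_eq
  have h := ((summable_zpow s hs).hasSum).tendsto_sum_nat
  apply h.congr
  intro N
  rw [Finset.sum_Ico_eq_sum_range]
  simp only [Nat.add_sub_cancel]
  apply Finset.sum_congr rfl
  intro i _; push_cast; ring_nf

lemma zeta2_eq (a b : ℕ) (ha : 1 ≤ a) (hb : 2 ≤ b) : zeta2 a b = Z a b := by
  unfold zeta2 plim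
  apply Filter.Tendsto.limUnder_eq
  set T : ℕ → Finset (ℕ × ℕ) :=
    fun N => ((Finset.range N) ×ˢ (Finset.range N)).filter (fun p => p.1 + p.2 + 2 ≤ N) with hT
  have hmono : Monotone T := by
    intro N N' h
    intro p hp
    simp only [hT, Finset.mem_filter, Finset.mem_product, Finset.mem_range] at hp ⊢
    omega
  have hex : ∀ p : ℕ × ℕ, ∃ N, p ∈ T N := by
    intro p
    refine ⟨p.1 + p.2 + 2, ?_⟩
    simp only [hT, Finset.mem_filter, Finset.mem_product, Finset.mem_range]
    omega
  have htend := (summable_E ha hb).hasSum.comp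
    (Filter.tendsto_atTop_finset_of_monotone hmono hex)
  apply Filter.Tendsto.congr _ htend
  intro N
  show ∑ p ∈ T N, E a b p = _
  rw [show (∑ k₂ ∈ Finset.Ico 1 (N + 1), ∑ k₁ ∈ Finset.Ico 1 k₂,
      1 / ((k₁ : ℝ) ^ a * (k₂ : ℝ) ^ b)) =
      ∑ x ∈ (Finset.Ico 1 (N+1)).sigma (fun k₂ => Finset.Ico 1 k₂),
        1 / ((x.2 : ℝ) ^ a * (x.1 : ℝ) ^ b) from
    Finset.sum_sigma' _ _ _]
  apply Finset.sum_nbij' (i := fun p => ⟨p.1 + p.2 + 2, p.1 + 1⟩)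
    (j := fun x => (x.2 - 1, x.1 - x.2 - 1))
  · intro p hp
    simp only [hT, Finset.mem_filter, Finset.mem_product, Finset.mem_range] at hp
    simp only [Finset.mem_sigma, Finset.mem_Ico]
    omega
  · intro x hx
    simp only [Finset.mem_sigma, Finset.mem_Ico] at hx
    simp only [hT, Finset.mem_filter, Finset.mem_product, Finset.mem_range]
    omega
  · intro p hp
    ext <;> simp <;> omega
  · intro x hx
    simp only [Finset.mem_sigma, Finset.mem_Ico] at hx
    ext <;> simp <;> omega
  · intro p hp
    unfold E
    push_cast
    ring_nf


noncomputable def F (a b : ℕ) (p : ℕ × ℕ) : ℝ :=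
  (1 / ((p.1 : ℝ) + 1) ^ a) * (1 / ((p.2 : ℝ) + 1) ^ b)

lemma summable_F {a b : ℕ} (ha : 2 ≤ a) (hb : 2 ≤ b) : Summable (F a b) := by
  have h := Summable.mul_of_nonneg (f := fun i : ℕ => 1 / ((i:ℝ) + 1) ^ a)
    (g := fun j : ℕ => 1 / ((j:ℝ) + 1) ^ b)
    (summable_zpow a ha) (summable_zpow b hb) ?hf ?hg
  case hf => intro i; positivity
  case hg => intro j; positivity
  exact h

def φ1 : ℕ × ℕ → ℕ × ℕ := fun q => (q.1, q.1 + q.2 + 1)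
def φ2 : ℕ → ℕ × ℕ := fun i => (i, i)
def φ3 : ℕ × ℕ → ℕ × ℕ := fun q => (q.1 + q.2 + 1, q.1)

lemma inj1 : Function.Injective φ1 := by
  rintro ⟨a, b⟩ ⟨c, d⟩ h; simp only [φ1, Prod.mk.injEq] at h; ext <;> omega
lemma inj2 : Function.Injective φ2 := by
  rintro a b h; simp only [φ2, Prod.mk.injEq] at h; omega
lemma inj3 : Function.Injective φ3 := by
  rintro ⟨a, b⟩ ⟨c, d⟩ h; simp only [φ3, Prod.mk.injEq] at h; ext <;> omega

lemma range1 : Set.range φ1 = {p : ℕ × ℕ | p.1 < p.2} := by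
  ext ⟨u, v⟩
  simp only [Set.mem_range, Set.mem_setOf_eq, φ1, Prod.mk.injEq, Prod.exists]
  constructor
  · rintro ⟨a, b, h1, h2⟩; omega
  · intro h; exact ⟨u, v - u - 1, rfl, by omega⟩

lemma range2 : Set.range φ2 = {p : ℕ × ℕ | p.1 = p.2} := by
  ext ⟨u, v⟩
  simp only [Set.mem_range, Set.mem_setOf_eq, φ2, Prod.mk.injEq]
  constructor
  · rintro ⟨a, h1, h2⟩; omega
  · intro h; exact ⟨u, rfl, by omega⟩

lemma range3 : Set.range φ3 = {p : ℕ × ℕ | p.2 < p.1} := by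
  ext ⟨u, v⟩
  simp only [Set.mem_range, Set.mem_setOf_eq, φ3, Prod.mk.injEq, Prod.exists]
  constructor
  · rintro ⟨a, b, h1, h2⟩; omega
  · intro h; exact ⟨v, u - v - 1, by omega, rfl⟩

lemma stuffle {a b : ℕ} (ha : 2 ≤ a) (hb : 2 ≤ b) :
    zz a * zz b = Z a b + Z b a + zz (a + b) := by
  have hF := summable_F ha hb
  have hmul : zz a * zz b = ∑' p : ℕ × ℕ, F a b p :=
    HasSum.mul_eq (summable_zpow a ha).hasSum (summable_zpow b hb).hasSum hF.hasSum
  have hsplit : ∑' p : ℕ × ℕ, F a b p =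
      (∑' q : ℕ × ℕ, F a b (φ1 q)) + ((∑' i : ℕ, F a b (φ2 i)) + ∑' q : ℕ × ℕ, F a b (φ3 q)) := by
    rw [← tsum_range (F a b) inj1, ← tsum_range (F a b) inj2, ← tsum_range (F a b) inj3]
    rw [← Summable.tsum_union_disjoint ?d2 (hF.subtype _) (hF.subtype _)]
    rw [← Summable.tsum_union_disjoint ?d1 (hF.subtype _) (hF.subtype _)]
    · rw [show Set.range φ1 ∪ (Set.range φ2 ∪ Set.range φ3) = Set.univ by
        rw [range1, range2, range3]; ext ⟨u, v⟩; simp; omega]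
      exact (tsum_univ (F a b)).symm
    case d1 =>
      rw [range1, range2, range3]
      rw [Set.disjoint_left]
      rintro ⟨u, v⟩ h1 h2
      simp only [Set.mem_setOf_eq, Set.mem_union] at h1 h2
      omega
    case d2 =>
      rw [range2, range3]
      rw [Set.disjoint_left]
      rintro ⟨u, v⟩ h1 h2
      simp only [Set.mem_setOf_eq] at h1 h2
      omega
  have e1 : ∑' q : ℕ × ℕ, F a b (φ1 q) = Z a b := by
    unfold Z
    apply tsum_congr
    rintro ⟨i, j⟩
    unfold F E φ1
    simp only
    rw [div_mul_div_comm, one_mul]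
    push_cast
    ring_nf
  have e2 : ∑' i : ℕ, F a b (φ2 i) = zz (a + b) := by
    unfold zz
    apply tsum_congr
    intro i
    unfold F φ2
    simp only
    rw [div_mul_div_comm, one_mul, ← pow_add]
  have e3 : ∑' q : ℕ × ℕ, F a b (φ3 q) = Z b a := by
    unfold Z
    apply tsum_congr
    rintro ⟨i, j⟩
    unfold F E φ3
    simp only
    rw [div_mul_div_comm, one_mul]
    push_cast
    ring_nf
  rw [hmul, hsplit, e1, e2, e3]
  ring



noncomputable def S1 (a b : ℕ) (x y : ℝ) : ℝ :=
  ∑ t ∈ Finset.range (a + 1), ((a + b - t).choose b : ℝ) / (x ^ (t + 1) * (x + y) ^ (a + b + 1 - t))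

lemma PF0 (a : ℕ) : ∀ x y : ℝ, 0 < x → 0 < y →
    1 / (x ^ (a + 1) * y) =
      (∑ t ∈ Finset.range (a + 1), 1 / (x ^ (t + 1) * (x + y) ^ (a + 1 - t))) +
        1 / (y * (x + y) ^ (a + 1)) := by
  induction a with
  | zero =>
    intro x y hx hy
    have hxy : (0:ℝ) < x + y := by linarith
    norm_num [Finset.sum_range_one]
    field_simp
    ring
  | succ a IH =>
    intro x y hx hy
    have hxy : (0:ℝ) < x + y := by linarith
    have key : 1 / (x ^ (a + 1 + 1) * y) =
        1 / (x ^ (a + 2) * (x + y)) + (1 / (x + y)) * (1 / (x ^ (a + 1) * y)) := by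
      rw [show a + 1 + 1 = a + 2 from rfl]
      field_simp
      ring
    have hsum : ∑ t ∈ Finset.range (a + 1), 1 / (x ^ (t + 1) * (x + y) ^ (a + 1 + 1 - t)) =
        (1 / (x + y)) * ∑ t ∈ Finset.range (a + 1), 1 / (x ^ (t + 1) * (x + y) ^ (a + 1 - t)) := by
      rw [Finset.mul_sum]
      apply Finset.sum_congr rfl
      intro t ht
      simp only [Finset.mem_range] at ht
      rw [show a + 1 + 1 - t = (a + 1 - t) + 1 by omega, pow_succ, div_mul_div_comm, one_mul]
      ring_nf
    have h2 : 1 / (y * (x + y) ^ (a + 1 + 1)) = (1 / (x + y)) * (1 / (y * (x + y) ^ (a + 1))) := by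
      rw [div_mul_div_comm, one_mul, pow_succ]
      ring_nf
    rw [key, IH x y hx hy, Finset.sum_range_succ
      (f := fun t => 1 / (x ^ (t + 1) * (x + y) ^ (a + 1 + 1 - t))) (n := a + 1), hsum, h2]
    rw [show a + 1 + 1 - (a + 1) = 1 by omega, pow_one, show a + 1 + 1 = a + 2 from rfl]
    ring

lemma PF_b0 (a : ℕ) (x y : ℝ) (hx : 0 < x) (hy : 0 < y) :
    1 / (x ^ (a + 1) * y ^ (0 + 1)) = S1 a 0 x y + S1 0 a y x := by
  unfold S1
  simp only [Nat.add_zero, zero_add, Nat.zero_add, pow_one, Finset.sum_range_one, Nat.sub_zero,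
    Nat.choose_self, Nat.cast_one, Nat.choose_zero_right]
  rw [add_comm y x]
  exact PF0 a x y hx hy

lemma helperS (a b : ℕ) (x y : ℝ) (hx : 0 < x) (hy : 0 < y) :
    (1 / (x + y)) * (S1 a (b + 1) x y + S1 (a + 1) b x y) = S1 (a + 1) (b + 1) x y := by
  have hxy : (0:ℝ) < x + y := by linarith
  unfold S1
  -- extend first sum to range (a+2)
  have hz : ((a + (b+1) - (a+1)).choose (b+1) : ℝ) /
      (x ^ ((a+1) + 1) * (x + y) ^ (a + (b+1) + 1 - (a+1))) = 0 := by
    rw [show a + (b+1) - (a+1) = b by omega, Nat.choose_eq_zero_of_lt (by omega)]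
    simp
  rw [show a + 1 + 1 = a + 2 from rfl]
  have hext : ∑ t ∈ Finset.range (a + 1),
      ((a + (b+1) - t).choose (b+1) : ℝ) / (x ^ (t+1) * (x + y) ^ (a + (b+1) + 1 - t)) =
      ∑ t ∈ Finset.range (a + 2),
      ((a + (b+1) - t).choose (b+1) : ℝ) / (x ^ (t+1) * (x + y) ^ (a + (b+1) + 1 - t)) := by
    rw [Finset.sum_range_succ (n := a + 1)]
    rw [hz, add_zero]
  rw [hext, ← Finset.sum_add_distrib, Finset.mul_sum]
  apply Finset.sum_congr rfl
  intro t ht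
  simp only [Finset.mem_range] at ht
  have hc : (a + 1 + (b + 1) - t).choose (b + 1) =
      (a + b + 1 - t).choose b + (a + b + 1 - t).choose (b + 1) := by
    rw [show a + 1 + (b + 1) - t = (a + b + 1 - t) + 1 by omega]
    exact Nat.choose_succ_succ' _ _
  rw [hc]
  rw [show a + (b + 1) - t = a + b + 1 - t by omega,
      show a + 1 + b - t = a + b + 1 - t by omega,
      show a + (b + 1) + 1 - t = a + b + 2 - t by omega,
      show a + 1 + b + 1 - t = a + b + 2 - t by omega,
      show a + 1 + (b + 1) + 1 - t = (a + b + 2 - t) + 1 by omega]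
  rw [← add_div, pow_succ]
  push_cast
  rw [div_mul_div_comm, one_mul]
  ring_nf

lemma PF : ∀ n a b, a + b = n → ∀ x y : ℝ, 0 < x → 0 < y →
    1 / (x ^ (a + 1) * y ^ (b + 1)) = S1 a b x y + S1 b a y x := by
  intro n
  induction n with
  | zero =>
    intro a b hab x y hx hy
    obtain ⟨rfl, rfl⟩ : a = 0 ∧ b = 0 := by omega
    exact PF_b0 0 x y hx hy
  | succ n IH =>
    intro a b hab x y hx hy
    match b, a with
    | 0, a => exact PF_b0 a x y hx hy
    | b + 1, 0 =>
      have h := PF_b0 (b + 1) y x hy hx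
      rw [pow_one] at h ⊢
      rw [mul_comm] at h
      rw [h]; ring
    | b + 1, a + 1 =>
      have hxy : (0:ℝ) < x + y := by linarith
      have key : 1 / (x ^ (a + 2) * y ^ (b + 2)) =
          (1 / (x + y)) * ((1 / (x ^ (a + 1) * y ^ (b + 2)) + 1 / (x ^ (a + 2) * y ^ (b + 1)))) := by
        field_simp
        ring
      have IH1 := IH a (b + 1) (by omega) x y hx hy
      have IH2 := IH (a + 1) b (by omega) x y hx hy
      rw [show a + 1 + 1 = a + 2 from rfl, show b + 1 + 1 = b + 2 from rfl] at *
      rw [key, IH1, IH2]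
      have e1 : (1 / (x + y)) * (S1 a (b + 1) x y + S1 (a + 1) b x y) = S1 (a + 1) (b + 1) x y :=
        helperS a b x y hx hy
      have e2 : (1 / (y + x)) * (S1 b (a + 1) y x + S1 (b + 1) a y x) = S1 (b + 1) (a + 1) y x :=
        helperS b a y x hy hx
      rw [add_comm y x] at e2
      calc (1 / (x + y)) * ((S1 a (b+1) x y + S1 (b+1) a y x) + (S1 (a+1) b x y + S1 b (a+1) y x))
          = (1 / (x + y)) * (S1 a (b + 1) x y + S1 (a + 1) b x y)
            + (1 / (x + y)) * (S1 b (a + 1) y x + S1 (b + 1) a y x) := by ring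
        _ = S1 (a + 1) (b + 1) x y + S1 (b + 1) (a + 1) y x := by rw [e1, e2]


lemma euler_decomp (A B : ℕ) :
    zz (A + 2) * zz (B + 2) =
      (∑ t ∈ Finset.range (A + 2), ((A + B + 2 - t).choose (B + 1) : ℝ) * Z (t + 1) (A + B + 3 - t)) +
      (∑ t ∈ Finset.range (B + 2), ((A + B + 2 - t).choose (A + 1) : ℝ) * Z (t + 1) (A + B + 3 - t)) := by
  set G : ℕ × ℕ → ℝ := fun p =>
    ∑ t ∈ Finset.range (A + 2), ((A + B + 2 - t).choose (B + 1) : ℝ) * E (t + 1) (A + B + 3 - t) p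
    with hG
  set G' : ℕ × ℕ → ℝ := fun p =>
    ∑ t ∈ Finset.range (B + 2), ((A + B + 2 - t).choose (A + 1) : ℝ) * E (t + 1) (A + B + 3 - t) p
    with hG'
  have hsumG : Summable G := by
    apply summable_sum
    intro t ht
    simp only [Finset.mem_range] at ht
    exact (summable_E (by omega) (by omega)).mul_left _
  have hsumG' : Summable G' := by
    apply summable_sum
    intro t ht
    simp only [Finset.mem_range] at ht
    exact (summable_E (by omega) (by omega)).mul_left _
  have hsumG'swap : Summable (fun p : ℕ × ℕ => G' p.swap) :=
    ((Equiv.prodComm ℕ ℕ).summable_iff (f := G')).mpr hsumG'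
  have hpoint : ∀ p : ℕ × ℕ, F (A + 2) (B + 2) p = G p + G' p.swap := by
    rintro ⟨i, j⟩
    have hx : (0:ℝ) < (i:ℝ) + 1 := by positivity
    have hy : (0:ℝ) < (j:ℝ) + 1 := by positivity
    have hpf := PF (A + B + 2) (A + 1) (B + 1) (by omega) ((i:ℝ)+1) ((j:ℝ)+1) hx hy
    have hF : F (A + 2) (B + 2) (i, j) = 1 / (((i:ℝ)+1) ^ (A+1+1) * ((j:ℝ)+1) ^ (B+1+1)) := by
      unfold F
      rw [div_mul_div_comm, one_mul]
    rw [hF, hpf]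
    congr 1
    · unfold S1
      simp only [hG]
      apply Finset.sum_congr rfl
      intro t ht
      simp only [Finset.mem_range] at ht
      unfold E
      simp only
      rw [show A + 1 + (B + 1) - t = A + B + 2 - t by omega,
          show A + 1 + (B + 1) + 1 - t = A + B + 3 - t by omega,
          mul_one_div]
      congr 2
      push_cast
      ring
    · unfold S1
      simp only [hG']
      apply Finset.sum_congr rfl
      intro t ht
      simp only [Finset.mem_range] at ht
      unfold E
      simp only [Prod.fst_swap, Prod.snd_swap]
      rw [show B + 1 + (A + 1) - t = A + B + 2 - t by omega,
          show B + 1 + (A + 1) + 1 - t = A + B + 3 - t by omega,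
          mul_one_div]
      congr 2
      push_cast
      ring
  have hmul : zz (A + 2) * zz (B + 2) = ∑' p : ℕ × ℕ, F (A + 2) (B + 2) p := by
    apply HasSum.mul_eq (summable_zpow _ (by omega)).hasSum (summable_zpow _ (by omega)).hasSum
    exact (summable_F (by omega) (by omega)).hasSum
  rw [hmul, tsum_congr hpoint, Summable.tsum_add hsumG hsumG'swap]
  have h1 : ∑' p : ℕ × ℕ, G' p.swap = ∑' p : ℕ × ℕ, G' p :=
    (Equiv.prodComm ℕ ℕ).tsum_eq G'
  rw [h1, hG, hG']
  rw [Summable.tsum_finsetSum (fun t ht => by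
      simp only [Finset.mem_range] at ht
      exact (summable_E (by omega) (by omega : 2 ≤ A + B + 3 - t)).mul_left _),
    Summable.tsum_finsetSum (fun t ht => by
      simp only [Finset.mem_range] at ht
      exact (summable_E (by omega) (by omega : 2 ≤ A + B + 3 - t)).mul_left _)]
  congr 1 <;> (apply Finset.sum_congr rfl; intro t ht; rw [tsum_mul_left]; rfl)


lemma hh_le (m : ℕ) : hh m ≤ m := by
  unfold hh
  calc ∑ t ∈ Finset.range m, 1 / ((t:ℝ) + 1) ≤ ∑ _t ∈ Finset.range m, (1:ℝ) := by
        apply Finset.sum_le_sum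
        intro t _
        rw [div_le_one (by positivity)]
        linarith [Nat.cast_nonneg (α := ℝ) t]
    _ = m := by simp

lemma hh_succ (m : ℕ) : hh (m + 1) = hh m + 1 / ((m:ℝ) + 1) := Finset.sum_range_succ _ m

lemma geo (v : ℕ) (x y : ℝ) (hx : 0 < x) (hy : 0 < y) :
    ∑ t ∈ Finset.range (v + 1), 1 / (x ^ (t + 1) * (x + y) ^ (v + 2 - t)) =
      (1 / y) * (1 / (x ^ (v + 1) * (x + y)) - 1 / (x + y) ^ (v + 2)) := by
  have hxy : (0:ℝ) < x + y := by linarith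
  induction v with
  | zero =>
    norm_num [Finset.sum_range_one]
    field_simp
    ring
  | succ v IH =>
    rw [Finset.sum_range_succ]
    have hstep : ∑ t ∈ Finset.range (v + 1), 1 / (x ^ (t + 1) * (x + y) ^ (v + 1 + 2 - t)) =
        (1 / (x + y)) * ∑ t ∈ Finset.range (v + 1), 1 / (x ^ (t + 1) * (x + y) ^ (v + 2 - t)) := by
      rw [Finset.mul_sum]
      apply Finset.sum_congr rfl
      intro t ht
      simp only [Finset.mem_range] at ht
      rw [show v + 1 + 2 - t = (v + 2 - t) + 1 by omega, pow_succ, div_mul_div_comm, one_mul]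
      ring_nf
    rw [hstep, IH]
    rw [show v + 1 + 2 - (v + 1) = 2 by omega]
    rw [show v + 1 + 1 = v + 2 from rfl, show v + 1 + 2 = v + 3 from rfl]
    rw [show (v + 3) = (v + 2) + 1 from rfl, pow_succ (x + y) (v + 2),
        show (v + 2) = (v + 1) + 1 from rfl, pow_succ (x + y) (v + 1),
        pow_succ x (v + 1)]
    have hx1 : x ^ (v + 1) ≠ 0 := by positivity
    have hxy1 : (x + y) ^ (v + 1) ≠ 0 := by positivity
    field_simp
    ring

noncomputable def g1 (W : ℕ) (p : ℕ × ℕ) : ℝ :=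
  1 / (((p.2:ℝ) + 1) * (((p.1:ℝ) + 1) ^ (W + 2) * ((p.1:ℝ) + p.2 + 2)))
noncomputable def g2 (W : ℕ) (p : ℕ × ℕ) : ℝ :=
  1 / (((p.2:ℝ) + 1) * ((p.1:ℝ) + p.2 + 2) ^ (W + 3))

lemma summable_sq2 : Summable (fun p : ℕ × ℕ => (1 / ((p.1:ℝ) + 1) ^ 2) * (1 / ((p.2:ℝ) + 1) ^ 2)) := by
  have h := Summable.mul_of_nonneg (f := fun i : ℕ => 1 / ((i:ℝ) + 1) ^ 2)
    (g := fun j : ℕ => 1 / ((j:ℝ) + 1) ^ 2)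
    (summable_zpow 2 le_rfl) (summable_zpow 2 le_rfl) ?hf ?hg
  case hf => intro i; positivity
  case hg => intro j; positivity
  exact h

lemma summable_g1 (W : ℕ) : Summable (g1 W) := by
  apply Summable.of_nonneg_of_le (fun p => by unfold g1; positivity) _ summable_sq2
  rintro ⟨i, j⟩
  unfold g1
  rw [div_mul_div_comm, one_mul]
  apply one_div_le_one_div_of_le (by positivity)
  simp only
  have hi := Nat.cast_nonneg (α := ℝ) i
  have hj := Nat.cast_nonneg (α := ℝ) j
  have h1 : ((i:ℝ)+1)^2 ≤ ((i:ℝ)+1)^(W+2) :=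
    pow_le_pow_right₀ (by linarith) (by omega)
  have h2 : ((j:ℝ)+1)^2 ≤ ((j:ℝ)+1) * ((i:ℝ)+(j:ℝ)+2) := by nlinarith
  calc ((i:ℝ)+1)^2 * ((j:ℝ)+1)^2 ≤ ((i:ℝ)+1)^(W+2) * (((j:ℝ)+1) * ((i:ℝ)+(j:ℝ)+2)) := by
        apply mul_le_mul h1 h2 (by positivity) (by positivity)
    _ = ((j:ℝ)+1) * (((i:ℝ)+1)^(W+2) * ((i:ℝ)+(j:ℝ)+2)) := by ring

lemma summable_g2 (W : ℕ) : Summable (g2 W) := by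
  apply Summable.of_nonneg_of_le (fun p => by unfold g2; positivity) _ summable_sq2
  rintro ⟨i, j⟩
  unfold g2
  rw [div_mul_div_comm, one_mul]
  apply one_div_le_one_div_of_le (by positivity)
  simp only
  have hb : ((i:ℝ)+(j:ℝ)+2)^3 ≤ ((i:ℝ)+(j:ℝ)+2)^(W+3) := by
    apply pow_le_pow_right₀ _ (by omega)
    have := Nat.cast_nonneg (α := ℝ) i
    have := Nat.cast_nonneg (α := ℝ) j
    linarith
  have hi := Nat.cast_nonneg (α := ℝ) i
  have hj := Nat.cast_nonneg (α := ℝ) j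
  have h1 : ((i:ℝ)+1)^2 ≤ ((i:ℝ)+(j:ℝ)+2)^2 := by nlinarith
  have h2 : ((j:ℝ)+1)^2 ≤ ((j:ℝ)+1) * ((i:ℝ)+(j:ℝ)+2) := by nlinarith
  calc ((i:ℝ)+1)^2 * ((j:ℝ)+1)^2 ≤ ((i:ℝ)+(j:ℝ)+2)^2 * (((j:ℝ)+1) * ((i:ℝ)+(j:ℝ)+2)) := by
        apply mul_le_mul h1 h2 (by positivity) (by positivity)
    _ = ((j:ℝ)+1) * ((i:ℝ)+(j:ℝ)+2)^3 := by ring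
    _ ≤ ((j:ℝ)+1) * ((i:ℝ)+(j:ℝ)+2)^(W+3) := by
        apply mul_le_mul_of_nonneg_left hb (by positivity)

lemma sumE_eq (W : ℕ) (p : ℕ × ℕ) :
    ∑ t ∈ Finset.range (W + 2), E (t + 1) (W + 3 - t) p = g1 W p - g2 W p := by
  obtain ⟨i, j⟩ := p
  have hx : (0:ℝ) < (i:ℝ) + 1 := by positivity
  have hy : (0:ℝ) < (j:ℝ) + 1 := by positivity
  have h := geo (W + 1) ((i:ℝ)+1) ((j:ℝ)+1) hx hy
  have hxy : ((i:ℝ)+1) + ((j:ℝ)+1) = (i:ℝ) + (j:ℝ) + 2 := by ring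
  rw [hxy] at h
  have hL : ∑ t ∈ Finset.range (W + 2), E (t + 1) (W + 3 - t) (i, j) =
      ∑ t ∈ Finset.range (W + 1 + 1), 1 / (((i:ℝ)+1) ^ (t + 1) * ((i:ℝ)+(j:ℝ)+2) ^ (W + 1 + 2 - t)) := by
    apply Finset.sum_congr (by norm_num)
    intro t ht
    simp only [Finset.mem_range] at ht
    unfold E
    rw [show W + 1 + 2 - t = W + 3 - t by omega]
  rw [hL, h]
  unfold g1 g2
  simp only
  rw [show W + 1 + 1 = W + 2 from rfl, show W + 1 + 2 = W + 3 from rfl]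
  rw [mul_sub]
  congr 1
  · rw [div_mul_div_comm, one_mul]
  · rw [div_mul_div_comm, one_mul]

lemma tsum_g1 (W : ℕ) : ∑' p : ℕ × ℕ, g1 W p =
    ∑' i : ℕ, hh (i + 1) * (1 / ((i:ℝ) + 1) ^ (W + 3)) := by
  rw [Summable.tsum_prod' (summable_g1 W) (fun i => ((summable_g1 W).prod_factor i))]
  apply tsum_congr
  intro i
  have hpoint : ∀ j : ℕ, g1 W (i, j) =
      (1 / ((i:ℝ)+1) ^ (W + 3)) * (1 / ((j : ℝ) + 1) - 1 / (((i+1 : ℕ) : ℝ) + j + 1)) := by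
    intro j
    unfold g1
    simp only
    push_cast
    have h1 : ((i:ℝ) + 1) ≠ 0 := by positivity
    have h2 : ((j:ℝ) + 1) ≠ 0 := by positivity
    have h3 : ((i:ℝ) + (j:ℝ) + 2) ≠ 0 := by positivity
    have h4 : ((i:ℝ) + 1) ^ (W + 2) ≠ 0 := by positivity
    rw [show (i:ℝ) + 1 + (j:ℝ) + 1 = (i:ℝ) + (j:ℝ) + 2 by ring]
    rw [pow_succ]
    field_simp
    ring
  rw [tsum_congr hpoint, tsum_mul_left]
  have := (hasSum_harm (i + 1)).tsum_eq
  rw [this]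
  ring

lemma tsum_g2 (W : ℕ) : ∑' p : ℕ × ℕ, g2 W p = Z 1 (W + 3) := by
  unfold Z
  rw [← (Equiv.prodComm ℕ ℕ).tsum_eq (E 1 (W + 3))]
  apply tsum_congr
  rintro ⟨i, j⟩
  unfold g2 E
  simp only [Equiv.prodComm_apply, Prod.fst_swap, Prod.snd_swap]
  rw [pow_one]
  congr 2
  ring

lemma grouping (s : ℕ) (hs : 2 ≤ s) :
    Z 1 s = ∑' u : ℕ, hh (u + 1) * (1 / ((u:ℝ) + 2) ^ s) := by
  classical
  set DD : ℕ × ℕ → ℝ := fun q =>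
    if q.2 ≤ q.1 then 1 / (((q.2:ℝ) + 1) * ((q.1:ℝ) + 2) ^ s) else 0 with hDD
  set ψ : ℕ × ℕ → ℕ × ℕ := fun p => (p.1 + p.2, p.1) with hψ
  have hinj : Function.Injective ψ := by
    rintro ⟨a, b⟩ ⟨c, d⟩ h
    simp only [hψ, Prod.mk.injEq] at h
    ext <;> omega
  have hcomp : ∀ p : ℕ × ℕ, DD (ψ p) = E 1 s p := by
    rintro ⟨i, j⟩
    simp only [hDD, hψ, if_pos (by omega : i ≤ i + j)]
    unfold E
    rw [pow_one]
    push_cast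
    congr 2
  have hsupp : Function.support DD ⊆ Set.range ψ := by
    rintro ⟨u, v⟩ h
    simp only [Function.mem_support, hDD] at h
    by_cases hc : v ≤ u
    · exact ⟨(v, u - v), by simp only [hψ]; ext <;> simp <;> omega⟩
    · simp [hc] at h
  have htr : ∑' p : ℕ × ℕ, DD (ψ p) = ∑' q : ℕ × ℕ, DD q := hinj.tsum_eq hsupp
  have hZ : Z 1 s = ∑' q : ℕ × ℕ, DD q := by
    unfold Z
    rw [← htr]
    exact tsum_congr (fun p => (hcomp p).symm)
  have hsumDD : Summable DD := by
    rw [← hinj.summable_iff (by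
      intro x hx
      by_contra hne
      exact hx (hsupp hne))]
    apply Summable.congr (summable_E le_rfl hs)
    intro p
    exact (hcomp p).symm
  rw [hZ, Summable.tsum_prod' hsumDD (fun u => hsumDD.prod_factor u)]
  apply tsum_congr
  intro u
  have hfin : ∀ v ∉ Finset.range (u + 1), DD (u, v) = 0 := by
    intro v hv
    simp only [Finset.mem_range] at hv
    simp only [hDD, if_neg (by omega : ¬ v ≤ u)]
  rw [tsum_eq_sum hfin]
  have : ∀ v ∈ Finset.range (u + 1), DD (u, v) = (1 / ((v:ℝ) + 1)) * (1 / ((u:ℝ) + 2) ^ s) := by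
    intro v hv
    simp only [Finset.mem_range] at hv
    simp only [hDD, if_pos (by omega : v ≤ u)]
    rw [div_mul_div_comm, one_mul]
  rw [Finset.sum_congr rfl this, ← Finset.sum_mul]
  unfold hh
  norm_num

lemma sum_formula (W : ℕ) :
    ∑ t ∈ Finset.range (W + 2), Z (t + 1) (W + 3 - t) = zz (W + 4) := by
  have hZsum : ∀ t ∈ Finset.range (W + 2), Summable (E (t + 1) (W + 3 - t)) := by
    intro t ht
    simp only [Finset.mem_range] at ht
    exact summable_E (by omega) (by omega)
  have step1 : ∑ t ∈ Finset.range (W + 2), Z (t + 1) (W + 3 - t) =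
      ∑' p : ℕ × ℕ, ∑ t ∈ Finset.range (W + 2), E (t + 1) (W + 3 - t) p := by
    rw [Summable.tsum_finsetSum hZsum]
    rfl
  rw [step1, tsum_congr (sumE_eq W), Summable.tsum_sub (summable_g1 W) (summable_g2 W),
    tsum_g1 W, tsum_g2 W, grouping (W + 3) (by omega)]
  -- now: ∑' i, hh (i+1) * (1/(i+1)^(W+3)) - ∑' u, hh (u+1) * (1/(u+2)^(W+3)) = zz (W+4)
  have hsumA : Summable (fun i : ℕ => hh (i + 1) * (1 / ((i:ℝ) + 1) ^ (W + 3))) := by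
    apply Summable.of_nonneg_of_le
      (fun i => mul_nonneg (hh_nonneg _) (by positivity)) _ (summable_zpow 2 le_rfl)
    intro i
    have h1 : hh (i + 1) ≤ (i:ℝ) + 1 := by
      have := hh_le (i + 1); push_cast at this; linarith
    calc hh (i + 1) * (1 / ((i:ℝ) + 1) ^ (W + 3)) ≤ ((i:ℝ) + 1) * (1 / ((i:ℝ) + 1) ^ (W + 3)) := by
          apply mul_le_mul_of_nonneg_right h1 (by positivity)
      _ = 1 / ((i:ℝ) + 1) ^ (W + 2) := by
          rw [pow_succ]
          field_simp
      _ ≤ 1 / ((i:ℝ) + 1) ^ 2 := by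
          apply one_div_le_one_div_of_le (by positivity)
          apply pow_le_pow_right₀ (by norm_num [Nat.cast_nonneg]) (by omega)
  have hsumB : Summable (fun u : ℕ => hh (u + 1) * (1 / ((u:ℝ) + 2) ^ (W + 3))) := by
    apply Summable.of_nonneg_of_le
      (fun u => mul_nonneg (hh_nonneg _) (by positivity)) _ (summable_zpow 2 le_rfl)
    intro u
    have h1 : hh (u + 1) ≤ (u:ℝ) + 2 := by
      have := hh_le (u + 1); push_cast at this; linarith
    calc hh (u + 1) * (1 / ((u:ℝ) + 2) ^ (W + 3)) ≤ ((u:ℝ) + 2) * (1 / ((u:ℝ) + 2) ^ (W + 3)) := by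
          apply mul_le_mul_of_nonneg_right h1 (by positivity)
      _ = 1 / ((u:ℝ) + 2) ^ (W + 2) := by
          rw [pow_succ]
          field_simp
      _ ≤ 1 / ((u:ℝ) + 1) ^ 2 := by
          apply one_div_le_one_div_of_le (by positivity)
          calc ((u:ℝ) + 1) ^ 2 ≤ ((u:ℝ) + 2) ^ 2 := by nlinarith [Nat.cast_nonneg (α := ℝ) u]
            _ ≤ ((u:ℝ) + 2) ^ (W + 2) := by
                apply pow_le_pow_right₀
                  (by linarith [Nat.cast_nonneg (α := ℝ) u] : (1:ℝ) ≤ (u:ℝ) + 2) (by omega)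
  rw [Summable.tsum_eq_zero_add hsumA]
  have hshift : ∀ i : ℕ, hh (i + 1 + 1) * (1 / (((i+1:ℕ):ℝ) + 1) ^ (W + 3)) =
      hh (i + 2) * (1 / ((i:ℝ) + 2) ^ (W + 3)) := by
    intro i; push_cast; ring_nf
  rw [tsum_congr hshift]
  have hsumA' : Summable (fun i : ℕ => hh (i + 2) * (1 / ((i:ℝ) + 2) ^ (W + 3))) := by
    apply Summable.congr ((summable_nat_add_iff 1).mpr hsumA)
    intro i; push_cast; ring_nf
  rw [show (hh (0 + 1) * (1 / (((0:ℕ):ℝ) + 1) ^ (W + 3))) = 1 by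
    norm_num [hh, Finset.sum_range_one]]
  have hdiff : ∀ u : ℕ, hh (u + 2) * (1 / ((u:ℝ) + 2) ^ (W + 3)) -
      hh (u + 1) * (1 / ((u:ℝ) + 2) ^ (W + 3)) = 1 / ((u:ℝ) + 2) ^ (W + 4) := by
    intro u
    rw [hh_succ (u + 1)]
    push_cast
    rw [pow_succ]
    field_simp
    ring
  rw [add_sub_assoc, ← Summable.tsum_sub hsumA' hsumB, tsum_congr hdiff]
  have hz : zz (W + 4) = 1 + ∑' u : ℕ, 1 / ((u:ℝ) + 2) ^ (W + 4) := by
    unfold zz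
    rw [Summable.tsum_eq_zero_add (summable_zpow (W + 4) (by omega))]
    norm_num
    apply tsum_congr
    intro u; push_cast; ring_nf
  rw [hz]



lemma b1 (M : ℕ) : ∑ u ∈ Finset.range M, M.choose (u + 1) = 2 ^ M - 1 := by
  have h := Nat.sum_range_choose M
  rw [Finset.sum_range_succ'] at h
  simp only [Nat.choose_zero_right] at h
  omega

lemma b2 (M R : ℕ) (h : M ≤ R) : ∑ u ∈ Finset.range R, M.choose (u + 1) = 2 ^ M - 1 := by
  rw [← b1 M]
  symm
  apply Finset.sum_subset (Finset.range_subset_range.mpr h)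
  intro x _ hx
  simp only [Finset.mem_range] at hx
  exact Nat.choose_eq_zero_of_lt (by omega)

section main
variable (r : ℕ)

lemma euler_sum_ext (s : ℕ) (hs : s ≤ r) :
    zz (s + 2) * zz (r - s + 2) =
      ∑ t ∈ Finset.range (r + 2),
        (((r + 2 - t).choose (r - s + 1) + (r + 2 - t).choose (s + 1) : ℕ) : ℝ) *
          Z (t + 1) (r + 3 - t) := by
  have h := euler_decomp s (r - s)
  have hrs : s + (r - s) = r := by omega
  rw [hrs] at h
  rw [h]
  symm
  have hsplit : ∀ t ∈ Finset.range (r + 2),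
      (((r + 2 - t).choose (r - s + 1) + (r + 2 - t).choose (s + 1) : ℕ) : ℝ) *
          Z (t + 1) (r + 3 - t) =
      ((r + 2 - t).choose (r - s + 1) : ℝ) * Z (t + 1) (r + 3 - t) +
        ((r + 2 - t).choose (s + 1) : ℝ) * Z (t + 1) (r + 3 - t) := by
    intro t _
    push_cast
    ring
  rw [Finset.sum_congr rfl hsplit, Finset.sum_add_distrib]
  congr 1
  · symm
    apply Finset.sum_subset (Finset.range_subset_range.mpr (by omega))
    intro t _ ht
    simp only [Finset.mem_range] at ht
    rw [Nat.choose_eq_zero_of_lt (by omega)]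
    simp
  · symm
    apply Finset.sum_subset (Finset.range_subset_range.mpr (by omega))
    intro t _ ht
    simp only [Finset.mem_range] at ht
    rw [Nat.choose_eq_zero_of_lt (by omega)]
    simp

lemma coeff_eval (t : ℕ) (ht : t ≤ r + 1) :
    ∑ s ∈ Finset.range (r + 1),
        ((r + 2 - t).choose (r - s + 1) + (r + 2 - t).choose (s + 1)) =
      if t = 0 then 2 ^ (r + 3) - 4 else 2 ^ (r + 3 - t) - 2 := by
  set M := r + 2 - t with hM
  rw [Finset.sum_add_distrib]
  have hrefl : ∑ s ∈ Finset.range (r + 1), M.choose (r - s + 1) =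
      ∑ s ∈ Finset.range (r + 1), M.choose (s + 1) := by
    rw [← Finset.sum_range_reflect (fun s => M.choose (s + 1)) (r + 1)]
    apply Finset.sum_congr rfl
    intro s hsm
    simp only [Finset.mem_range] at hsm
    rw [show r + 1 - 1 - s + 1 = r - s + 1 by omega]
  rw [hrefl]
  by_cases h0 : t = 0
  · subst h0
    have hM2 : M = r + 2 := by omega
    rw [hM2, if_pos rfl]
    have : ∑ s ∈ Finset.range (r + 2), (r + 2).choose (s + 1) = 2 ^ (r + 2) - 1 :=
      b2 (r + 2) (r + 2) le_rfl
    rw [Finset.sum_range_succ, Nat.choose_self] at this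
    have h2 : (2:ℕ) ≤ 2 ^ (r + 2) := by
      calc (2:ℕ) = 2 ^ 1 := rfl
        _ ≤ 2 ^ (r + 2) := Nat.pow_le_pow_right (by norm_num) (by omega)
    have h3 : (4:ℕ) ≤ 2 ^ (r + 3) := by
      calc (4:ℕ) = 2 ^ 2 := rfl
        _ ≤ 2 ^ (r + 3) := Nat.pow_le_pow_right (by norm_num) (by omega)
    have hp : 2 ^ (r + 3) = 2 * 2 ^ (r + 2) := by ring
    omega
  · rw [if_neg h0]
    have hMle : M ≤ r + 1 := by omega
    rw [b2 M (r + 1) hMle]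
    have h2 : (1:ℕ) ≤ 2 ^ M := Nat.one_le_two_pow
    have hp : 2 ^ (r + 3 - t) = 2 * 2 ^ M := by
      rw [show r + 3 - t = M + 1 by omega]
      ring
    omega

theorem main : ∑ t ∈ Finset.range (r + 2), (2:ℝ) ^ (r + 3 - t) * Z (t + 1) (r + 3 - t) =
    ((r : ℝ) + 5) * zz (r + 4) := by
  set Q : ℕ → ℝ := fun t => Z (t + 1) (r + 3 - t) with hQ
  have hS0 : ∑ t ∈ Finset.range (r + 2), Q t = zz (r + 4) := sum_formula r
  -- sum the stuffle relations
  have hstuffle : ∀ s ∈ Finset.range (r + 1),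
      zz (s + 2) * zz (r - s + 2) = Q (s + 1) + Q (r - s + 1) + zz (r + 4) := by
    intro s hsm
    simp only [Finset.mem_range] at hsm
    have h := stuffle (a := s + 2) (b := r - s + 2) (by omega) (by omega)
    rw [show s + 2 + (r - s + 2) = r + 4 by omega] at h
    rw [h, hQ]
    simp only
    rw [show r + 3 - (s + 1) = r - s + 2 by omega, show r + 3 - (r - s + 1) = s + 2 by omega,
        show r - s + 1 + 1 = r - s + 2 by omega]
  have hsum_eq : ∑ s ∈ Finset.range (r + 1), (zz (s + 2) * zz (r - s + 2)) =
      2 * (zz (r + 4) - Q 0) + (r + 1) * zz (r + 4) := by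
    rw [Finset.sum_congr rfl hstuffle]
    rw [Finset.sum_add_distrib, Finset.sum_add_distrib]
    have e1 : ∑ s ∈ Finset.range (r + 1), Q (s + 1) = zz (r + 4) - Q 0 := by
      have := Finset.sum_range_succ' Q (r + 1)
      rw [hS0] at this
      linarith
    have e2 : ∑ s ∈ Finset.range (r + 1), Q (r - s + 1) = zz (r + 4) - Q 0 := by
      rw [← e1, ← Finset.sum_range_reflect (fun s => Q (s + 1)) (r + 1)]
      apply Finset.sum_congr rfl
      intro s hsm
      simp only [Finset.mem_range] at hsm
      rw [show r + 1 - 1 - s + 1 = r - s + 1 by omega]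
    rw [e1, e2, Finset.sum_const, Finset.card_range, nsmul_eq_mul]
    push_cast
    ring
  have hsum_eq2 : ∑ s ∈ Finset.range (r + 1), (zz (s + 2) * zz (r - s + 2)) =
      (∑ t ∈ Finset.range (r + 2), (2:ℝ) ^ (r + 3 - t) * Q t) - 2 * zz (r + 4) - 2 * Q 0 := by
    rw [Finset.sum_congr rfl (fun s hsm => euler_sum_ext r s (by
      simp only [Finset.mem_range] at hsm; omega))]
    rw [Finset.sum_comm]
    have hcoeff : ∀ t ∈ Finset.range (r + 2),
        ∑ s ∈ Finset.range (r + 1),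
          (((r + 2 - t).choose (r - s + 1) + (r + 2 - t).choose (s + 1) : ℕ) : ℝ) *
            Z (t + 1) (r + 3 - t) =
        ((if t = 0 then 2 ^ (r + 3) - 4 else 2 ^ (r + 3 - t) - 2 : ℕ) : ℝ) * Q t := by
      intro t htm
      simp only [Finset.mem_range] at htm
      rw [← Finset.sum_mul, ← Nat.cast_sum, coeff_eval r t (by omega)]
    rw [Finset.sum_congr rfl hcoeff]
    -- split off t = 0
    rw [Finset.sum_range_succ' _ (r + 1)]
    rw [show ((if 0 = 0 then 2 ^ (r + 3) - 4 else 2 ^ (r + 3 - 0) - 2 : ℕ) : ℝ) * Q 0 =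
        ((2:ℝ) ^ (r + 3) - 4) * Q 0 by
      rw [if_pos rfl]
      have h3 : (4:ℕ) ≤ 2 ^ (r + 3) := by
        calc (4:ℕ) = 2 ^ 2 := rfl
          _ ≤ 2 ^ (r + 3) := Nat.pow_le_pow_right (by norm_num) (by omega)
      rw [Nat.cast_sub h3]
      push_cast
      ring]
    have hterm : ∀ t ∈ Finset.range (r + 1),
        ((if t + 1 = 0 then 2 ^ (r + 3) - 4 else 2 ^ (r + 3 - (t + 1)) - 2 : ℕ) : ℝ) * Q (t + 1) =
        ((2:ℝ) ^ (r + 3 - (t + 1)) - 2) * Q (t + 1) := by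
      intro t htm
      simp only [Finset.mem_range] at htm
      rw [if_neg (by omega)]
      have h2 : (2:ℕ) ≤ 2 ^ (r + 3 - (t + 1)) := by
        calc (2:ℕ) = 2 ^ 1 := rfl
          _ ≤ 2 ^ (r + 3 - (t + 1)) := Nat.pow_le_pow_right (by norm_num) (by omega)
      rw [Nat.cast_sub h2]
      push_cast
      ring
    rw [Finset.sum_congr rfl hterm]
    -- compare with ∑_{t ∈ range (r+2)} (2^(r+3-t) - 2) * Q t
    have hfull : ∑ t ∈ Finset.range (r + 2), ((2:ℝ) ^ (r + 3 - t) - 2) * Q t =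
        (∑ t ∈ Finset.range (r + 2), (2:ℝ) ^ (r + 3 - t) * Q t) - 2 * zz (r + 4) := by
      rw [← hS0, Finset.mul_sum, ← Finset.sum_sub_distrib]
      apply Finset.sum_congr rfl
      intro t _
      ring
    have hsplit : ∑ t ∈ Finset.range (r + 2), ((2:ℝ) ^ (r + 3 - t) - 2) * Q t =
        (∑ t ∈ Finset.range (r + 1), ((2:ℝ) ^ (r + 3 - (t + 1)) - 2) * Q (t + 1)) +
          ((2:ℝ) ^ (r + 3) - 2) * Q 0 := by
      rw [Finset.sum_range_succ' _ (r + 1)]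
      norm_num
    have := hsplit.symm.trans hfull
    linarith
  have hkey : ∑ t ∈ Finset.range (r + 2), (2:ℝ) ^ (r + 3 - t) * Q t =
      ((r:ℝ) + 5) * zz (r + 4) := by
    have h := hsum_eq.symm.trans hsum_eq2
    linarith
  exact hkey

end main

end OZ

theorem ohno_zudilin_weighted_sum (r : ℕ) :
    ∑ α₁ ∈ Finset.Ico 1 (r + 3), (2 : ℝ) ^ (r + 3 - α₁) * zeta2 α₁ (r + 3 - α₁ + 1) =
      ((r : ℝ) + 5) / 2 * zetaV (r + 4) := by
  rw [Finset.sum_Ico_eq_sum_range]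
  rw [show r + 3 - 1 = r + 2 from rfl]
  have hterm : ∀ t ∈ Finset.range (r + 2),
      (2 : ℝ) ^ (r + 3 - (1 + t)) * zeta2 (1 + t) (r + 3 - (1 + t) + 1) =
        (2 : ℝ) ^ (r + 2 - t) * OZ.Z (t + 1) (r + 3 - t) := by
    intro t htm
    simp only [Finset.mem_range] at htm
    rw [show r + 3 - (1 + t) = r + 2 - t by omega, show r + 2 - t + 1 = r + 3 - t by omega,
        show 1 + t = t + 1 by omega]
    rw [OZ.zeta2_eq (t + 1) (r + 3 - t) (by omega) (by omega)]
  rw [Finset.sum_congr rfl hterm]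
  have hmain := OZ.main r
  have hdou : ∑ t ∈ Finset.range (r + 2), (2 : ℝ) ^ (r + 3 - t) * OZ.Z (t + 1) (r + 3 - t) =
      2 * ∑ t ∈ Finset.range (r + 2), (2 : ℝ) ^ (r + 2 - t) * OZ.Z (t + 1) (r + 3 - t) := by
    rw [Finset.mul_sum]
    apply Finset.sum_congr rfl
    intro t htm
    simp only [Finset.mem_range] at htm
    rw [show r + 3 - t = (r + 2 - t) + 1 by omega, pow_succ]
    ring
  rw [OZ.zetaV_eq (r + 4) (by omega)]
  rw [hdou] at hmain
  linarith
end

section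
/- For any nonnegative integer r, ∑_{α₁+α₂=r+3} ζ(α₁, α₂+1) = ζ(r+4), where the sum is over pairs of positive integers (α₁, α₂) with α₁+α₂ = r+3. -/
open Filter

open Topology Finset

noncomputable def Hh (N : ℕ) : ℝ := ∑ k ∈ Finset.Ico 1 (N+1), 1/(k:ℝ)
noncomputable def Pp (a b N : ℕ) : ℝ :=
  ∑ n ∈ Finset.Ico 1 (N+1), ∑ k ∈ Finset.Ico 1 n, 1 / ((k:ℝ)^a * (n:ℝ)^b)
noncomputable def Zz (s N : ℕ) : ℝ := ∑ n ∈ Finset.Ico 1 (N+1), 1/(n:ℝ)^s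
noncomputable def Qq (r N : ℕ) : ℝ :=
  ∑ k ∈ Finset.Ico 1 (N+1), (Hh N - Hh (N-k)) / (k:ℝ)^(r+3)
lemma Hh_nonneg (N : ℕ) : 0 ≤ Hh N := by
  apply Finset.sum_nonneg; intro i _; positivity

lemma sum_sq_aux (M : ℕ) : ∑ k ∈ Ico 2 (M+2), 1/(k:ℝ)^2 ≤ 1 - 1/((M:ℝ)+1) := by
  induction M with
  | zero => simp
  | succ M ih =>
    rw [show M+1+2 = (M+2)+1 from rfl, Finset.sum_Ico_succ_top (by omega)]
    have key : 1/(((M:ℕ)+2:ℕ):ℝ)^2 ≤ 1/((M:ℝ)+1) - 1/((M:ℝ)+2) := by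
      push_cast
      rw [div_sub_div _ _ (by positivity) (by positivity),
        div_le_div_iff₀ (by positivity) (by positivity)]
      ring_nf; nlinarith [sq_nonneg ((M:ℝ)+1)]
    push_cast
    have e : (M:ℝ)+1+1 = (M:ℝ)+2 := by ring
    rw [e]
    push_cast at key
    linarith

lemma sum_sq_le (M : ℕ) : ∑ k ∈ Ico 1 M, 1/(k:ℝ)^2 ≤ 2 := by
  rcases Nat.lt_or_ge M 2 with h | h
  · interval_cases M <;> norm_num
  · rw [← Finset.sum_Ico_consecutive _ (by omega : 1 ≤ 2) h]
    have h2 : ∑ k ∈ Ico 2 M, 1/(k:ℝ)^2 ≤ 1 := by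
      have hM : M - 2 + 2 = M := by omega
      have := sum_sq_aux (M - 2)
      rw [hM] at this
      have hp : (0:ℝ) ≤ 1/((M-2:ℕ):ℝ)+1 := by positivity
      have hp2 : (0:ℝ) ≤ 1/(((M-2:ℕ):ℝ)+1) := by positivity
      linarith
    norm_num at *
    linarith

lemma pow_prod_le {a b k n : ℕ} (ha : 1 ≤ a) (hb : 2 ≤ b) (hab : 4 ≤ a + b)
    (hk : 1 ≤ k) (hkn : k ≤ n) : k^2 * n^2 ≤ k^a * n^b := by
  calc k^2*n^2 ≤ k^(a+b-2) * n^2 := by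
        apply Nat.mul_le_mul_right
        exact Nat.pow_le_pow_right hk (by omega)
    _ = (k^a * k^(b-2)) * n^2 := by
        have e : a + (b-2) = a+b-2 := by omega
        rw [← pow_add, e]
    _ ≤ (k^a * n^(b-2)) * n^2 := by
        apply Nat.mul_le_mul_right
        exact Nat.mul_le_mul_left _ (Nat.pow_le_pow_left hkn _)
    _ = k^a * n^b := by
        have e : b - 2 + 2 = b := by omega
        rw [mul_assoc, ← pow_add, e]

lemma Pp_le {a b : ℕ} (ha : 1 ≤ a) (hb : 2 ≤ b) (hab : 4 ≤ a + b) (N : ℕ) :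
    Pp a b N ≤ 4 := by
  have step1 : Pp a b N ≤ ∑ n ∈ Ico 1 (N+1), 2 * (1/(n:ℝ)^2) := by
    apply Finset.sum_le_sum
    intro n hn
    rw [mem_Ico] at hn
    calc ∑ k ∈ Ico 1 n, 1 / ((k:ℝ)^a * (n:ℝ)^b)
        ≤ ∑ k ∈ Ico 1 n, 1 / ((k:ℝ)^2 * (n:ℝ)^2) := by
          apply Finset.sum_le_sum
          intro k hk
          rw [mem_Ico] at hk
          apply one_div_le_one_div_of_le
          · have h1 : (1:ℝ) ≤ (k:ℝ) := by exact_mod_cast hk.1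
            have h2 : (1:ℝ) ≤ (n:ℝ) := by exact_mod_cast hn.1
            positivity
          · exact_mod_cast pow_prod_le ha hb hab hk.1 (by omega)
      _ = (1/(n:ℝ)^2) * ∑ k ∈ Ico 1 n, 1/(k:ℝ)^2 := by
          rw [Finset.mul_sum]; apply Finset.sum_congr rfl; intro k _; ring
      _ ≤ (1/(n:ℝ)^2) * 2 := by
          apply mul_le_mul_of_nonneg_left (sum_sq_le n) (by positivity)
      _ = 2 * (1/(n:ℝ)^2) := by ring
  have step2 : ∑ n ∈ Ico 1 (N+1), 2 * (1/(n:ℝ)^2) ≤ 4 := by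
    rw [← Finset.mul_sum]
    have := sum_sq_le (N+1)
    linarith
  linarith

lemma Zz_le {s : ℕ} (hs : 2 ≤ s) (N : ℕ) : Zz s N ≤ 2 := by
  refine le_trans (Finset.sum_le_sum ?_) (sum_sq_le (N+1))
  intro n hn
  rw [mem_Ico] at hn
  apply one_div_le_one_div_of_le
  · have h1 : (1:ℝ) ≤ (n:ℝ) := by exact_mod_cast hn.1
    positivity
  · exact_mod_cast Nat.pow_le_pow_right hn.1 hs

lemma Pp_mono (a b : ℕ) : Monotone (Pp a b) := by
  intro N M h
  apply Finset.sum_le_sum_of_subset_of_nonneg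
  · exact Finset.Ico_subset_Ico le_rfl (by omega)
  · intro n _ _
    apply Finset.sum_nonneg
    intro k _; positivity

lemma Zz_mono (s : ℕ) : Monotone (Zz s) := by
  intro N M h
  apply Finset.sum_le_sum_of_subset_of_nonneg
  · exact Finset.Ico_subset_Ico le_rfl (by omega)
  · intro n _ _; positivity

lemma Hh_eq_range (M : ℕ) : Hh M = ∑ i ∈ range M, 1/((i:ℝ)+1) := by
  rw [Hh, Finset.sum_Ico_eq_sum_range]
  simp only [Nat.add_sub_cancel]
  apply Finset.sum_congr rfl
  intro i _
  push_cast
  ring_nf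

lemma Hh_tail {k N : ℕ} (hk : k ≤ N) :
    ∑ i ∈ range (N-k), 1/((k:ℝ)+(i:ℝ)+1) = Hh N - Hh k := by
  have h1 : Hh N = Hh k + ∑ j ∈ Ico (k+1) (N+1), 1/(j:ℝ) := by
    rw [Hh, Hh, Finset.sum_Ico_consecutive _ (by omega : 1 ≤ k+1) (by omega : k+1 ≤ N+1)]
  have h2 : ∑ j ∈ Ico (k+1) (N+1), 1/(j:ℝ) = ∑ i ∈ range (N-k), 1/((k:ℝ)+(i:ℝ)+1) := by
    rw [Finset.sum_Ico_eq_sum_range]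
    have e : N+1-(k+1) = N-k := by omega
    rw [e]
    apply Finset.sum_congr rfl
    intro i _
    push_cast
    ring_nf
  rw [h1, h2]; ring

lemma reflect_sum (n : ℕ) (f : ℕ → ℝ) :
    ∑ k ∈ Ico 1 n, f (n-k) = ∑ k ∈ Ico 1 n, f k := by
  apply Finset.sum_nbij' (fun k => n - k) (fun k => n - k)
  · intro a ha; rw [mem_Ico] at *; omega
  · intro a ha; rw [mem_Ico] at *; omega
  · intro a ha; rw [mem_Ico] at ha; omega
  · intro a ha; rw [mem_Ico] at ha; omega
  · intro a _; rfl

lemma tele (r k n : ℕ) (hk : 1 ≤ k) (hkn : k < n) :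
    ∑ α ∈ Ico 1 (r+3), 1 / ((k:ℝ)^α * (n:ℝ)^(r+3-α+1)) =
      1/(((n:ℝ)-(k:ℝ)) * ((k:ℝ)^(r+2) * (n:ℝ))) - 1/(((n:ℝ)-(k:ℝ)) * (n:ℝ)^(r+3)) := by
  have hk0 : (0:ℝ) < k := by exact_mod_cast hk
  have hn0 : (0:ℝ) < n := by exact_mod_cast (by omega : 0 < n)
  have hnk : (0:ℝ) < (n:ℝ) - k := by
    have : (k:ℝ) < n := by exact_mod_cast hkn
    linarith
  set F : ℕ → ℝ := fun i => 1/(((n:ℝ)-(k:ℝ)) * ((k:ℝ)^i * (n:ℝ)^(r+3-i))) with hF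
  have hstep : ∀ i ∈ range (r+2), 1 / ((k:ℝ)^(1+i) * (n:ℝ)^(r+3-(1+i)+1)) = F (i+1) - F i := by
    intro i hi
    rw [mem_range] at hi
    have e1 : r+3-(1+i)+1 = (r+2-i)+1 := by omega
    have e2 : r+3-(i+1) = r+2-i := by omega
    have e3 : r+3-i = (r+2-i)+1 := by omega
    simp only [hF, e1, e2, e3]
    have h1 : ((k:ℝ)^(i+1)) ≠ 0 := by positivity
    have h2 : ((n:ℝ)^(r+2-i)) ≠ 0 := by positivity
    field_simp
    ring
  rw [Finset.sum_Ico_eq_sum_range]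
  have e : r+3-1 = r+2 := by omega
  rw [e, Finset.sum_congr rfl hstep, Finset.sum_range_sub F (r+2)]
  simp only [hF]
  have e1 : r+3-(r+2) = 1 := by omega
  have e2 : r+3-0 = r+3 := by omega
  rw [e1, e2]
  norm_num

lemma partB (r N : ℕ) :
    ∑ n ∈ Ico 1 (N+1), ∑ k ∈ Ico 1 n, 1/(((n:ℝ)-(k:ℝ)) * (n:ℝ)^(r+3)) = Pp 1 (r+3) N := by
  apply Finset.sum_congr rfl
  intro n _
  have h := reflect_sum n (fun j => 1/((j:ℝ) * (n:ℝ)^(r+3)))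
  calc ∑ k ∈ Ico 1 n, 1/(((n:ℝ)-(k:ℝ)) * (n:ℝ)^(r+3))
      = ∑ k ∈ Ico 1 n, 1/(((n-k:ℕ):ℝ) * (n:ℝ)^(r+3)) := by
        apply Finset.sum_congr rfl
        intro k hk
        rw [mem_Ico] at hk
        rw [Nat.cast_sub (by omega : k ≤ n)]
    _ = ∑ k ∈ Ico 1 n, 1/((k:ℝ) * (n:ℝ)^(r+3)) := h
    _ = ∑ k ∈ Ico 1 n, 1/((k:ℝ)^1 * (n:ℝ)^(r+3)) := by
        apply Finset.sum_congr rfl; intro k _; rw [pow_one]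

lemma partA_inner (r N k : ℕ) (hk : 1 ≤ k) (hkN : k ≤ N) :
    ∑ n ∈ Ico (k+1) (N+1), 1/(((n:ℝ)-(k:ℝ)) * ((k:ℝ)^(r+2) * (n:ℝ)))
      = (Hh (N-k) - (Hh N - Hh k)) / (k:ℝ)^(r+3) := by
  have hk0 : (0:ℝ) < k := by exact_mod_cast hk
  rw [Finset.sum_Ico_eq_sum_range]
  have e : N+1-(k+1) = N-k := by omega
  rw [e]
  have hstep2 : ∀ i ∈ range (N-k),
      1/(((((k+1+i:ℕ)):ℝ)-(k:ℝ)) * ((k:ℝ)^(r+2) * ((k+1+i:ℕ):ℝ)))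
        = (1/(k:ℝ)^(r+3)) * (1/((i:ℝ)+1) - 1/((k:ℝ)+(i:ℝ)+1)) := by
    intro i _
    have h1 : ((k+1+i:ℕ):ℝ) = (k:ℝ)+1+(i:ℝ) := by push_cast; ring
    rw [h1]
    have h2 : (0:ℝ) < (i:ℝ)+1 := by positivity
    have h3 : (0:ℝ) < (k:ℝ)+(i:ℝ)+1 := by positivity
    have h4 : ((k:ℝ)+1+(i:ℝ)) - (k:ℝ) = (i:ℝ)+1 := by ring
    rw [h4]
    have h5 : (k:ℝ)+1+(i:ℝ) = (k:ℝ)+(i:ℝ)+1 := by ring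
    rw [h5]
    have hp : ((k:ℝ)^(r+2)) ≠ 0 := by positivity
    field_simp
    ring
  rw [Finset.sum_congr rfl hstep2, ← Finset.mul_sum, Finset.sum_sub_distrib,
    ← Hh_eq_range, Hh_tail hkN]
  ring

lemma partA (r N : ℕ) :
    ∑ n ∈ Ico 1 (N+1), ∑ k ∈ Ico 1 n, 1/(((n:ℝ)-(k:ℝ)) * ((k:ℝ)^(r+2) * (n:ℝ)))
      = (Pp 1 (r+3) N + Zz (r+4) N) - Qq r N := by
  rw [← Finset.sum_Ico_Ico_comm' 1 (N+1)
    (fun k n => 1/(((n:ℝ)-(k:ℝ)) * ((k:ℝ)^(r+2) * (n:ℝ))))]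
  have h2 : ∑ k ∈ Ico 1 (N+1), ∑ n ∈ Ico (k+1) (N+1),
      1/(((n:ℝ)-(k:ℝ)) * ((k:ℝ)^(r+2) * (n:ℝ)))
      = ∑ k ∈ Ico 1 (N+1), (Hh (N-k) - (Hh N - Hh k))/(k:ℝ)^(r+3) := by
    apply Finset.sum_congr rfl
    intro k hk
    rw [mem_Ico] at hk
    exact partA_inner r N k hk.1 (by omega)
  rw [h2]
  have split : ∀ k ∈ Ico 1 (N+1), (Hh (N-k) - (Hh N - Hh k))/(k:ℝ)^(r+3)
      = ((∑ j ∈ Ico 1 k, 1/((j:ℝ)^1 * (k:ℝ)^(r+3))) + 1/(k:ℝ)^(r+4))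
        - (Hh N - Hh (N-k))/(k:ℝ)^(r+3) := by
    intro k hk
    rw [mem_Ico] at hk
    have hk0 : (0:ℝ) < k := by exact_mod_cast hk.1
    have hS : ∑ j ∈ Ico 1 k, 1/((j:ℝ)^1 * (k:ℝ)^(r+3))
        = (∑ j ∈ Ico 1 k, (1:ℝ)/j) / (k:ℝ)^(r+3) := by
      rw [Finset.sum_div]
      apply Finset.sum_congr rfl
      intro j _
      rw [pow_one, div_div]
    have hHk : Hh k = (∑ j ∈ Ico 1 k, (1:ℝ)/j) + 1/k := by
      rw [Hh, Finset.sum_Ico_succ_top (by omega : 1 ≤ k)]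
    have hpow : ((k:ℝ))^(r+4) = (k:ℝ)^(r+3)*(k:ℝ) := pow_succ _ _
    rw [hS, hHk, hpow]
    ring
  rw [Finset.sum_congr rfl split, Finset.sum_sub_distrib, Finset.sum_add_distrib]
  rfl

lemma key (r N : ℕ) :
    ∑ α ∈ Ico 1 (r+3), Pp α (r+3-α+1) N = Zz (r+4) N - Qq r N := by
  have h1 : ∑ α ∈ Ico 1 (r+3), Pp α (r+3-α+1) N
      = ∑ n ∈ Ico 1 (N+1), ∑ k ∈ Ico 1 n,
          (1/(((n:ℝ)-(k:ℝ)) * ((k:ℝ)^(r+2) * (n:ℝ)))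
            - 1/(((n:ℝ)-(k:ℝ)) * (n:ℝ)^(r+3))) := by
    unfold Pp
    rw [Finset.sum_comm]
    apply Finset.sum_congr rfl
    intro n _
    rw [Finset.sum_comm]
    apply Finset.sum_congr rfl
    intro k hk
    rw [mem_Ico] at hk
    exact tele r k n hk.1 hk.2
  rw [h1]
  simp only [Finset.sum_sub_distrib]
  rw [partA, partB]
  ring

lemma Hh_mono : Monotone Hh := by
  intro a b h
  apply Finset.sum_le_sum_of_subset_of_nonneg
  · exact Finset.Ico_subset_Ico le_rfl (by omega)
  · intro n _ _; positivity

lemma Qq_nonneg (r N : ℕ) : 0 ≤ Qq r N := by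
  apply Finset.sum_nonneg
  intro k _
  apply div_nonneg _ (by positivity)
  have := Hh_mono (Nat.sub_le N k)
  linarith

lemma Qq_le (r N : ℕ) (hN : 1 ≤ N) : Qq r N ≤ 2 * ((N:ℝ)⁻¹ * Hh N) := by
  have hN0 : (0:ℝ) < N := by exact_mod_cast hN
  have step1 : Qq r N ≤ ∑ k ∈ Ico 1 (N+1), 1/((k:ℝ) * (((N-k:ℕ):ℝ)+1)) := by
    apply Finset.sum_le_sum
    intro k hk
    rw [mem_Ico] at hk
    have hk1 : 1 ≤ k := hk.1
    have hkN : k ≤ N := by omega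
    have hk0 : (0:ℝ) < k := by exact_mod_cast hk1
    have hD0 : (0:ℝ) < ((N-k:ℕ):ℝ)+1 := by positivity
    -- Hh N - Hh (N-k) = tail sum
    have htail : Hh N - Hh (N-k) = ∑ j ∈ Ico (N-k+1) (N+1), 1/(j:ℝ) := by
      rw [Hh, Hh, ← Finset.sum_Ico_consecutive _ (by omega : 1 ≤ N-k+1) (by omega : N-k+1 ≤ N+1)]
      ring
    have hcard : (Ico (N-k+1) (N+1)).card = k := by
      rw [Nat.card_Ico]; omega
    have htb : Hh N - Hh (N-k) ≤ (k:ℝ) * (1/(((N-k:ℕ):ℝ)+1)) := by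
      rw [htail]
      calc ∑ j ∈ Ico (N-k+1) (N+1), 1/(j:ℝ)
          ≤ ∑ j ∈ Ico (N-k+1) (N+1), 1/(((N-k:ℕ):ℝ)+1) := by
            apply Finset.sum_le_sum
            intro j hj
            rw [mem_Ico] at hj
            apply one_div_le_one_div_of_le hD0
            have : (N-k+1 : ℕ) ≤ j := hj.1
            exact_mod_cast this
        _ = (k:ℝ) * (1/(((N-k:ℕ):ℝ)+1)) := by
            rw [Finset.sum_const, hcard, nsmul_eq_mul]
    calc (Hh N - Hh (N-k)) / (k:ℝ)^(r+3)
        ≤ ((k:ℝ) * (1/(((N-k:ℕ):ℝ)+1))) / (k:ℝ)^(r+3) := by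
          apply div_le_div_of_nonneg_right htb (by positivity) |>.trans_eq rfl
      _ ≤ ((k:ℝ) * (1/(((N-k:ℕ):ℝ)+1))) / (k:ℝ)^2 := by
          apply div_le_div_of_nonneg_left (by positivity) (by positivity)
          exact_mod_cast Nat.pow_le_pow_right hk1 (by omega)
      _ = 1/((k:ℝ) * (((N-k:ℕ):ℝ)+1)) := by
          have hcast : ((N-k:ℕ):ℝ) = (N:ℝ)-(k:ℝ) := by
            exact Nat.cast_sub hkN
          have hD0' : (0:ℝ) < (N:ℝ)-(k:ℝ)+1 := by rw [hcast] at hD0; linarith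
          have hDne2 : (1:ℝ) - (k:ℝ) + (N:ℝ) ≠ 0 := by
            intro hc; rw [show (1:ℝ)-(k:ℝ)+(N:ℝ) = (N:ℝ)-(k:ℝ)+1 from by ring] at hc
            linarith
          rw [div_eq_div_iff (by positivity : ((k:ℝ)^2) ≠ 0)
            (by positivity : ((k:ℝ)*(((N-k:ℕ):ℝ)+1)) ≠ 0)]
          field_simp [hDne2]
  have step2 : ∑ k ∈ Ico 1 (N+1), 1/((k:ℝ) * (((N-k:ℕ):ℝ)+1))
      = (1/((N:ℝ)+1)) * ∑ k ∈ Ico 1 (N+1), (1/(k:ℝ) + 1/(((N-k:ℕ):ℝ)+1)) := by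
    rw [Finset.mul_sum]
    apply Finset.sum_congr rfl
    intro k hk
    rw [mem_Ico] at hk
    have hk0 : (0:ℝ) < k := by exact_mod_cast hk.1
    have hD0 : (0:ℝ) < ((N-k:ℕ):ℝ)+1 := by positivity
    have hsum : (k:ℝ) + (((N-k:ℕ):ℝ)+1) = (N:ℝ)+1 := by
      have : ((N-k:ℕ):ℝ) = (N:ℝ) - (k:ℝ) := by
        rw [Nat.cast_sub (by omega : k ≤ N)]
      rw [this]; ring
    field_simp
    linarith [hsum]
  have step3 : ∑ k ∈ Ico 1 (N+1), 1/(((N-k:ℕ):ℝ)+1) = Hh N := by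
    have h := reflect_sum (N+1) (fun j => 1/((j:ℝ)))
    calc ∑ k ∈ Ico 1 (N+1), 1/(((N-k:ℕ):ℝ)+1)
        = ∑ k ∈ Ico 1 (N+1), 1/(((N+1-k:ℕ):ℝ)) := by
          apply Finset.sum_congr rfl
          intro k hk
          rw [mem_Ico] at hk
          have : (N+1-k:ℕ) = (N-k)+1 := by omega
          rw [this]; push_cast; ring_nf
      _ = ∑ k ∈ Ico 1 (N+1), 1/(k:ℝ) := h
      _ = Hh N := rfl
  have hHnn := Hh_nonneg N
  calc Qq r N ≤ (1/((N:ℝ)+1)) * ∑ k ∈ Ico 1 (N+1), (1/(k:ℝ) + 1/(((N-k:ℕ):ℝ)+1)) := by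
        rw [← step2]; exact step1
    _ = (1/((N:ℝ)+1)) * (Hh N + Hh N) := by
        rw [Finset.sum_add_distrib, step3]; rfl
    _ ≤ (1/(N:ℝ)) * (Hh N + Hh N) := by
        apply mul_le_mul_of_nonneg_right _ (by linarith)
        apply one_div_le_one_div_of_le hN0
        linarith
    _ = 2 * ((N:ℝ)⁻¹ * Hh N) := by
        rw [one_div]; ring

lemma Hh_cesaro : Tendsto (fun N : ℕ => (N:ℝ)⁻¹ * Hh N) atTop (𝓝 0) := by
  have h := tendsto_one_div_add_atTop_nhds_zero_nat.cesaro
  simp only [← Hh_eq_range] at h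
  exact h

lemma Qq_tendsto (r : ℕ) : Tendsto (Qq r) atTop (𝓝 0) := by
  have h2 : Tendsto (fun N : ℕ => 2 * ((N:ℝ)⁻¹ * Hh N)) atTop (𝓝 0) := by
    have := Hh_cesaro.const_mul (2:ℝ)
    simpa using this
  apply tendsto_of_tendsto_of_tendsto_of_le_of_le' tendsto_const_nhds h2
  · exact Eventually.of_forall (fun N => Qq_nonneg r N)
  · filter_upwards [eventually_ge_atTop 1] with N hN
    exact Qq_le r N hN
theorem double_zeta_sum_formula (r : ℕ) :
    ∑ α₁ ∈ Finset.Ico 1 (r + 3), zeta2 α₁ (r + 3 - α₁ + 1) = zetaV (r + 4) := by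
  classical
  have hZt : Tendsto (Zz (r+4)) atTop (𝓝 (⨆ N, Zz (r+4) N)) :=
    tendsto_atTop_ciSup (Zz_mono _)
      ⟨2, by rintro x ⟨N, rfl⟩; exact Zz_le (by omega) N⟩
  have hRHS : zetaV (r+4) = ⨆ N, Zz (r+4) N := hZt.limUnder_eq
  have hPt : ∀ α ∈ Finset.Ico 1 (r+3),
      Tendsto (Pp α (r+3-α+1)) atTop (𝓝 (⨆ N, Pp α (r+3-α+1) N)) := by
    intro α hα
    rw [Finset.mem_Ico] at hα
    exact tendsto_atTop_ciSup (Pp_mono _ _)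
      ⟨4, by rintro x ⟨N, rfl⟩; exact Pp_le hα.1 (by omega) (by omega) N⟩
  have hLHS : ∀ α ∈ Finset.Ico 1 (r+3),
      zeta2 α (r+3-α+1) = ⨆ N, Pp α (r+3-α+1) N := by
    intro α hα
    exact (hPt α hα).limUnder_eq
  rw [hRHS, Finset.sum_congr rfl hLHS]
  have hsum : Tendsto (fun N => ∑ α ∈ Finset.Ico 1 (r+3), Pp α (r+3-α+1) N) atTop
      (𝓝 (∑ α ∈ Finset.Ico 1 (r+3), ⨆ N, Pp α (r+3-α+1) N)) :=
    tendsto_finset_sum _ (fun α hα => hPt α hα)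
  have hsum2 : Tendsto (fun N => ∑ α ∈ Finset.Ico 1 (r+3), Pp α (r+3-α+1) N) atTop
      (𝓝 (⨆ N, Zz (r+4) N)) := by
    have heq : (fun N => ∑ α ∈ Finset.Ico 1 (r+3), Pp α (r+3-α+1) N)
        = fun N => Zz (r+4) N - Qq r N := by
      funext N; exact key r N
    rw [heq]
    simpa using hZt.sub (Qq_tendsto r)
  exact tendsto_nhds_unique hsum hsum2
end

section
/- For any nonnegative integer r, Euler's evaluation holds: ζ(1, r+3) = ((r+3)/2)·ζ(r+4) − (1/2)·∑_{ℓ=0}^{r} ζ(ℓ+2)·ζ(r−ℓ+2). -/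
open Filter

namespace EulerEval
open Finset


noncomputable def Z (s : ℕ) : ℝ := ∑' k : ℕ, 1 / (k : ℝ) ^ s

noncomputable def F (a b : ℕ) : ℕ × ℕ → ℝ := fun p =>
  if p.1 < p.2 then 1 / ((p.1 : ℝ) ^ a * (p.2 : ℝ) ^ b) else 0

noncomputable def D (a b : ℕ) : ℝ := ∑' p : ℕ × ℕ, F a b p

lemma F_nonneg (a b : ℕ) (p : ℕ × ℕ) : 0 ≤ F a b p := by
  unfold F; split <;> positivity

lemma summable_Z {s : ℕ} (hs : 2 ≤ s) : Summable (fun k : ℕ => 1 / (k : ℝ) ^ s) :=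
  Real.summable_one_div_nat_pow.2 hs

lemma summable_prod_pow {s t : ℕ} (hs : 2 ≤ s) (ht : 2 ≤ t) :
    Summable (fun p : ℕ × ℕ => (1 / (p.1 : ℝ) ^ s) * (1 / (p.2 : ℝ) ^ t)) :=
  (summable_Z hs).mul_of_nonneg (summable_Z ht) (fun k => by positivity) (fun k => by positivity)

lemma F_le {a b : ℕ} (ha : 1 ≤ a) (hb : 2 ≤ b) (hab : 4 ≤ a + b) (p : ℕ × ℕ) :
    F a b p ≤ (1 / (p.1 : ℝ) ^ 2) * (1 / (p.2 : ℝ) ^ 2) := by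
  obtain ⟨k1, k2⟩ := p
  unfold F
  split
  · rename_i h
    rcases Nat.eq_zero_or_pos k1 with h0 | h1
    · subst h0
      simp only [Nat.cast_zero, zero_pow (by omega : a ≠ 0), zero_mul, div_zero]
      positivity
    · have hk2 : 1 ≤ k2 := by omega
      rw [one_div_mul_one_div]
      apply one_div_le_one_div_of_le
      · have : (0:ℝ) < (k1:ℝ) := by exact_mod_cast h1
        have : (0:ℝ) < (k2:ℝ) := by exact_mod_cast hk2
        positivity
      · have key : k1 ^ 2 * k2 ^ 2 ≤ k1 ^ a * k2 ^ b := by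
          rcases Nat.lt_or_ge a 2 with ha2 | ha2
          · have haa : a = 1 := by omega
            subst haa
            have hb3 : 3 ≤ b := by omega
            have h1' : k1 ≤ k2 := by omega
            have h2' : k2 ≤ k2 ^ (b - 2) := Nat.le_self_pow (by omega) _
            have : k2 ^ (b - 2) * k2 ^ 2 = k2 ^ b := by
              rw [← pow_add]; congr 1; omega
            calc k1 ^ 2 * k2 ^ 2 = k1 * (k1 * k2 ^ 2) := by ring
              _ ≤ k1 * (k2 ^ (b-2) * k2 ^ 2) := by
                  have : k1 * k2 ^ 2 ≤ k2 ^ (b-2) * k2 ^ 2 :=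
                    Nat.mul_le_mul_right _ (le_trans h1' h2')
                  exact Nat.mul_le_mul_left _ this
              _ = k1 ^ 1 * k2 ^ b := by rw [this]; ring
          · exact Nat.mul_le_mul (Nat.pow_le_pow_right h1 ha2) (Nat.pow_le_pow_right hk2 hb)
        exact_mod_cast key
  · positivity

lemma summable_F {a b : ℕ} (ha : 1 ≤ a) (hb : 2 ≤ b) (hab : 4 ≤ a + b) : Summable (F a b) :=
  (summable_prod_pow le_rfl le_rfl).of_nonneg_of_le (F_nonneg a b) (F_le ha hb hab)

lemma plim_eq {f : ℕ → ℝ} {L : ℝ} (h : Tendsto f atTop (nhds L)) : plim f = L :=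
  h.limUnder_eq

lemma zetaV_eq {s : ℕ} (hs : 2 ≤ s) : zetaV s = Z s := by
  refine plim_eq ?_
  have h1 : Tendsto (fun N => ∑ k ∈ range N, 1 / (k : ℝ) ^ s) atTop (nhds (Z s)) :=
    (summable_Z hs).hasSum.tendsto_sum_nat
  refine ((h1.comp (tendsto_add_atTop_nat 1)).congr fun N => ?_)
  show ∑ k ∈ range (N + 1), 1 / (k : ℝ) ^ s = ∑ k ∈ Ico 1 (N + 1), 1 / (k : ℝ) ^ s
  refine (Finset.sum_subset ?_ ?_).symm
  · intro k hk; simp only [mem_Ico, mem_range] at hk ⊢; omega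
  · intro k hk hk'
    have : k = 0 := by simp only [mem_Ico, mem_range] at hk hk'; omega
    subst this
    simp [zero_pow (by omega : s ≠ 0)]

lemma tendsto_square {f : ℕ × ℕ → ℝ} (hf : Summable f) :
    Tendsto (fun N : ℕ => ∑ p ∈ range N ×ˢ range N, f p) atTop (nhds (∑' p, f p)) := by
  have h : Tendsto (fun N : ℕ => ((range N ×ˢ range N : Finset (ℕ × ℕ)))) atTop atTop := by
    apply tendsto_atTop_finset_of_monotone
    · intro i j hij
      exact Finset.product_subset_product (Finset.range_subset_range.2 hij) (Finset.range_subset_range.2 hij)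
    · intro p
      exact ⟨max p.1 p.2 + 1, Finset.mem_product.2
        ⟨mem_range.2 (by omega), mem_range.2 (by omega)⟩⟩
  exact hf.hasSum.comp h

lemma zeta2_eq {a b : ℕ} (ha : 1 ≤ a) (hsum : Summable (F a b)) :
    zeta2 a b = D a b := by
  refine plim_eq ?_
  have h1 := (tendsto_square hsum).comp (tendsto_add_atTop_nat 1)
  refine h1.congr fun N => ?_
  show ∑ p ∈ range (N + 1) ×ˢ range (N + 1), F a b p
      = ∑ k₂ ∈ Ico 1 (N + 1), ∑ k₁ ∈ Ico 1 k₂, 1 / ((k₁ : ℝ) ^ a * (k₂ : ℝ) ^ b)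
  rw [Finset.sum_product, Finset.sum_comm]
  rw [← Finset.sum_subset (s₁ := Ico 1 (N+1)) (by intro k hk; simp only [mem_Ico, mem_range] at hk ⊢; omega)
      (by
        intro k hk hk'
        have : k = 0 := by simp only [mem_Ico, mem_range] at hk hk'; omega
        subst this
        apply Finset.sum_eq_zero
        intro k1 _
        simp [F])]
  refine Finset.sum_congr rfl fun k2 hk2 => ?_
  simp only [mem_Ico] at hk2
  rw [← Finset.sum_subset (s₁ := Ico 1 k2)
      (by intro k hk; simp only [mem_Ico, mem_range] at hk ⊢; omega)
      (by
        intro k1 hk1 hk1'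
        simp only [mem_Ico, mem_range] at hk1 hk1'
        rcases Nat.eq_zero_or_pos k1 with h0 | h1
        · subst h0
          simp [F, zero_pow (by omega : a ≠ 0)]
        · have : ¬ (k1 < k2) := by omega
          simp [F, this])]
  refine Finset.sum_congr rfl fun k1 hk1 => ?_
  simp only [mem_Ico] at hk1
  simp [F, hk1.2]



noncomputable def H (t : ℕ) : ℝ := ∑ j ∈ range t, 1 / ((j : ℝ) + 1)

lemma H_nonneg (t : ℕ) : 0 ≤ H t := by
  unfold H; positivity

lemma H_le (t : ℕ) : H t ≤ t := by
  unfold H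
  calc ∑ j ∈ range t, 1 / ((j : ℝ) + 1) ≤ ∑ j ∈ range t, 1 := by
        apply Finset.sum_le_sum
        intro j _
        rw [div_le_one (by positivity)]
        have : (0:ℝ) ≤ (j:ℝ) := Nat.cast_nonneg j
        linarith
    _ = t := by simp

lemma summable_shift1 {s : ℕ} (hs : 2 ≤ s) :
    Summable (fun d : ℕ => 1 / ((d : ℝ) + 1) ^ s) := by
  have h := (summable_nat_add_iff 1).2 (summable_Z hs)
  apply h.congr
  intro d
  push_cast
  ring_nf

lemma summable_shift2 {s : ℕ} (hs : 2 ≤ s) :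
    Summable (fun d : ℕ => 1 / ((d : ℝ) + 2) ^ s) := by
  have h := (summable_nat_add_iff 2).2 (summable_Z hs)
  apply h.congr
  intro d
  push_cast
  ring_nf

lemma summable_tele (t : ℕ) :
    Summable (fun d : ℕ => 1 / ((d : ℝ) + 1) - 1 / ((d : ℝ) + 1 + t)) := by
  have hb : Summable (fun d : ℕ => (t : ℝ) * (1 / ((d : ℝ) + 1) ^ 2)) :=
    (summable_shift1 (le_refl 2)).mul_left _
  refine Summable.of_nonneg_of_le (fun d => ?_) (fun d => ?_) hb
  · have h1 : (0:ℝ) < (d : ℝ) + 1 := by positivity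
    have h2 : (d : ℝ) + 1 ≤ (d : ℝ) + 1 + t := by
      have : (0:ℝ) ≤ (t:ℝ) := Nat.cast_nonneg t
      linarith
    have := one_div_le_one_div_of_le h1 h2
    linarith
  · have h1 : (0:ℝ) < (d : ℝ) + 1 := by positivity
    have h3 : (0:ℝ) < (d : ℝ) + 1 + t := by positivity
    have key : 1 / ((d : ℝ) + 1) - 1 / ((d : ℝ) + 1 + t)
        = (t : ℝ) / (((d : ℝ) + 1) * ((d : ℝ) + 1 + t)) := by
      field_simp
      try ring
    rw [key]
    have h4 : ((d : ℝ) + 1) ^ 2 ≤ ((d : ℝ) + 1) * ((d : ℝ) + 1 + t) := by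
      rw [pow_two]
      have : (0:ℝ) ≤ (t:ℝ) := Nat.cast_nonneg t
      nlinarith
    calc (t : ℝ) / (((d : ℝ) + 1) * ((d : ℝ) + 1 + t))
        ≤ (t : ℝ) / ((d : ℝ) + 1) ^ 2 := by
          apply div_le_div_of_nonneg_left _ (by positivity) h4
          positivity
      _ = (t : ℝ) * (1 / ((d : ℝ) + 1) ^ 2) := by rw [mul_one_div]

lemma tele_eq (t : ℕ) :
    ∑' d : ℕ, (1 / ((d : ℝ) + 1) - 1 / ((d : ℝ) + 1 + t)) = H t := by
  have hs := summable_tele t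
  refine tendsto_nhds_unique hs.hasSum.tendsto_sum_nat ?_
  set f : ℕ → ℝ := fun j => 1 / ((j : ℝ) + 1) with hf_def
  have key : ∀ N, ∑ d ∈ range N, (1 / ((d : ℝ) + 1) - 1 / ((d : ℝ) + 1 + t))
      = H t - ∑ j ∈ range t, f (N + j) := by
    intro N
    rw [Finset.sum_sub_distrib]
    have e1 : ∑ d ∈ range N, (1 / ((d : ℝ) + 1 + t)) = ∑ d ∈ range N, f (t + d) := by
      refine Finset.sum_congr rfl fun d _ => ?_
      simp only [hf_def]
      push_cast
      ring_nf
    rw [e1]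
    have e2 := Finset.sum_range_add f N t
    have e3 := Finset.sum_range_add f t N
    have e4 : N + t = t + N := by omega
    rw [e4, e3] at e2
    have hH : H t = ∑ j ∈ range t, f j := rfl
    have hN : ∑ d ∈ range N, (1 / ((d : ℝ) + 1)) = ∑ j ∈ range N, f j := rfl
    rw [hH, hN]
    linarith [e2]
  have h0 : Tendsto (fun N => ∑ j ∈ range t, f (N + j)) atTop (nhds 0) := by
    have hz : (0:ℝ) = ∑ _j ∈ range t, (0:ℝ) := by simp
    rw [hz]
    apply tendsto_finset_sum
    intro j _
    have hbase : Tendsto (fun n : ℕ => 1 / ((n : ℝ) + 1)) atTop (nhds 0) :=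
      tendsto_one_div_add_atTop_nhds_zero_nat
    have hcomp := hbase.comp (tendsto_add_atTop_nat j)
    apply hcomp.congr
    intro N
    simp only [Function.comp, hf_def]
    try push_cast
    try ring_nf
  have hfin := (tendsto_const_nhds (x := H t) (f := atTop (α := ℕ))).sub h0
  rw [sub_zero] at hfin
  exact Tendsto.congr (fun N => (key N).symm) hfin

lemma stuffle {a b : ℕ} (ha : 2 ≤ a) (hb : 2 ≤ b) :
    Z a * Z b = D a b + D b a + Z (a + b) := by
  classical
  have hf := summable_Z ha
  have hg := summable_Z hb
  have hprod : Summable (fun p : ℕ × ℕ => (1 / (p.1 : ℝ) ^ a) * (1 / (p.2 : ℝ) ^ b)) :=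
    summable_prod_pow ha hb
  have hmul : ∑' p : ℕ × ℕ, (1 / (p.1 : ℝ) ^ a) * (1 / (p.2 : ℝ) ^ b) = Z a * Z b :=
    (hf.hasSum.mul_eq hg.hasSum hprod.hasSum).symm
  set dg : ℕ × ℕ → ℝ := fun p => if p.1 = p.2 then (1 / (p.1 : ℝ) ^ a) * (1 / (p.2 : ℝ) ^ b) else 0
    with hdg_def
  have hdg : Summable dg := by
    apply hprod.of_nonneg_of_le
    · intro p; simp only [hdg_def]; split <;> positivity
    · intro p; simp only [hdg_def]; split
      · exact le_rfl
      · positivity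
  have hFab : Summable (F a b) := summable_F (by omega) hb (by omega)
  have hFba : Summable (F b a) := summable_F (by omega) ha (by omega)
  have hswap : Summable (fun p : ℕ × ℕ => F b a (p.2, p.1)) := by
    have := ((Equiv.prodComm ℕ ℕ).summable_iff (f := F b a)).2 hFba
    exact this
  have key : ∀ p : ℕ × ℕ, (1 / (p.1 : ℝ) ^ a) * (1 / (p.2 : ℝ) ^ b)
      = F a b p + ((fun p : ℕ × ℕ => F b a (p.2, p.1)) p + dg p) := by
    rintro ⟨k1, k2⟩
    simp only [F, hdg_def]
    rcases lt_trichotomy k1 k2 with h | h | h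
    · rw [if_pos h, if_neg (by omega : ¬ k2 < k1), if_neg (by omega : ¬ k1 = k2)]
      rw [one_div_mul_one_div]; ring
    · subst h
      rw [if_neg (by omega), if_neg (by omega), if_pos rfl]; ring
    · rw [if_neg (by omega : ¬ k1 < k2), if_pos h, if_neg (by omega : ¬ k1 = k2)]
      rw [one_div_mul_one_div]; ring
  have hsplit : ∑' p : ℕ × ℕ, (1 / (p.1 : ℝ) ^ a) * (1 / (p.2 : ℝ) ^ b)
      = D a b + (∑' p : ℕ × ℕ, F b a (p.2, p.1) + ∑' p, dg p) := by
    rw [tsum_congr key, Summable.tsum_add hFab (hswap.add hdg), Summable.tsum_add hswap hdg]; rfl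
  have hswap_eq : ∑' p : ℕ × ℕ, F b a (p.2, p.1) = D b a := by
    have := (Equiv.prodComm ℕ ℕ).tsum_eq (F b a)
    exact this
  have hdiag_eq : ∑' p, dg p = Z (a + b) := by
    have hinj : Function.Injective (fun k : ℕ => ((k, k) : ℕ × ℕ)) := by
      intro x y hxy; simpa using congrArg Prod.fst hxy
    have h0 : ∀ x ∉ Set.range (fun k : ℕ => ((k, k) : ℕ × ℕ)), dg x = 0 := by
      rintro ⟨k1, k2⟩ hx
      have : ¬ k1 = k2 := by
        intro h; subst h; exact hx ⟨k1, rfl⟩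
      simp [hdg_def, this]
    have := hinj.tsum_eq (Function.support_subset_iff'.2 h0)
    rw [← this]
    unfold Z
    apply tsum_congr
    intro k
    simp only [hdg_def, if_pos rfl]
    rw [one_div_mul_one_div, ← pow_add]
  rw [← hmul, hsplit, hswap_eq, hdiag_eq]; ring

noncomputable def G (r : ℕ) : ℕ × ℕ → ℝ := fun p =>
  if 1 ≤ p.1 ∧ p.1 < p.2 then
    1 / ((p.2 : ℝ) * ((p.2 : ℝ) - (p.1 : ℝ))) * (1 / (p.1 : ℝ) ^ (r + 2) - 1 / (p.2 : ℝ) ^ (r + 2))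
  else 0

lemma geom (m : ℕ) (x y : ℝ) :
    (y - x) * ∑ ℓ ∈ range m, x ^ (ℓ + 1) * y ^ (m + 1 - ℓ) = x * y ^ 2 * (y ^ m - x ^ m) := by
  induction m with
  | zero => simp
  | succ m ih =>
    rw [Finset.sum_range_succ]
    have e1 : ∀ ℓ ∈ range m, x ^ (ℓ + 1) * y ^ (m + 1 + 1 - ℓ) = y * (x ^ (ℓ + 1) * y ^ (m + 1 - ℓ)) := by
      intro ℓ hℓ
      rw [mem_range] at hℓ
      have : m + 1 + 1 - ℓ = (m + 1 - ℓ) + 1 := by omega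
      rw [this, pow_succ]
      ring
    rw [Finset.sum_congr rfl e1, ← Finset.mul_sum]
    have e2 : m + 1 + 1 - m = 2 := by omega
    rw [e2]
    linear_combination y * ih

lemma Fsum_eq (r : ℕ) (p : ℕ × ℕ) :
    ∑ ℓ ∈ range (r + 2), F (ℓ + 1) (r + 3 - ℓ) p = G r p := by
  obtain ⟨k1, k2⟩ := p
  by_cases h : 1 ≤ k1 ∧ k1 < k2
  · obtain ⟨h1, h2⟩ := h
    have hk1 : (0:ℝ) < (k1 : ℝ) := by exact_mod_cast h1
    have hk2 : (0:ℝ) < (k2 : ℝ) := by exact_mod_cast (by omega : 0 < k2)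
    have hlt : (k1 : ℝ) < (k2 : ℝ) := by exact_mod_cast h2
    set x : ℝ := 1 / (k1 : ℝ) with hx
    set y : ℝ := 1 / (k2 : ℝ) with hy
    have hterm : ∀ ℓ ∈ range (r + 2),
        F (ℓ + 1) (r + 3 - ℓ) (k1, k2) = x ^ (ℓ + 1) * y ^ (r + 2 + 1 - ℓ) := by
      intro ℓ hℓ
      rw [mem_range] at hℓ
      show (if k1 < k2 then 1 / ((k1 : ℝ) ^ (ℓ+1) * (k2 : ℝ) ^ (r + 3 - ℓ)) else 0) = _
      rw [if_pos h2, hx, hy, div_pow, div_pow, one_pow, one_pow]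
      have : r + 2 + 1 - ℓ = r + 3 - ℓ := by omega
      rw [this, div_mul_div_comm, one_mul]
    rw [Finset.sum_congr rfl hterm]
    have hG : G r (k1, k2)
        = 1 / ((k2 : ℝ) * ((k2 : ℝ) - (k1 : ℝ))) * (1 / (k1 : ℝ) ^ (r + 2) - 1 / (k2 : ℝ) ^ (r + 2)) := by
      unfold G
      rw [if_pos ⟨h1, h2⟩]
    rw [hG]
    have hyx : y - x ≠ 0 := by
      rw [hx, hy]
      have : 1 / (k2:ℝ) < 1 / (k1:ℝ) := one_div_lt_one_div_of_lt hk1 hlt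
      intro hc
      rw [sub_eq_zero] at hc
      rw [hc] at this
      exact lt_irrefl _ this
    apply mul_left_cancel₀ hyx
    rw [geom (r + 2) x y]
    rw [hx, hy]
    have hne1 : (k1:ℝ) ≠ 0 := ne_of_gt hk1
    have hne2 : (k2:ℝ) ≠ 0 := ne_of_gt hk2
    have hne3 : (k2:ℝ) - (k1:ℝ) ≠ 0 := ne_of_gt (by linarith)
    simp only [one_div, inv_pow]
    field_simp
    ring
  · have hG : G r (k1, k2) = 0 := by
      unfold G
      rw [if_neg h]
    rw [hG]
    apply Finset.sum_eq_zero
    intro ℓ _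
    show (if k1 < k2 then 1 / ((k1 : ℝ) ^ (ℓ+1) * (k2 : ℝ) ^ (r + 3 - ℓ)) else 0) = 0
    by_cases hlt : k1 < k2
    · rw [if_pos hlt]
      have hk10 : k1 = 0 := by omega
      subst hk10
      simp [zero_pow (by omega : ℓ + 1 ≠ 0)]
    · rw [if_neg hlt]


noncomputable def P (r : ℕ) : ℕ × ℕ → ℝ := fun q =>
  (1 / ((q.1 : ℝ) + 1) ^ (r + 3)) * (1 / ((q.2 : ℝ) + 1) - 1 / ((q.2 : ℝ) + 1 + ((q.1 : ℝ) + 1)))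

noncomputable def Q (r : ℕ) : ℕ × ℕ → ℝ := fun q =>
  1 / (((q.2 : ℝ) + 1) * ((q.1 : ℝ) + (q.2 : ℝ) + 2) ^ (r + 3))

noncomputable def W (r : ℕ) : ℕ × ℕ → ℝ := fun q =>
  if q.2 < q.1 + 1 then 1 / (((q.2 : ℝ) + 1) * ((q.1 : ℝ) + 2) ^ (r + 3)) else 0

set_option maxHeartbeats 1000000 in
lemma summable_B (r : ℕ) :
    Summable (fun q : ℕ × ℕ => (1 / ((q.1 : ℝ) + 1) ^ (r + 2)) * (1 / ((q.2 : ℝ) + 1) ^ 2)) :=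
  Summable.mul_of_nonneg (f := fun m : ℕ => 1 / ((m : ℝ) + 1) ^ (r + 2))
    (g := fun d : ℕ => 1 / ((d : ℝ) + 1) ^ 2)
    (summable_shift1 (by omega)) (summable_shift1 le_rfl)
    (fun m => by positivity) (fun d => by positivity)

lemma summable_P (r : ℕ) : Summable (P r) := by
  refine Summable.of_nonneg_of_le (fun q => ?_) (fun q => ?_) (summable_B r)
  · obtain ⟨m, d⟩ := q
    unfold P
    have h2 : (0:ℝ) ≤ (m:ℝ) + 1 := by positivity
    have h3 : (0:ℝ) < (d:ℝ) + 1 := by positivity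
    have h4 : (d:ℝ) + 1 ≤ (d:ℝ) + 1 + ((m:ℝ)+1) := by linarith
    have := one_div_le_one_div_of_le h3 h4
    have hc : (0:ℝ) ≤ 1 / ((m : ℝ) + 1) ^ (r + 3) := by positivity
    apply mul_nonneg hc
    linarith
  · obtain ⟨m, d⟩ := q
    unfold P
    set M : ℝ := (m:ℝ) + 1 with hM
    set D : ℝ := (d:ℝ) + 1 with hD
    have hM0 : (0:ℝ) < M := by rw [hM]; positivity
    have hD0 : (0:ℝ) < D := by rw [hD]; positivity
    have hdiff : 1 / D - 1 / (D + M) ≤ M / D ^ 2 := by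
      have key : 1 / D - 1 / (D + M) = M / (D * (D + M)) := by
        field_simp
        ring
      rw [key]
      apply div_le_div_of_nonneg_left _ (by positivity) _
      · linarith
      · nlinarith
    calc (1 / M ^ (r+3)) * (1 / D - 1 / (D + M))
        ≤ (1 / M ^ (r+3)) * (M / D ^ 2) := by
          apply mul_le_mul_of_nonneg_left hdiff (by positivity)
      _ = (1 / M ^ (r+2)) * (1 / D ^ 2) := by
          have hMne : M ≠ 0 := ne_of_gt hM0
          have hDne : D ≠ 0 := ne_of_gt hD0
          field_simp
          ring
lemma summable_Q (r : ℕ) : Summable (Q r) := by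
  refine Summable.of_nonneg_of_le (fun q => ?_) (fun q => ?_) (summable_B r)
  · obtain ⟨m, d⟩ := q; unfold Q; positivity
  · obtain ⟨m, d⟩ := q
    unfold Q
    set M : ℝ := (m:ℝ) + 1 with hM
    set D : ℝ := (d:ℝ) + 1 with hD
    have hK : (m:ℝ) + (d:ℝ) + 2 = M + D := by rw [hM, hD]; ring
    rw [hK]
    have hM0 : (0:ℝ) < M := by rw [hM]; positivity
    have hD0 : (0:ℝ) < D := by rw [hD]; positivity
    rw [div_mul_div_comm, one_mul]
    apply one_div_le_one_div_of_le (by positivity)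
    have h1 : M ^ (r+2) ≤ (M + D) ^ (r+2) := by
      apply pow_le_pow_left₀ (le_of_lt hM0)
      linarith
    have h2 : D ≤ M + D := by linarith
    calc M ^ (r+2) * D ^ 2 = M ^ (r+2) * (D * D) := by ring
      _ ≤ (M + D) ^ (r+2) * ((M + D) * D) := by
          apply mul_le_mul h1 (by nlinarith) (by positivity) (by positivity)
      _ = D * (M + D) ^ (r+3) := by rw [pow_succ]; ring

lemma sumP_eq (r : ℕ) :
    ∑' q : ℕ × ℕ, P r q = ∑' m : ℕ, (1 / ((m : ℝ) + 1) ^ (r + 3)) * H (m + 1) := by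
  rw [Summable.tsum_prod' (summable_P r) (fun m => ?_)]
  · apply tsum_congr
    intro m
    have hcast : ∀ d : ℕ, P r (m, d)
        = (1 / ((m : ℝ) + 1) ^ (r + 3)) * (1 / ((d:ℝ) + 1) - 1 / ((d:ℝ) + 1 + ((m+1 : ℕ) : ℝ))) := by
      intro d; unfold P; push_cast; ring_nf
    rw [tsum_congr hcast, tsum_mul_left, tele_eq (m+1)]
  · apply Summable.congr (((summable_tele (m+1)).mul_left (1 / ((m : ℝ) + 1) ^ (r + 3))))
    intro d
    unfold P; push_cast; ring_nf

lemma sumQ_eq_W (r : ℕ) : ∑' q : ℕ × ℕ, Q r q = ∑' q : ℕ × ℕ, W r q := by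
  have hinj : Function.Injective (fun q : ℕ × ℕ => ((q.1 + q.2, q.2) : ℕ × ℕ)) := by
    rintro ⟨a, b⟩ ⟨c, d⟩ h
    simp only [Prod.mk.injEq] at h ⊢
    omega
  have hzero : ∀ x ∉ Set.range (fun q : ℕ × ℕ => ((q.1 + q.2, q.2) : ℕ × ℕ)), W r x = 0 := by
    rintro ⟨k, d⟩ hk
    by_cases hc : d < k + 1
    · exact absurd ⟨(k - d, d), by simp; omega⟩ hk
    · unfold W
      rw [if_neg hc]
  have hsupp : Function.support (W r) ⊆ Set.range (fun q : ℕ × ℕ => ((q.1 + q.2, q.2) : ℕ × ℕ)) :=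
    Function.support_subset_iff'.2 hzero
  have heq := hinj.tsum_eq (f := W r) hsupp
  rw [← heq]
  apply tsum_congr
  intro q
  obtain ⟨m, d⟩ := q
  show Q r (m, d) = W r (m + d, d)
  unfold W Q
  rw [if_pos (by omega)]
  push_cast
  try ring_nf

lemma summable_W (r : ℕ) : Summable (W r) := by
  have hinj : Function.Injective (fun q : ℕ × ℕ => ((q.1 + q.2, q.2) : ℕ × ℕ)) := by
    rintro ⟨a, b⟩ ⟨c, d⟩ h
    simp only [Prod.mk.injEq] at h ⊢
    omega
  have hzero : ∀ x ∉ Set.range (fun q : ℕ × ℕ => ((q.1 + q.2, q.2) : ℕ × ℕ)), W r x = 0 := by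
    rintro ⟨k, d⟩ hk
    by_cases hc : d < k + 1
    · exact absurd ⟨(k - d, d), by simp; omega⟩ hk
    · unfold W
      rw [if_neg hc]
  have hsupp : Function.support (W r) ⊆ Set.range (fun q : ℕ × ℕ => ((q.1 + q.2, q.2) : ℕ × ℕ)) :=
    Function.support_subset_iff'.2 hzero
  rw [← hinj.summable_iff hzero]
  apply Summable.congr (summable_Q r)
  intro q
  obtain ⟨m, d⟩ := q
  show Q r (m, d) = W r (m + d, d)
  unfold W Q
  rw [if_pos (by omega)]
  push_cast
  try ring_nf

lemma sumW_eq (r : ℕ) :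
    ∑' q : ℕ × ℕ, W r q = ∑' k : ℕ, (1 / ((k : ℝ) + 2) ^ (r + 3)) * H (k + 1) := by
  rw [Summable.tsum_prod' (summable_W r) (fun k => ?_)]
  · apply tsum_congr
    intro k
    have hfin : ∀ d : ℕ, d ∉ range (k + 1) → W r (k, d) = 0 := by
      intro d hd
      rw [mem_range] at hd
      unfold W
      rw [if_neg (by omega)]
    rw [tsum_eq_sum hfin]
    unfold H
    rw [Finset.mul_sum]
    apply Finset.sum_congr rfl
    intro d hd
    rw [mem_range] at hd
    unfold W
    rw [if_pos (by omega)]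
    rw [div_mul_div_comm, one_mul, mul_comm (((k:ℝ)+2)^(r+3))]
    try rw [one_div_mul_one_div]
  · apply summable_of_ne_finset_zero (s := range (k + 1))
    intro d hd
    rw [mem_range] at hd
    show W r (k, d) = 0
    unfold W
    rw [if_neg (by omega)]

lemma sumQW_eq (r : ℕ) :
    ∑' q : ℕ × ℕ, Q r q = ∑' k : ℕ, (1 / ((k : ℝ) + 2) ^ (r + 3)) * H (k + 1) :=
  (sumQ_eq_W r).trans (sumW_eq r)
lemma summable_cH1 (r : ℕ) : Summable (fun m : ℕ => (1 / ((m : ℝ) + 1) ^ (r + 3)) * H (m + 1)) := by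
  refine Summable.of_nonneg_of_le (fun m => ?_) (fun m => ?_) (summable_shift1 (s := r + 2) (by omega))
  · exact mul_nonneg (by positivity) (H_nonneg _)
  · have h1 : H (m + 1) ≤ ((m : ℝ) + 1) := by
      have := H_le (m + 1); push_cast at this; linarith
    have h2 : (0:ℝ) < (m : ℝ) + 1 := by positivity
    calc (1 / ((m : ℝ) + 1) ^ (r + 3)) * H (m + 1)
        ≤ (1 / ((m : ℝ) + 1) ^ (r + 3)) * ((m : ℝ) + 1) :=
          mul_le_mul_of_nonneg_left h1 (by positivity)
      _ = 1 / ((m : ℝ) + 1) ^ (r + 2) := by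
          rw [div_mul_eq_mul_div, one_mul, pow_succ, mul_comm, ← div_div,
            div_self (ne_of_gt h2)]

lemma summable_cH2a (r : ℕ) : Summable (fun k : ℕ => (1 / ((k : ℝ) + 2) ^ (r + 3)) * H (k + 1)) := by
  refine Summable.of_nonneg_of_le (fun k => ?_) (fun k => ?_) (summable_shift2 (s := r + 2) (by omega))
  · exact mul_nonneg (by positivity) (H_nonneg _)
  · have h1 : H (k + 1) ≤ ((k : ℝ) + 2) := by
      have := H_le (k + 1); push_cast at this; linarith
    have h2 : (0:ℝ) < (k : ℝ) + 2 := by positivity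
    calc (1 / ((k : ℝ) + 2) ^ (r + 3)) * H (k + 1)
        ≤ (1 / ((k : ℝ) + 2) ^ (r + 3)) * ((k : ℝ) + 2) :=
          mul_le_mul_of_nonneg_left h1 (by positivity)
      _ = 1 / ((k : ℝ) + 2) ^ (r + 2) := by
          rw [div_mul_eq_mul_div, one_mul, pow_succ, mul_comm, ← div_div,
            div_self (ne_of_gt h2)]

lemma summable_cH2b (r : ℕ) : Summable (fun k : ℕ => (1 / ((k : ℝ) + 2) ^ (r + 3)) * H (k + 2)) := by
  refine Summable.of_nonneg_of_le (fun k => ?_) (fun k => ?_) (summable_shift2 (s := r + 2) (by omega))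
  · exact mul_nonneg (by positivity) (H_nonneg _)
  · have h1 : H (k + 2) ≤ ((k : ℝ) + 2) := by
      have := H_le (k + 2); push_cast at this; linarith
    have h2 : (0:ℝ) < (k : ℝ) + 2 := by positivity
    calc (1 / ((k : ℝ) + 2) ^ (r + 3)) * H (k + 2)
        ≤ (1 / ((k : ℝ) + 2) ^ (r + 3)) * ((k : ℝ) + 2) :=
          mul_le_mul_of_nonneg_left h1 (by positivity)
      _ = 1 / ((k : ℝ) + 2) ^ (r + 2) := by
          rw [div_mul_eq_mul_div, one_mul, pow_succ, mul_comm, ← div_div,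
            div_self (ne_of_gt h2)]

lemma sum_theorem (r : ℕ) :
    ∑ ℓ ∈ range (r + 2), D (ℓ + 1) (r + 3 - ℓ) = Z (r + 4) := by
  have hsumF : ∀ ℓ ∈ range (r + 2), Summable (F (ℓ + 1) (r + 3 - ℓ)) := by
    intro ℓ hℓ
    rw [mem_range] at hℓ
    exact summable_F (by omega) (by omega) (by omega)
  have step1 : ∑ ℓ ∈ range (r + 2), D (ℓ + 1) (r + 3 - ℓ)
      = ∑' p : ℕ × ℕ, ∑ ℓ ∈ range (r + 2), F (ℓ + 1) (r + 3 - ℓ) p :=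
    (Summable.tsum_finsetSum hsumF).symm
  have step2 : ∑' p : ℕ × ℕ, ∑ ℓ ∈ range (r + 2), F (ℓ + 1) (r + 3 - ℓ) p
      = ∑' p : ℕ × ℕ, G r p := tsum_congr (Fsum_eq r)
  -- change of variables
  have hinj : Function.Injective (fun q : ℕ × ℕ => ((q.1 + 1, q.1 + q.2 + 2) : ℕ × ℕ)) := by
    rintro ⟨a, b⟩ ⟨c, d⟩ h
    simp only [Prod.mk.injEq] at h ⊢
    omega
  have hzero : ∀ x ∉ Set.range (fun q : ℕ × ℕ => ((q.1 + 1, q.1 + q.2 + 2) : ℕ × ℕ)),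
      G r x = 0 := by
    rintro ⟨k1, k2⟩ hk
    by_cases hc : 1 ≤ k1 ∧ k1 < k2
    · exact absurd ⟨(k1 - 1, k2 - k1 - 1), by simp; omega⟩ hk
    · unfold G
      rw [if_neg hc]
  have heq := hinj.tsum_eq (f := G r) (Function.support_subset_iff'.2 hzero)
  have step3 : ∑' p : ℕ × ℕ, G r p = ∑' q : ℕ × ℕ, (P r q - Q r q) := by
    rw [← heq]
    apply tsum_congr
    intro q
    obtain ⟨m, d⟩ := q
    show G r (m + 1, m + d + 2) = P r (m, d) - Q r (m, d)
    unfold G P Q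
    rw [if_pos (by constructor <;> simp <;> omega)]
    have hc1 : ((m + 1 : ℕ) : ℝ) = (m : ℝ) + 1 := by push_cast; ring
    have hc2 : ((m + d + 2 : ℕ) : ℝ) = (m : ℝ) + (d : ℝ) + 2 := by push_cast; ring
    rw [hc1, hc2]
    have hsub : (m : ℝ) + (d : ℝ) + 2 - ((m : ℝ) + 1) = (d : ℝ) + 1 := by ring
    rw [hsub]
    have h1 : ((m:ℝ) + 1) ≠ 0 := by positivity
    have h2 : ((d:ℝ) + 1) ≠ 0 := by positivity
    have h3 : ((m:ℝ) + (d:ℝ) + 2) ≠ 0 := by positivity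
    have h4 : ((d:ℝ) + 1 + ((m:ℝ) + 1)) = (m:ℝ) + (d:ℝ) + 2 := by ring
    rw [h4]
    field_simp
    ring
  have step4 : ∑' q : ℕ × ℕ, (P r q - Q r q)
      = (∑' q : ℕ × ℕ, P r q) - ∑' q : ℕ × ℕ, Q r q :=
    Summable.tsum_sub (summable_P r) (summable_Q r)
  rw [step1, step2, step3, step4, sumP_eq, sumQW_eq]
  -- now pure ℕ-indexed computation
  have hH1 : H 1 = 1 := by unfold H; simp
  have hshiftA : ∑' m : ℕ, (1 / ((m : ℝ) + 1) ^ (r + 3)) * H (m + 1)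
      = 1 + ∑' k : ℕ, (1 / ((k : ℝ) + 2) ^ (r + 3)) * H (k + 2) := by
    rw [Summable.tsum_eq_zero_add (summable_cH1 r)]
    congr 1
    · simp [hH1]
    · apply tsum_congr
      intro k
      have : ((k + 1 : ℕ) : ℝ) = (k : ℝ) + 1 := by push_cast; ring
      rw [this]
      ring_nf
  rw [hshiftA]
  have hdiff : ∀ k : ℕ, (1 / ((k : ℝ) + 2) ^ (r + 3)) * H (k + 2)
      - (1 / ((k : ℝ) + 2) ^ (r + 3)) * H (k + 1) = 1 / ((k : ℝ) + 2) ^ (r + 4) := by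
    intro k
    have hHstep : H (k + 2) = H (k + 1) + 1 / ((k : ℝ) + 2) := by
      unfold H
      rw [Finset.sum_range_succ]
      congr 1
      push_cast
      ring
    rw [hHstep]
    have h2 : (0:ℝ) < (k : ℝ) + 2 := by positivity
    field_simp
    ring
  have hcombine : 1 + (∑' k : ℕ, (1 / ((k : ℝ) + 2) ^ (r + 3)) * H (k + 2))
      - (∑' k : ℕ, (1 / ((k : ℝ) + 2) ^ (r + 3)) * H (k + 1))
      = 1 + ∑' k : ℕ, 1 / ((k : ℝ) + 2) ^ (r + 4) := by
    rw [add_sub_assoc, ← Summable.tsum_sub (summable_cH2b r) (summable_cH2a r), tsum_congr hdiff]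
  rw [hcombine]
  -- compute Z (r+4)
  unfold Z
  rw [Summable.tsum_eq_zero_add (summable_Z (s := r + 4) (by omega))]
  have hz0 : (1 : ℝ) / ((0 : ℕ) : ℝ) ^ (r + 4) = 0 := by
    simp [zero_pow (by omega : r + 4 ≠ 0)]
  rw [hz0, zero_add]
  have hcongr1 : ∀ k : ℕ, (1 : ℝ) / ((k + 1 : ℕ) : ℝ) ^ (r + 4) = 1 / ((k : ℝ) + 1) ^ (r + 4) := by
    intro k; push_cast; ring_nf
  rw [tsum_congr hcongr1]
  rw [Summable.tsum_eq_zero_add (summable_shift1 (s := r + 4) (by omega))]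
  have hone : (1 : ℝ) / (((0 : ℕ) : ℝ) + 1) ^ (r + 4) = 1 := by norm_num
  rw [hone]
  congr 1
  apply tsum_congr
  intro k
  push_cast
  ring_nf

end EulerEval

theorem euler_evaluation (r : ℕ) :
    zeta2 1 (r + 3) =
      ((r : ℝ) + 3) / 2 * zetaV (r + 4) -
        1 / 2 * ∑ ℓ ∈ Finset.range (r + 1), zetaV (ℓ + 2) * zetaV (r - ℓ + 2) := by
  have hD1 : zeta2 1 (r + 3) = EulerEval.D 1 (r + 3) :=
    EulerEval.zeta2_eq le_rfl (EulerEval.summable_F (by omega) (by omega) (by omega))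
  have hzV : zetaV (r + 4) = EulerEval.Z (r + 4) := EulerEval.zetaV_eq (by omega)
  -- the product sum
  have hS : ∑ ℓ ∈ Finset.range (r + 1), zetaV (ℓ + 2) * zetaV (r - ℓ + 2)
      = ∑ ℓ ∈ Finset.range (r + 1), (EulerEval.D (ℓ + 2) (r - ℓ + 2) + EulerEval.D (r - ℓ + 2) (ℓ + 2) + EulerEval.Z (r + 4)) := by
    apply Finset.sum_congr rfl
    intro ℓ hℓ
    rw [Finset.mem_range] at hℓ
    rw [EulerEval.zetaV_eq (by omega), EulerEval.zetaV_eq (by omega), EulerEval.stuffle (by omega) (by omega)]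
    have : (ℓ + 2) + (r - ℓ + 2) = r + 4 := by omega
    rw [this]
  -- U' = U by reflection
  have hrefl : ∑ ℓ ∈ Finset.range (r + 1), EulerEval.D (r - ℓ + 2) (ℓ + 2)
      = ∑ ℓ ∈ Finset.range (r + 1), EulerEval.D (ℓ + 2) (r - ℓ + 2) := by
    have := Finset.sum_range_reflect (fun ℓ => EulerEval.D (ℓ + 2) (r - ℓ + 2)) (r + 1)
    rw [← this]
    apply Finset.sum_congr rfl
    intro j hj
    rw [Finset.mem_range] at hj
    have e1 : r + 1 - 1 - j = r - j := by omega
    have e2 : r - (r - j) = j := by omega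
    rw [e1, e2]
  -- sum theorem split
  have hsplit : EulerEval.D 1 (r + 3) + ∑ ℓ ∈ Finset.range (r + 1), EulerEval.D (ℓ + 2) (r - ℓ + 2) = EulerEval.Z (r + 4) := by
    have h := EulerEval.sum_theorem r
    rw [Finset.sum_range_succ'] at h
    have e : ∀ ℓ ∈ Finset.range (r + 1), EulerEval.D (ℓ + 1 + 1) (r + 3 - (ℓ + 1)) = EulerEval.D (ℓ + 2) (r - ℓ + 2) := by
      intro ℓ hℓ
      rw [Finset.mem_range] at hℓ
      have : r + 3 - (ℓ + 1) = r - ℓ + 2 := by omega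
      rw [this]
    rw [Finset.sum_congr rfl e] at h
    have e0 : r + 3 - 0 = r + 3 := by omega
    rw [e0] at h
    linarith [h]
  set U := ∑ ℓ ∈ Finset.range (r + 1), EulerEval.D (ℓ + 2) (r - ℓ + 2) with hU
  have hSval : ∑ ℓ ∈ Finset.range (r + 1), zetaV (ℓ + 2) * zetaV (r - ℓ + 2)
      = 2 * U + ((r : ℝ) + 1) * EulerEval.Z (r + 4) := by
    rw [hS, Finset.sum_add_distrib, Finset.sum_add_distrib, hrefl, Finset.sum_const,
      Finset.card_range]
    push_cast
    ring
  rw [hD1, hzV, hSval]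
  have : EulerEval.D 1 (r + 3) = EulerEval.Z (r + 4) - U := by linarith
  rw [this]
  ring
end

section
/- For any nonnegative integer p, ∑_{α₁+α₂=2p+3} (−1)^{α₁} ζ(α₁, α₂+1) = (1/2)·ζ(2p+4), where the sum is over pairs of positive integers (α₁, α₂) with α₁+α₂ = 2p+3. -/
open Filter

section AWSHelpers

open Filter Finset

private lemma aws_sq_bound (N : ℕ) : ∑ k ∈ Finset.Ico 1 (N+1), 1/(k:ℝ)^2 ≤ 2 := by
  have h : ∀ M : ℕ, 1 ≤ M → ∑ k ∈ Finset.Ico 1 (M+1), 1/(k:ℝ)^2 ≤ 2 - 1/(M:ℝ) := by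
    intro M
    induction M with
    | zero => omega
    | succ n ih =>
      intro _
      rw [Finset.sum_Ico_succ_top (by omega)]
      rcases Nat.eq_zero_or_pos n with hn | hn
      · subst hn; norm_num
      have h1 : (1:ℝ) ≤ (n:ℝ) := by exact_mod_cast hn
      have key : 1/((n:ℝ)+1)^2 ≤ 1/(n:ℝ) - 1/((n:ℝ)+1) := by
        rw [div_sub_div _ _ (by linarith) (by linarith),
          div_le_div_iff₀ (by positivity) (by positivity)]
        nlinarith
      have := ih hn
      push_cast
      push_cast at this
      linarith
  rcases Nat.eq_zero_or_pos N with hN | hN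
  · subst hN; simp
  have h2 : (0:ℝ) < 1/(N:ℝ) := by positivity
  linarith [h N hN]

private lemma aws_pow_bound (s : ℕ) (hs : 2 ≤ s) (N : ℕ) :
    ∑ k ∈ Finset.Ico 1 (N+1), 1/(k:ℝ)^s ≤ 2 := by
  refine le_trans (Finset.sum_le_sum ?_) (aws_sq_bound N)
  intro k hk
  simp only [Finset.mem_Ico] at hk
  have hk1 : (1:ℝ) ≤ (k:ℝ) := by exact_mod_cast hk.1
  apply div_le_div_of_nonneg_left (by norm_num) (by positivity)
  exact pow_le_pow_right₀ hk1 hs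

private lemma aws_geom (p : ℕ) (x y : ℝ) (hx : 0 < x) (hy : 0 < y) :
    ∑ a ∈ Finset.Ico 1 (2*p+3), (-1:ℝ)^a / (x^a * y^(2*p+4-a)) =
      1/(x^(2*p+2) * y * (x+y)) - 1/(y^(2*p+3) * (x+y)) := by
  have hx' := hx.ne'
  have hy' := hy.ne'
  have hxy : x + y ≠ 0 := by positivity
  induction p with
  | zero =>
    norm_num
    rw [Finset.sum_Ico_succ_top (by omega), Finset.sum_Ico_succ_top (by omega)]
    norm_num [Finset.sum_Ico_eq_sum_range]
    field_simp
    ring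
  | succ n ih =>
    have step : ∑ a ∈ Finset.Ico 1 (2*(n+1)+3), (-1:ℝ)^a / (x^a * y^(2*(n+1)+4-a)) =
        (1/y^2) * (∑ a ∈ Finset.Ico 1 (2*n+3), (-1:ℝ)^a / (x^a * y^(2*n+4-a)))
        + (-1:ℝ)^(2*n+3) / (x^(2*n+3) * y^3) + (-1:ℝ)^(2*n+4) / (x^(2*n+4) * y^2) := by
      have h1 : 2*(n+1)+3 = (2*n+4)+1 := by ring
      have h2 : 2*n+4 = (2*n+3)+1 := by ring
      rw [h1, Finset.sum_Ico_succ_top (by omega)]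
      rw [show (2*n+4 : ℕ) = (2*n+3)+1 from rfl, Finset.sum_Ico_succ_top (by omega)]
      rw [Finset.mul_sum]
      congr 1
      · congr 1
        · apply Finset.sum_congr rfl
          intro a ha
          simp only [Finset.mem_Ico] at ha
          rw [show 2*(n+1)+4-a = (2*n+4-a)+2 by omega, pow_add]
          field_simp
        · rw [show 2*(n+1)+4-(2*n+3) = 3 from by omega]
      · rw [show 2*(n+1)+4-(2*n+3+1) = 2 from by omega]
    rw [step, ih]
    have e1 : x^(2*n+3) = x^(2*n+2) * x := by rw [← pow_succ]
    have e2 : x^(2*(n+1)+2) = x^(2*n+2) * x^2 := by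
      rw [show 2*(n+1)+2 = (2*n+2)+2 from by omega, pow_add]
    have e3 : x^(2*n+4) = x^(2*n+2) * x^2 := by rw [← pow_add]
    have e4 : y^(2*(n+1)+3) = y^(2*n+3) * y^2 := by
      rw [show 2*(n+1)+3 = (2*n+3)+2 from by omega, pow_add]
    rw [e1, e2, e3, e4]
    have hpx : x^(2*n+2) ≠ 0 := pow_ne_zero _ hx'
    have hpy : y^(2*n+3) ≠ 0 := pow_ne_zero _ hy'
    have hs : (-1:ℝ)^(2*n+3) = -1 := by simp [pow_succ, pow_mul]
    have hs2 : (-1:ℝ)^(2*n+4) = 1 := by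
      have : 2*n+4 = 2*(n+2) := by ring
      rw [this, pow_mul]; norm_num
    rw [hs, hs2]
    field_simp
    ring

private lemma aws_shift (k a b : ℕ) (f : ℕ → ℝ) :
    ∑ j ∈ Finset.Ico a b, f (k + j) = ∑ m ∈ Finset.Ico (a+k) (b+k), f m := by
  rw [Finset.sum_Ico_eq_sum_range, Finset.sum_Ico_eq_sum_range]
  rw [show b + k - (a + k) = b - a from by omega]
  apply Finset.sum_congr rfl
  intro i _
  congr 1
  omega

private lemma aws_diff (k N : ℕ) (hkN : k ≤ N) (f : ℕ → ℝ) :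
    ∑ m ∈ Finset.Ico (k+1) (N+1), f m - ∑ m ∈ Finset.Ico (2*k+1) (N+k+1), f m
      = ∑ m ∈ Finset.Ico (k+1) (2*k+1), f m - ∑ m ∈ Finset.Ico (N+1) (N+k+1), f m := by
  have h1 : ∑ m ∈ Finset.Ico (k+1) (N+1), f m + ∑ m ∈ Finset.Ico (N+1) (N+k+1), f m
      = ∑ m ∈ Finset.Ico (k+1) (N+k+1), f m :=
    Finset.sum_Ico_consecutive f (by omega) (by omega)
  have h2 : ∑ m ∈ Finset.Ico (k+1) (2*k+1), f m + ∑ m ∈ Finset.Ico (2*k+1) (N+k+1), f m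
      = ∑ m ∈ Finset.Ico (k+1) (N+k+1), f m :=
    Finset.sum_Ico_consecutive f (by omega) (by omega)
  linarith

private lemma aws_key (p N : ℕ) :
    ∑ a ∈ Finset.Ico 1 (2*p+3), (-1:ℝ)^a *
        ∑ k₂ ∈ Finset.Ico 1 (N+1), ∑ k₁ ∈ Finset.Ico 1 k₂,
          1/((k₁:ℝ)^a * (k₂:ℝ)^(2*p+4-a))
      = 1/2 * ∑ k ∈ Finset.Ico 1 (N+1), 1/(k:ℝ)^(2*p+4)
        - ∑ k ∈ Finset.Ico 1 (N+1),
            (1/(k:ℝ)^(2*p+3)) * ∑ m ∈ Finset.Ico (N+1) (N+k+1), 1/(m:ℝ) := by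
  have cpos : ∀ k : ℕ, k ∈ Finset.Ico 1 (N+1) → (0:ℝ) < (k:ℝ) := by
    intro k hk; simp only [Finset.mem_Ico] at hk; exact_mod_cast hk.1
  have step1 : ∑ a ∈ Finset.Ico 1 (2*p+3), (-1:ℝ)^a *
        ∑ k₂ ∈ Finset.Ico 1 (N+1), ∑ k₁ ∈ Finset.Ico 1 k₂,
          1/((k₁:ℝ)^a * (k₂:ℝ)^(2*p+4-a))
      = ∑ k₂ ∈ Finset.Ico 1 (N+1), ∑ k₁ ∈ Finset.Ico 1 k₂,
          (1/((k₁:ℝ)^(2*p+2) * (k₂:ℝ) * ((k₁:ℝ)+(k₂:ℝ)))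
            - 1/((k₂:ℝ)^(2*p+3) * ((k₁:ℝ)+(k₂:ℝ)))) := by
    have e1 : ∑ a ∈ Finset.Ico 1 (2*p+3), (-1:ℝ)^a *
        ∑ k₂ ∈ Finset.Ico 1 (N+1), ∑ k₁ ∈ Finset.Ico 1 k₂,
          1/((k₁:ℝ)^a * (k₂:ℝ)^(2*p+4-a))
        = ∑ a ∈ Finset.Ico 1 (2*p+3), ∑ k₂ ∈ Finset.Ico 1 (N+1),
            ∑ k₁ ∈ Finset.Ico 1 k₂, (-1:ℝ)^a / ((k₁:ℝ)^a * (k₂:ℝ)^(2*p+4-a)) := by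
      apply Finset.sum_congr rfl; intro a _
      rw [Finset.mul_sum]
      apply Finset.sum_congr rfl; intro k₂ _
      rw [Finset.mul_sum]
      apply Finset.sum_congr rfl; intro k₁ _
      rw [mul_one_div]
    rw [e1, Finset.sum_comm]
    apply Finset.sum_congr rfl; intro k₂ hk₂
    rw [Finset.sum_comm]
    apply Finset.sum_congr rfl; intro k₁ hk₁
    have hk₂' : (0:ℝ) < (k₂:ℝ) := cpos k₂ hk₂
    simp only [Finset.mem_Ico] at hk₁
    have hk₁' : (0:ℝ) < (k₁:ℝ) := by exact_mod_cast hk₁.1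
    exact aws_geom p (k₁:ℝ) (k₂:ℝ) hk₁' hk₂'
  rw [step1]; simp only [Finset.sum_sub_distrib]
  have hA : ∑ k₂ ∈ Finset.Ico 1 (N+1), ∑ k₁ ∈ Finset.Ico 1 k₂,
        1/((k₁:ℝ)^(2*p+2) * (k₂:ℝ) * ((k₁:ℝ)+(k₂:ℝ)))
      = ∑ k ∈ Finset.Ico 1 (N+1), (1/(k:ℝ)^(2*p+3)) *
          (∑ m ∈ Finset.Ico (k+1) (2*k+1), 1/(m:ℝ)
            - ∑ m ∈ Finset.Ico (N+1) (N+k+1), 1/(m:ℝ)) := by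
    rw [Finset.sum_comm' (t' := Finset.Ico 1 (N+1))
      (s' := fun k₁ => Finset.Ico (k₁+1) (N+1))
      (by intro x y; simp only [Finset.mem_Ico]; omega)]
    apply Finset.sum_congr rfl; intro k hk
    simp only [Finset.mem_Ico] at hk
    have hk' : (0:ℝ) < (k:ℝ) := by exact_mod_cast hk.1
    have inner1 : ∑ k₂ ∈ Finset.Ico (k+1) (N+1),
          1/((k:ℝ)^(2*p+2) * (k₂:ℝ) * ((k:ℝ)+(k₂:ℝ)))
        = (1/(k:ℝ)^(2*p+3)) * ∑ k₂ ∈ Finset.Ico (k+1) (N+1),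
            (1/(k₂:ℝ) - 1/((k:ℝ)+(k₂:ℝ))) := by
      rw [Finset.mul_sum]
      apply Finset.sum_congr rfl; intro k₂ hk₂
      simp only [Finset.mem_Ico] at hk₂
      have hk₂' : (0:ℝ) < (k₂:ℝ) := by
        have : 0 < k₂ := by omega
        exact_mod_cast this
      have hpk : (k:ℝ)^(2*p+2) ≠ 0 := by positivity
      rw [pow_succ]
      field_simp
      ring
    rw [inner1, Finset.sum_sub_distrib]
    congr 1
    have shft : ∑ k₂ ∈ Finset.Ico (k+1) (N+1), 1/((k:ℝ)+(k₂:ℝ))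
        = ∑ m ∈ Finset.Ico (2*k+1) (N+k+1), 1/(m:ℝ) := by
      have : ∑ k₂ ∈ Finset.Ico (k+1) (N+1), 1/((k:ℝ)+(k₂:ℝ))
          = ∑ j ∈ Finset.Ico (k+1) (N+1), (fun m : ℕ => 1/(m:ℝ)) (k + j) := by
        apply Finset.sum_congr rfl; intro j _
        push_cast; ring_nf
      rw [this, aws_shift k (k+1) (N+1) (fun m : ℕ => 1/(m:ℝ)),
        show k+1+k = 2*k+1 from by omega, show N+1+k = N+k+1 from by omega]
    rw [shft, aws_diff k N (by omega)]
  have hB : ∑ k₂ ∈ Finset.Ico 1 (N+1), ∑ k₁ ∈ Finset.Ico 1 k₂,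
        1/((k₂:ℝ)^(2*p+3) * ((k₁:ℝ)+(k₂:ℝ)))
      = ∑ k ∈ Finset.Ico 1 (N+1), (1/(k:ℝ)^(2*p+3)) *
          ∑ m ∈ Finset.Ico (k+1) (2*k), 1/(m:ℝ) := by
    apply Finset.sum_congr rfl; intro k hk
    have hk' : (0:ℝ) < (k:ℝ) := cpos k hk
    have e : ∑ k₁ ∈ Finset.Ico 1 k, 1/((k:ℝ)^(2*p+3) * ((k₁:ℝ)+(k:ℝ)))
        = (1/(k:ℝ)^(2*p+3)) * ∑ k₁ ∈ Finset.Ico 1 k, (fun m : ℕ => 1/(m:ℝ)) (k + k₁) := by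
      rw [Finset.mul_sum]
      apply Finset.sum_congr rfl; intro k₁ _
      push_cast
      rw [one_div, mul_inv, ← one_div, ← one_div]
      congr 2
      ring
    rw [e, aws_shift k 1 k (fun m : ℕ => 1/(m:ℝ)),
      show 1+k = k+1 from by omega, show k+k = 2*k from by omega]
  rw [hA, hB, ← Finset.sum_sub_distrib]
  rw [Finset.mul_sum, ← Finset.sum_sub_distrib]
  apply Finset.sum_congr rfl; intro k hk
  simp only [Finset.mem_Ico] at hk
  have hk1 : 1 ≤ k := hk.1
  have hk' : (0:ℝ) < (k:ℝ) := by exact_mod_cast hk1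
  have split : ∑ m ∈ Finset.Ico (k+1) (2*k+1), 1/(m:ℝ)
      = ∑ m ∈ Finset.Ico (k+1) (2*k), 1/(m:ℝ) + 1/((2*k:ℕ):ℝ) := by
    rw [Finset.sum_Ico_succ_top (by omega)]
  rw [split]
  have e2 : (1/(k:ℝ)^(2*p+3)) * (1/((2*k:ℕ):ℝ)) = 1/2 * (1/(k:ℝ)^(2*p+4)) := by
    push_cast
    rw [pow_succ]
    field_simp
    ring
  linear_combination e2

private lemma aws_mono_conv (g : ℕ → ℝ) (hm : Monotone g) (C : ℝ) (hb : ∀ N, g N ≤ C) :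
    ∃ L, Tendsto g atTop (nhds L) := by
  refine ⟨_, tendsto_atTop_ciSup hm ⟨C, ?_⟩⟩
  rintro _ ⟨N, rfl⟩; exact hb N

private lemma aws_inner_bound (p a : ℕ) (ha1 : 1 ≤ a) (ha2 : a ≤ 2*p+2) (k₂ : ℕ) (hk₂ : 1 ≤ k₂) :
    ∑ k₁ ∈ Finset.Ico 1 k₂, 1/((k₁:ℝ)^a * (k₂:ℝ)^(2*p+4-a)) ≤ 2/(k₂:ℝ)^2 := by
  set b := 2*p+4-a with hbdef
  have hb : 2 ≤ b := by omega
  have hk2' : (1:ℝ) ≤ (k₂:ℝ) := by exact_mod_cast hk₂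
  have hk2p : (0:ℝ) < (k₂:ℝ) := by linarith
  have hpull : ∑ k₁ ∈ Finset.Ico 1 k₂, 1/((k₁:ℝ)^a * (k₂:ℝ)^b)
      = (1/(k₂:ℝ)^b) * ∑ k₁ ∈ Finset.Ico 1 k₂, 1/(k₁:ℝ)^a := by
    rw [Finset.mul_sum]
    apply Finset.sum_congr rfl; intro k₁ _
    rw [one_div_mul_one_div, mul_comm]
  rw [hpull]
  rcases Nat.lt_or_ge a 2 with ha | ha
  · have hb3 : 3 ≤ b := by omega
    have hsum : ∑ k₁ ∈ Finset.Ico 1 k₂, 1/(k₁:ℝ)^a ≤ (k₂:ℝ) := by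
      have h1 : ∀ k₁ ∈ Finset.Ico 1 k₂, 1/(k₁:ℝ)^a ≤ 1 := by
        intro k₁ hk₁
        simp only [Finset.mem_Ico] at hk₁
        have : (1:ℝ) ≤ (k₁:ℝ) := by exact_mod_cast hk₁.1
        rw [div_le_one (by positivity)]
        exact one_le_pow₀ this
      calc ∑ k₁ ∈ Finset.Ico 1 k₂, 1/(k₁:ℝ)^a ≤ ∑ _k₁ ∈ Finset.Ico 1 k₂, (1:ℝ) :=
            Finset.sum_le_sum h1
        _ = ((k₂ - 1 : ℕ) : ℝ) := by simp [Nat.card_Ico]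
        _ ≤ (k₂:ℝ) := by
            have : k₂ - 1 ≤ k₂ := by omega
            exact_mod_cast this
    have h2 : (1/(k₂:ℝ)^b) * ∑ k₁ ∈ Finset.Ico 1 k₂, 1/(k₁:ℝ)^a
        ≤ (1/(k₂:ℝ)^b) * (k₂:ℝ) :=
      mul_le_mul_of_nonneg_left hsum (by positivity)
    refine le_trans h2 ?_
    rw [div_mul_eq_mul_div, one_mul, div_le_div_iff₀ (by positivity) (by positivity)]
    have h3 : (k₂:ℝ)^3 ≤ (k₂:ℝ)^b := pow_le_pow_right₀ hk2' hb3
    have h4 : (k₂:ℝ) * (k₂:ℝ)^2 = (k₂:ℝ)^3 := by ring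
    have h5 : (0:ℝ) ≤ (k₂:ℝ)^b := by positivity
    linarith
  · have hsum : ∑ k₁ ∈ Finset.Ico 1 k₂, 1/(k₁:ℝ)^a ≤ 2 := by
      have : Finset.Ico 1 k₂ = Finset.Ico 1 ((k₂-1)+1) := by congr 1; omega
      rw [this]
      exact aws_pow_bound a ha (k₂-1)
    have h2 : (1/(k₂:ℝ)^b) * ∑ k₁ ∈ Finset.Ico 1 k₂, 1/(k₁:ℝ)^a
        ≤ (1/(k₂:ℝ)^b) * 2 := mul_le_mul_of_nonneg_left hsum (by positivity)
    refine le_trans h2 ?_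
    rw [div_mul_eq_mul_div, one_mul, div_le_div_iff₀ (by positivity) (by positivity)]
    have h3 : (k₂:ℝ)^2 ≤ (k₂:ℝ)^b := pow_le_pow_right₀ hk2' hb
    linarith

end AWSHelpers

theorem alternating_weighted_sum (p : ℕ) :
    ∑ α₁ ∈ Finset.Ico 1 (2 * p + 3), (-1 : ℝ) ^ α₁ * zeta2 α₁ (2 * p + 3 - α₁ + 1) =
      1 / 2 * zetaV (2 * p + 4) := by
  classical
  -- rewrite exponent
  have hexp : ∑ α₁ ∈ Finset.Ico 1 (2 * p + 3), (-1 : ℝ) ^ α₁ * zeta2 α₁ (2 * p + 3 - α₁ + 1)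
      = ∑ α₁ ∈ Finset.Ico 1 (2 * p + 3), (-1 : ℝ) ^ α₁ * zeta2 α₁ (2 * p + 4 - α₁) := by
    apply Finset.sum_congr rfl; intro a ha
    simp only [Finset.mem_Ico] at ha
    rw [show 2*p+3-a+1 = 2*p+4-a from by omega]
  rw [hexp]
  set S : ℕ → ℕ → ℝ := fun a N => ∑ k₂ ∈ Finset.Ico 1 (N+1), ∑ k₁ ∈ Finset.Ico 1 k₂,
    1/((k₁:ℝ)^a * (k₂:ℝ)^(2*p+4-a)) with hSdef
  set P : ℕ → ℝ := fun N => ∑ k ∈ Finset.Ico 1 (N+1), 1/(k:ℝ)^(2*p+4) with hPdef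
  set E : ℕ → ℝ := fun N => ∑ k ∈ Finset.Ico 1 (N+1),
    (1/(k:ℝ)^(2*p+3)) * ∑ m ∈ Finset.Ico (N+1) (N+k+1), 1/(m:ℝ) with hEdef
  -- convergence of the double partial sums
  have hSconv : ∀ a ∈ Finset.Ico 1 (2*p+3),
      Filter.Tendsto (S a) Filter.atTop (nhds (zeta2 a (2*p+4-a))) := by
    intro a ha
    simp only [Finset.mem_Ico] at ha
    have hmono : Monotone (S a) := by
      intro m n hmn
      apply Finset.sum_le_sum_of_subset_of_nonneg
        (Finset.Ico_subset_Ico le_rfl (by omega))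
      intro k₂ _ _
      apply Finset.sum_nonneg
      intro k₁ _
      positivity
    have hbdd : ∀ N, S a N ≤ 4 := by
      intro N
      have h1 : S a N ≤ ∑ k₂ ∈ Finset.Ico 1 (N+1), 2/(k₂:ℝ)^2 := by
        apply Finset.sum_le_sum
        intro k₂ hk₂
        simp only [Finset.mem_Ico] at hk₂
        exact aws_inner_bound p a ha.1 (by omega) k₂ hk₂.1
      have h2 : ∑ k₂ ∈ Finset.Ico 1 (N+1), 2/(k₂:ℝ)^2
          = 2 * ∑ k₂ ∈ Finset.Ico 1 (N+1), 1/(k₂:ℝ)^2 := by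
        rw [Finset.mul_sum]
        apply Finset.sum_congr rfl; intro k₂ _
        ring
      have h3 := aws_sq_bound N
      rw [h2] at h1
      linarith
    obtain ⟨L, hL⟩ := aws_mono_conv (S a) hmono 4 hbdd
    have : zeta2 a (2*p+4-a) = L := hL.limUnder_eq
    rw [this]
    exact hL
  -- convergence of the single partial sums
  have hPmono : Monotone P := by
    intro m n hmn
    apply Finset.sum_le_sum_of_subset_of_nonneg
      (Finset.Ico_subset_Ico le_rfl (by omega))
    intro k _ _
    positivity
  obtain ⟨ℓ, hℓ⟩ := aws_mono_conv P hPmono 2 (fun N => aws_pow_bound (2*p+4) (by omega) N)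
  have hzeta : zetaV (2*p+4) = ℓ := hℓ.limUnder_eq
  -- E → 0
  have hEbound : ∀ N, E N ≤ 2/((N:ℝ)+1) := by
    intro N
    have h1 : ∀ k ∈ Finset.Ico 1 (N+1),
        (1/(k:ℝ)^(2*p+3)) * ∑ m ∈ Finset.Ico (N+1) (N+k+1), 1/(m:ℝ)
          ≤ (1/(k:ℝ)^(2*p+2)) * (1/((N:ℝ)+1)) := by
      intro k hk
      simp only [Finset.mem_Ico] at hk
      have hk' : (1:ℝ) ≤ (k:ℝ) := by exact_mod_cast hk.1
      have hin : ∑ m ∈ Finset.Ico (N+1) (N+k+1), 1/(m:ℝ) ≤ (k:ℝ) * (1/((N:ℝ)+1)) := by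
        have h2 : ∀ m ∈ Finset.Ico (N+1) (N+k+1), 1/(m:ℝ) ≤ 1/((N:ℝ)+1) := by
          intro m hm
          simp only [Finset.mem_Ico] at hm
          apply div_le_div_of_nonneg_left (by norm_num) (by positivity)
          exact_mod_cast hm.1
        calc ∑ m ∈ Finset.Ico (N+1) (N+k+1), 1/(m:ℝ)
            ≤ ∑ _m ∈ Finset.Ico (N+1) (N+k+1), 1/((N:ℝ)+1) := Finset.sum_le_sum h2
          _ = (k:ℝ) * (1/((N:ℝ)+1)) := by
              rw [Finset.sum_const, Nat.card_Ico, nsmul_eq_mul]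
              congr 1
              have : N + k + 1 - (N + 1) = k := by omega
              rw [this]
      calc (1/(k:ℝ)^(2*p+3)) * ∑ m ∈ Finset.Ico (N+1) (N+k+1), 1/(m:ℝ)
          ≤ (1/(k:ℝ)^(2*p+3)) * ((k:ℝ) * (1/((N:ℝ)+1))) :=
            mul_le_mul_of_nonneg_left hin (by positivity)
        _ = (1/(k:ℝ)^(2*p+2)) * (1/((N:ℝ)+1)) := by
            rw [pow_succ]
            have hkne : (k:ℝ) ≠ 0 := by linarith
            field_simp
      
    calc E N ≤ ∑ k ∈ Finset.Ico 1 (N+1), (1/(k:ℝ)^(2*p+2)) * (1/((N:ℝ)+1)) :=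
          Finset.sum_le_sum h1
      _ = (∑ k ∈ Finset.Ico 1 (N+1), 1/(k:ℝ)^(2*p+2)) * (1/((N:ℝ)+1)) := by
          rw [Finset.sum_mul]
      _ ≤ 2 * (1/((N:ℝ)+1)) := by
          apply mul_le_mul_of_nonneg_right (aws_pow_bound (2*p+2) (by omega) N)
            (by positivity)
      _ = 2/((N:ℝ)+1) := by ring
  have hEnonneg : ∀ N, 0 ≤ E N := by
    intro N
    apply Finset.sum_nonneg
    intro k _
    have : (0:ℝ) ≤ ∑ m ∈ Finset.Ico (N+1) (N+k+1), 1/(m:ℝ) := by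
      apply Finset.sum_nonneg; intro m _; positivity
    positivity
  have hlim2 : Filter.Tendsto (fun N : ℕ => 2/((N:ℝ)+1)) Filter.atTop (nhds 0) := by
    apply Filter.Tendsto.div_atTop (tendsto_const_nhds)
    exact Filter.tendsto_atTop_add_const_right _ 1 tendsto_natCast_atTop_atTop
  have hE0 : Filter.Tendsto E Filter.atTop (nhds 0) :=
    tendsto_of_tendsto_of_tendsto_of_le_of_le tendsto_const_nhds hlim2 hEnonneg hEbound
  -- combine
  have hsum : Filter.Tendsto (fun N => ∑ a ∈ Finset.Ico 1 (2*p+3), (-1:ℝ)^a * S a N)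
      Filter.atTop (nhds (∑ a ∈ Finset.Ico 1 (2*p+3), (-1:ℝ)^a * zeta2 a (2*p+4-a))) := by
    apply tendsto_finset_sum
    intro a ha
    exact (hSconv a ha).const_mul _
  have heq : (fun N => ∑ a ∈ Finset.Ico 1 (2*p+3), (-1:ℝ)^a * S a N)
      = fun N => 1/2 * P N - E N := by
    funext N
    exact aws_key p N
  rw [heq] at hsum
  have htot : Filter.Tendsto (fun N => 1/2 * P N - E N) Filter.atTop
      (nhds (1/2 * ℓ - 0)) := (hℓ.const_mul _).sub hE0
  have := tendsto_nhds_unique hsum htot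
  rw [this, hzeta, sub_zero]
end
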